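/- arXiv:2407.15365 — 8 statements merged into one kernel-verified Lean document; each statement's English description precedes it below -/
import Mathlib

section
/- Let an s-stage explicit Runge–Kutta method with coefficients (A, b, c), c_i = ∑_j a_{ij}, satisfy ∑_i b_i = 1, and suppose that for every dimension n, every constant skew-symmetric J ∈ ℝ^{n×n}, every smooth H : ℝⁿ → ℝ, and every initial value y₀, the one-step approximation satisfies H(y₁(h)) = H(y₀) + O(h³) as h → 0. Then ∑_i b_i c_i = 1/2; in particular, every consistent Runge–Kutta method of pseudo-energy-preserving order at least 2 has classical order at least 2. -/
open Filter Asymptotics Topology Matrix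

/-- The gradient of `H : ℝⁿ → ℝ` in coordinates: `(∇H(y))_i = ∂H/∂y_i (y)`. -/
noncomputable def grad {n : ℕ} (H : (Fin n → ℝ) → ℝ) (y : Fin n → ℝ) : Fin n → ℝ :=
  fun i => fderiv ℝ H y (Pi.single i 1)

/-- The stages `k_i = f(y₀ + h ∑_{j<i} a_{ij} k_j)` of an explicit Runge--Kutta method. -/
noncomputable def rkStages {s n : ℕ} (A : Matrix (Fin s) (Fin s) ℝ)
    (f : (Fin n → ℝ) → (Fin n → ℝ)) (h : ℝ) (y₀ : Fin n → ℝ) :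
    Fin s → Fin n → ℝ
  | i => f (fun m => y₀ m + h * ∑ j : Fin s,
      if _ : (j : ℕ) < (i : ℕ) then A i j * rkStages A f h y₀ j m else 0)
  termination_by i => (i : ℕ)

/-- One step `y₁ = y₀ + h ∑_i b_i k_i` of an explicit Runge--Kutta method with
coefficients `(A, b)`, applied with step size `h` to `ẏ = f(y)` from `y₀`. -/
noncomputable def rkStep {s n : ℕ} (A : Matrix (Fin s) (Fin s) ℝ) (b : Fin s → ℝ)
    (f : (Fin n → ℝ) → (Fin n → ℝ)) (h : ℝ) (y₀ : Fin n → ℝ) : Fin n → ℝ :=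
  fun m => y₀ m + h * ∑ i, b i * rkStages A f h y₀ i m

/-- A consistent explicit Runge--Kutta method of pseudo-energy-preserving order at
least 2 (energy error `O(h³)` for every Hamiltonian system) satisfies `∑ bᵢcᵢ = 1/2`,
i.e. it has classical order at least 2. -/
theorem pep_order_two_implies_classical_order_two {s : ℕ}
    (A : Matrix (Fin s) (Fin s) ℝ) (b : Fin s → ℝ)
    (hA : ∀ i j : Fin s, (i : ℕ) ≤ (j : ℕ) → A i j = 0)
    (hb : ∑ i, b i = 1)
    (hPEP : ∀ (n : ℕ) (J : Matrix (Fin n) (Fin n) ℝ), Jᵀ = -J →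
      ∀ (H : (Fin n → ℝ) → ℝ), ContDiff ℝ (⊤ : ℕ∞) H →
        ∀ y₀ : Fin n → ℝ,
          (fun h => H (rkStep A b (fun y => J.mulVec (grad H y)) h y₀) - H y₀)
            =O[𝓝 (0 : ℝ)] (fun h => h ^ 3)) :
    ∑ i, b i * (∑ j, A i j) = 1 / 2 := by
  classical
  -- the Hamiltonian system: harmonic oscillator
  set J : Matrix (Fin 2) (Fin 2) ℝ := !![0,1;-1,0] with hJdef
  have hJ : Jᵀ = -J := by
    ext i j; fin_cases i <;> fin_cases j <;> simp [hJdef]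
  set H : (Fin 2 → ℝ) → ℝ := (fun y => (y 0 * y 0 + y 1 * y 1) / 2) with hHdef
  have hH : ContDiff ℝ (⊤ : ℕ∞) H := by
    have h0 : ContDiff ℝ (⊤ : ℕ∞) (fun y : Fin 2 → ℝ => y 0) :=
      (ContinuousLinearMap.proj 0 : (Fin 2 → ℝ) →L[ℝ] ℝ).contDiff
    have h1 : ContDiff ℝ (⊤ : ℕ∞) (fun y : Fin 2 → ℝ => y 1) :=
      (ContinuousLinearMap.proj 1 : (Fin 2 → ℝ) →L[ℝ] ℝ).contDiff
    exact ((h0.mul h0).add (h1.mul h1)).div_const 2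
  have hgrad : ∀ y : Fin 2 → ℝ, grad H y = y := by
    intro y
    have h0 : HasFDerivAt (fun y : Fin 2 → ℝ => y 0)
        (ContinuousLinearMap.proj 0 : (Fin 2 → ℝ) →L[ℝ] ℝ) y :=
      (ContinuousLinearMap.proj 0 : (Fin 2 → ℝ) →L[ℝ] ℝ).hasFDerivAt
    have h1 : HasFDerivAt (fun y : Fin 2 → ℝ => y 1)
        (ContinuousLinearMap.proj 1 : (Fin 2 → ℝ) →L[ℝ] ℝ) y :=
      (ContinuousLinearMap.proj 1 : (Fin 2 → ℝ) →L[ℝ] ℝ).hasFDerivAt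
    have hH' := ((h0.mul h0).add (h1.mul h1)).const_mul ((1:ℝ)/2)
    have hham : H = fun y : Fin 2 → ℝ => (1/2 : ℝ) * (y 0 * y 0 + y 1 * y 1) := by
      funext y; simp [hHdef]; ring
    have hHd : HasFDerivAt H
        (((1:ℝ)/2) • (y 0 • (ContinuousLinearMap.proj 0 : (Fin 2 → ℝ) →L[ℝ] ℝ)
          + y 0 • ContinuousLinearMap.proj 0
          + (y 1 • (ContinuousLinearMap.proj 1 : (Fin 2 → ℝ) →L[ℝ] ℝ)
          + y 1 • ContinuousLinearMap.proj 1))) y := by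
      rw [hham]; exact hH'
    have hfd := hHd.fderiv
    funext i
    show fderiv ℝ H y (Pi.single i 1) = y i
    rw [hfd]
    fin_cases i <;>
      simp [ContinuousLinearMap.add_apply, ContinuousLinearMap.smul_apply,
        ContinuousLinearMap.proj_apply, Pi.single] <;> ring
  set y₀ : Fin 2 → ℝ := ![1,0] with hy₀def
  have key := hPEP 2 J hJ H hH y₀
  have hf : (fun y : Fin 2 → ℝ => J.mulVec (grad H y)) = fun y => J.mulVec y := by
    funext y; rw [hgrad]
  rw [hf] at key
  set f : (Fin 2 → ℝ) → (Fin 2 → ℝ) := fun y => J.mulVec y with hfdef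
  -- the vector field in components
  have hmul : ∀ v : Fin 2 → ℝ, f v = ![v 1, -(v 0)] := by
    intro v; funext m; fin_cases m <;>
      simp [hfdef, hJdef, Matrix.mulVec, dotProduct, Fin.sum_univ_two]
  -- stage recursion
  have hrec : ∀ (h : ℝ) (i : Fin s), rkStages A f h y₀ i
      = f (fun m => y₀ m + h * ∑ j : Fin s, A i j * rkStages A f h y₀ j m) := by
    intro h i
    have hd : ∀ m, (∑ j : Fin s, if _ : (j : ℕ) < (i : ℕ)
          then A i j * rkStages A f h y₀ j m else 0)
        = ∑ j : Fin s, A i j * rkStages A f h y₀ j m := by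
      intro m
      apply Finset.sum_congr rfl
      intro j _
      split
      · rfl
      · rw [hA i j (le_of_not_gt (by omega))]; ring
    rw [rkStages]
    simp only [hd]
  -- components of the stages
  set K0 : Fin s → ℝ → ℝ := fun i h => rkStages A f h y₀ i 0 with hK0def
  set K1 : Fin s → ℝ → ℝ := fun i h => rkStages A f h y₀ i 1 with hK1def
  have hK0 : ∀ (h : ℝ) (i : Fin s), K0 i h = h * ∑ j, A i j * K1 j h := by
    intro h i
    show rkStages A f h y₀ i 0 = _
    rw [hrec h i, hmul]
    simp [hy₀def]
    exact Or.inl rfl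
  have hK1 : ∀ (h : ℝ) (i : Fin s), K1 i h = -(1 + h * ∑ j, A i j * K0 j h) := by
    intro h i
    show rkStages A f h y₀ i 1 = _
    rw [hrec h i, hmul]
    simp [hy₀def]
    exact Or.inl rfl
  -- h = O(1) near 0
  have hhO1 : (fun h : ℝ => h) =O[𝓝 (0:ℝ)] (fun _ => (1:ℝ)) :=
    (continuous_id.tendsto (0:ℝ)).isBigO_one ℝ
  -- stages are bounded near 0
  have hO1 : ∀ N : ℕ, ∀ i : Fin s, (i:ℕ) < N →
      ((fun h => K0 i h) =O[𝓝 (0:ℝ)] (fun _ => (1:ℝ))) ∧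
      ((fun h => K1 i h) =O[𝓝 (0:ℝ)] (fun _ => (1:ℝ))) := by
    intro N
    induction N with
    | zero => intro i hi; omega
    | succ N ih =>
      intro i hi
      have hsum : ∀ (g : Fin s → ℝ → ℝ),
          (∀ j : Fin s, (j:ℕ) < N → (fun h => g j h) =O[𝓝 (0:ℝ)] (fun _ => (1:ℝ))) →
          (fun h => ∑ j, A i j * g j h) =O[𝓝 (0:ℝ)] (fun _ => (1:ℝ)) := by
        intro g hg
        apply Asymptotics.IsBigO.fun_sum
        intro j _
        by_cases hji : (j:ℕ) < (i:ℕ)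
        · have := (isBigO_const_const (A i j) (one_ne_zero (α := ℝ)) (𝓝 (0:ℝ))).mul
            (hg j (by omega))
          simpa using this
        · exact (isBigO_zero _ _).congr
            (fun x => by rw [hA i j (le_of_not_gt hji)]; ring) (fun x => rfl)
      have hg0 : ∀ j : Fin s, (j:ℕ) < N → (fun h => K0 j h) =O[𝓝 (0:ℝ)] (fun _ => (1:ℝ)) :=
        fun j hj => (ih j hj).1
      have hg1 : ∀ j : Fin s, (j:ℕ) < N → (fun h => K1 j h) =O[𝓝 (0:ℝ)] (fun _ => (1:ℝ)) :=
        fun j hj => (ih j hj).2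
      constructor
      · have := hhO1.mul (hsum K1 hg1)
        refine this.congr (fun x => (hK0 x i).symm) (fun x => by norm_num)
      · have hm : (fun x => x * ∑ j, A i j * K0 j x) =O[𝓝 (0:ℝ)] (fun _ => (1:ℝ)) := by
          simpa using hhO1.mul (hsum K0 hg0)
        have := ((isBigO_const_const (1:ℝ) (one_ne_zero (α := ℝ)) (𝓝 (0:ℝ))).add hm).neg_left
        exact this.congr (fun x => (hK1 x i).symm) (fun x => rfl)
  -- bounded sums for every i
  have hSum1 : ∀ i : Fin s, (fun h => ∑ j, A i j * K1 j h) =O[𝓝 (0:ℝ)] (fun _ => (1:ℝ)) := by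
    intro i
    apply Asymptotics.IsBigO.fun_sum
    intro j _
    have := (isBigO_const_const (A i j) (one_ne_zero (α := ℝ)) (𝓝 (0:ℝ))).mul
      ((hO1 s j j.isLt).2)
    simpa using this
  have hSum0 : ∀ i : Fin s, (fun h => ∑ j, A i j * K0 j h) =O[𝓝 (0:ℝ)] (fun _ => (1:ℝ)) := by
    intro i
    apply Asymptotics.IsBigO.fun_sum
    intro j _
    have := (isBigO_const_const (A i j) (one_ne_zero (α := ℝ)) (𝓝 (0:ℝ))).mul
      ((hO1 s j j.isLt).1)
    simpa using this
  -- first-order estimates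
  have hL1a : ∀ i : Fin s, (fun h => K0 i h) =O[𝓝 (0:ℝ)] (fun h => h) := by
    intro i
    have := (isBigO_refl (fun h : ℝ => h) (𝓝 (0:ℝ))).mul (hSum1 i)
    exact this.congr (fun x => (hK0 x i).symm) (fun x => by norm_num)
  have hL1b : ∀ i : Fin s, (fun h => K1 i h + 1) =O[𝓝 (0:ℝ)] (fun h => h) := by
    intro i
    have := ((isBigO_refl (fun h : ℝ => h) (𝓝 (0:ℝ))).mul (hSum0 i)).neg_left
    exact this.congr (fun x => by rw [hK1 x i]; ring) (fun x => by norm_num)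
  -- second-order estimate for K0
  have hL2 : ∀ i : Fin s, (fun h => K0 i h + h * (∑ j, A i j)) =O[𝓝 (0:ℝ)]
      (fun h => h ^ 2) := by
    intro i
    have hT : (fun h => ∑ j, A i j * (K1 j h + 1)) =O[𝓝 (0:ℝ)] (fun h => h) := by
      apply Asymptotics.IsBigO.fun_sum
      intro j _
      have := (isBigO_const_const (A i j) (one_ne_zero (α := ℝ)) (𝓝 (0:ℝ))).mul (hL1b j)
      simpa using this
    have := (isBigO_refl (fun h : ℝ => h) (𝓝 (0:ℝ))).mul hT
    refine this.congr (fun x => ?_) (fun x => by ring)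
    rw [hK0 x i]
    simp only [Finset.mul_sum, mul_add, mul_one, Finset.sum_add_distrib]
  -- weighted sums
  set S0 : ℝ → ℝ := fun h => ∑ i, b i * K0 i h with hS0def
  set S1 : ℝ → ℝ := fun h => ∑ i, b i * K1 i h with hS1def
  set B : ℝ := ∑ i, b i * (∑ j, A i j) with hBdef
  have hS0₂ : (fun h => S0 h + h * B) =O[𝓝 (0:ℝ)] (fun h => h ^ 2) := by
    have : (fun h => ∑ i, b i * (K0 i h + h * (∑ j, A i j))) =O[𝓝 (0:ℝ)]
        (fun h => h ^ 2) := by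
      apply Asymptotics.IsBigO.fun_sum
      intro i _
      have := (isBigO_const_const (b i) (one_ne_zero (α := ℝ)) (𝓝 (0:ℝ))).mul (hL2 i)
      simpa using this
    refine this.congr (fun x => ?_) (fun x => rfl)
    simp only [hS0def, hBdef, mul_add, Finset.mul_sum, Finset.sum_add_distrib]
    congr 1
    exact Finset.sum_congr rfl
      (fun i _ => Finset.sum_congr rfl (fun j _ => by ring))
  have hS1₁ : (fun h => S1 h + 1) =O[𝓝 (0:ℝ)] (fun h => h) := by
    have : (fun h => ∑ i, b i * (K1 i h + 1)) =O[𝓝 (0:ℝ)] (fun h => h) := by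
      apply Asymptotics.IsBigO.fun_sum
      intro i _
      have := (isBigO_const_const (b i) (one_ne_zero (α := ℝ)) (𝓝 (0:ℝ))).mul (hL1b i)
      simpa using this
    refine this.congr (fun x => ?_) (fun x => rfl)
    simp only [hS1def, mul_add, mul_one, Finset.sum_add_distrib]
    rw [hb]
  have hS0₁ : (fun h => S0 h) =O[𝓝 (0:ℝ)] (fun h => h) := by
    apply Asymptotics.IsBigO.fun_sum
    intro i _
    have := (isBigO_const_const (b i) (one_ne_zero (α := ℝ)) (𝓝 (0:ℝ))).mul (hL1a i)
    simpa using this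
  have hS1₀ : (fun h => S1 h) =O[𝓝 (0:ℝ)] (fun _ => (1:ℝ)) := by
    apply Asymptotics.IsBigO.fun_sum
    intro i _
    have := (isBigO_const_const (b i) (one_ne_zero (α := ℝ)) (𝓝 (0:ℝ))).mul
      ((hO1 s i i.isLt).2)
    simpa using this
  have hS1m : (fun h => S1 h - 1) =O[𝓝 (0:ℝ)] (fun _ => (1:ℝ)) :=
    hS1₀.sub (isBigO_const_const (1:ℝ) (one_ne_zero (α := ℝ)) (𝓝 (0:ℝ)))
  -- energy difference formula
  have hval : ∀ h : ℝ, H (rkStep A b f h y₀) - H y₀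
      = h * S0 h + h ^ 2 * ((S0 h) ^ 2 + (S1 h) ^ 2) / 2 := by
    intro h
    show ((rkStep A b f h y₀ 0) * (rkStep A b f h y₀ 0)
        + (rkStep A b f h y₀ 1) * (rkStep A b f h y₀ 1)) / 2
        - ((y₀ 0) * (y₀ 0) + (y₀ 1) * (y₀ 1)) / 2 = _
    have e0 : rkStep A b f h y₀ 0 = 1 + h * S0 h := by
      show y₀ 0 + h * ∑ i, b i * rkStages A f h y₀ i 0 = _
      simp [hy₀def, hS0def, hK0def]
    have e1 : rkStep A b f h y₀ 1 = h * S1 h := by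
      show y₀ 1 + h * ∑ i, b i * rkStages A f h y₀ i 1 = _
      simp [hy₀def, hS1def, hK1def]
    rw [e0, e1]
    simp [hy₀def]
    ring
  -- assemble the remainder estimate
  set C : ℝ := 1/2 - B with hCdef
  have hT1 : (fun h : ℝ => h * (S0 h + h * B)) =O[𝓝 (0:ℝ)] (fun h => h ^ 3) := by
    have := (isBigO_refl (fun h : ℝ => h) (𝓝 (0:ℝ))).mul hS0₂
    exact this.congr (fun x => rfl) (fun x => by ring)
  have hT2 : (fun h : ℝ => h ^ 2 * (S0 h) ^ 2 / 2) =O[𝓝 (0:ℝ)] (fun h => h ^ 3) := by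
    have := ((isBigO_refl (fun h : ℝ => h) (𝓝 (0:ℝ))).mul
      (isBigO_refl (fun h : ℝ => h) (𝓝 (0:ℝ)))).mul
      (hS0₁.mul (hS0₁.trans hhO1))
    have h2 := this.const_mul_left ((1:ℝ)/2)
    exact h2.congr (fun x => by ring) (fun x => by ring)
  have hT3 : (fun h : ℝ => h ^ 2 * ((S1 h - 1) * (S1 h + 1)) / 2) =O[𝓝 (0:ℝ)]
      (fun h => h ^ 3) := by
    have := ((isBigO_refl (fun h : ℝ => h) (𝓝 (0:ℝ))).mul
      (isBigO_refl (fun h : ℝ => h) (𝓝 (0:ℝ)))).mul (hS1m.mul hS1₁)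
    have h2 := this.const_mul_left ((1:ℝ)/2)
    exact h2.congr (fun x => by ring) (fun x => by ring)
  have hrem : (fun h : ℝ => (H (rkStep A b f h y₀) - H y₀) - C * h ^ 2)
      =O[𝓝 (0:ℝ)] (fun h => h ^ 3) := by
    have := (hT1.add hT2).add hT3
    refine this.congr (fun x => ?_) (fun x => rfl)
    rw [hval x, hCdef]
    ring
  have hC2 : (fun h : ℝ => C * h ^ 2) =O[𝓝 (0:ℝ)] (fun h => h ^ 3) := by
    have := key.sub hrem
    exact this.congr (fun x => by ring) (fun x => rfl)
  -- conclude C = 0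
  have hC0 : C = 0 := by
    by_contra hC
    have h2 : (fun h : ℝ => h ^ 2) =O[𝓝 (0:ℝ)] (fun h => h ^ 3) := by
      have := hC2.const_mul_left C⁻¹
      refine this.congr (fun x => by field_simp) (fun x => rfl)
    have h3 : (fun h : ℝ => h ^ 3) =o[𝓝 (0:ℝ)] (fun h : ℝ => h ^ 2) :=
      isLittleO_pow_pow (by norm_num)
    have hoo := h2.trans_isLittleO h3
    have hfreq : ∃ᶠ x : ℝ in 𝓝 0, x ^ 2 ≠ 0 := by
      have h1 : ∃ᶠ x : ℝ in 𝓝[≠] (0:ℝ), x ≠ 0 :=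
        Filter.Eventually.frequently (eventually_mem_nhdsWithin (s := {(0:ℝ)}ᶜ))
      exact (h1.filter_mono nhdsWithin_le_nhds).mono (fun x hx => pow_ne_zero 2 hx)
    exact isLittleO_irrefl hfreq hoo
  have : B = 1/2 := by rw [hCdef] at hC0; linarith
  rw [hBdef] at this
  exact this
end

section
/- Let an s-stage explicit Runge–Kutta method with coefficients (A, b, c), c_i = ∑_j a_{ij}, satisfy the second-order conditions ∑_i b_i = 1 and ∑_i b_i c_i = 1/2 together with the condition ∑_i b_i c_i² = 1/3. Then for every Hamiltonian system ẏ = J∇H(y) with J constant skew-symmetric and H smooth, and every initial value y₀, the one-step approximation satisfies H(y₁(h)) = H(y₀) + O(h⁴) as h → 0; i.e., the method has pseudo-energy-preserving order at least 3. -/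
open Filter Asymptotics Topology Matrix

section AuxAsymp
open Set

lemma aux_boot {ψ : ℝ → ℝ} {k : ℕ} (hψ : Differentiable ℝ ψ) (h0 : ψ 0 = 0)
    (hd : deriv ψ =O[𝓝 (0:ℝ)] fun h => h ^ k) :
    ψ =O[𝓝 (0:ℝ)] fun h => h ^ (k+1) := by
  obtain ⟨C, hC⟩ := hd.bound
  obtain ⟨δ, hδpos, hδ⟩ := Metric.eventually_nhds_iff.1 hC
  simp only [Real.dist_eq, sub_zero, Real.norm_eq_abs, abs_pow] at hδ
  have hC0 : 0 ≤ C := by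
    have h00 : |δ/2| < δ := by rw [abs_of_pos (by linarith)]; linarith
    have h1 := hδ h00
    have h2 : (0:ℝ) < |δ/2| ^ k := pow_pos (by rw [abs_of_pos (by linarith)]; linarith) k
    nlinarith [abs_nonneg (deriv ψ (δ/2))]
  rw [isBigO_iff]
  refine ⟨C, Metric.eventually_nhds_iff.2 ⟨δ, hδpos, fun {h} hh => ?_⟩⟩
  simp only [Real.dist_eq, sub_zero] at hh
  simp only [Real.norm_eq_abs, abs_pow]
  have key : ∀ t : ℝ, 0 ≤ t → t < δ → ∀ (g : ℝ → ℝ), Differentiable ℝ g → g 0 = 0 →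
      (∀ x, |x| < δ → |deriv g x| ≤ C * |x| ^ k) → |g t| ≤ C * |t| ^ k * t := by
    intro t ht htδ g hg hg0 hgb
    have := norm_image_sub_le_of_norm_deriv_le_segment'
      (f := g) (f' := deriv g) (a := 0) (b := t)
      (fun x _ => (hg x).hasDerivAt.hasDerivWithinAt)
      (C := C * |t| ^ k) (fun x hx => ?_) t (by constructor <;> simp [ht])
    · simpa [hg0] using this
    · have hx0 : 0 ≤ x := hx.1
      have hxt : x < t := hx.2
      have h1 : |deriv g x| ≤ C * |x| ^ k := hgb x (lt_of_le_of_lt (by rw [abs_of_nonneg hx0]; linarith) htδ)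
      refine h1.trans ?_
      have hxx : |x| ≤ |t| := by rw [abs_of_nonneg hx0, abs_of_nonneg ht]; linarith
      exact mul_le_mul_of_nonneg_left (pow_le_pow_left₀ (abs_nonneg x) hxx k) hC0
  rcases le_or_gt 0 h with hpos | hneg
  · have := key h hpos (lt_of_le_of_lt (le_abs_self h) hh) ψ hψ h0 (fun x hx => hδ hx)
    calc |ψ h| ≤ C * |h| ^ k * h := this
    _ ≤ C * |h| ^ (k+1) := by
        rw [pow_succ, ← mul_assoc]
        exact mul_le_mul_of_nonneg_left (le_abs_self h)
          (mul_nonneg hC0 (pow_nonneg (abs_nonneg h) k))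
  · have hg : Differentiable ℝ (fun t => ψ (-t)) := hψ.comp differentiable_neg
    have hgd : ∀ x, deriv (fun t => ψ (-t)) x = -deriv ψ (-x) := by
      intro x
      have : HasDerivAt (fun t => ψ (-t)) ((-1 : ℝ) • deriv ψ (-x)) x := by
        simpa [Function.comp_def] using ((hψ (-x)).hasDerivAt.comp x (hasDerivAt_neg x))
      simpa using this.deriv
    have := key (-h) (by linarith) (by rwa [abs_of_neg hneg] at hh) (fun t => ψ (-t)) hg
      (by simpa using h0) (fun x hx => by
        rw [hgd x, abs_neg]
        have := hδ (show |-x| < δ by simpa using hx)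
        simpa [abs_neg] using this)
    simp only [neg_neg] at this
    calc |ψ h| ≤ C * |-h| ^ k * (-h) := this
    _ = C * |h| ^ (k+1) := by
        rw [abs_neg, pow_succ, abs_of_neg hneg]; ring

lemma aux_O4 {φ : ℝ → ℝ} (hφ : ContDiff ℝ (⊤:ℕ∞) φ) (h0 : φ 0 = 0)
    (h1 : deriv φ 0 = 0) (h2 : deriv (deriv φ) 0 = 0)
    (h3 : deriv (deriv (deriv φ)) 0 = 0) :
    φ =O[𝓝 (0:ℝ)] fun h => h ^ 4 := by
  have hle : ((⊤:ℕ∞) : WithTop ℕ∞) ≠ 0 := by simp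
  have s1 : ContDiff ℝ (⊤:ℕ∞) (deriv φ) := (contDiff_infty_iff_deriv.1 hφ).2
  have s2 : ContDiff ℝ (⊤:ℕ∞) (deriv (deriv φ)) := (contDiff_infty_iff_deriv.1 s1).2
  have s3 : ContDiff ℝ (⊤:ℕ∞) (deriv (deriv (deriv φ))) := (contDiff_infty_iff_deriv.1 s2).2
  have b1 : deriv (deriv (deriv φ)) =O[𝓝 (0:ℝ)] fun h => h ^ 1 := by
    have := ((s3.differentiable hle) 0).hasDerivAt.isBigO_sub
    simp only [sub_zero, h3, pow_one] at this ⊢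
    simpa using this
  have b2 := aux_boot (s2.differentiable hle) h2 b1
  have b3 := aux_boot (s1.differentiable hle) h1 b2
  exact aux_boot (hφ.differentiable hle) h0 b3


end AuxAsymp

lemma aux_clm_dot {n : ℕ} (L : (Fin n → ℝ) →L[ℝ] ℝ) (w : Fin n → ℝ) :
    L w = (fun m => L (Pi.single m 1)) ⬝ᵥ w := by
  have hw : w = ∑ m, w m • (Pi.single m (1:ℝ) : Fin n → ℝ) := by
    funext j
    simp [Finset.sum_apply, Pi.single_apply, Finset.sum_ite_eq]
  conv_lhs => rw [hw]
  rw [map_sum]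
  simp [dotProduct, mul_comm]

lemma aux_mulVec_flip {n : ℕ} {J : Matrix (Fin n) (Fin n) ℝ} (hJ : Jᵀ = -J) (v : Fin n → ℝ) :
    J *ᵥ v = -(v ᵥ* J) := by
  conv_lhs => rw [← Matrix.transpose_transpose J]
  rw [Matrix.mulVec_transpose, hJ, Matrix.vecMul_neg]

lemma aux_skew' {n : ℕ} {J : Matrix (Fin n) (Fin n) ℝ} (hJ : Jᵀ = -J) (v w : Fin n → ℝ) :
    v ⬝ᵥ (J *ᵥ w) = -((J *ᵥ v) ⬝ᵥ w) := by
  rw [Matrix.dotProduct_mulVec, aux_mulVec_flip hJ, neg_dotProduct, neg_neg]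

lemma aux_skew {n : ℕ} {J : Matrix (Fin n) (Fin n) ℝ} (hJ : Jᵀ = -J) (v : Fin n → ℝ) :
    v ⬝ᵥ (J *ᵥ v) = 0 := by
  have h := aux_skew' hJ v v
  rw [dotProduct_comm] at h
  have h2 : J *ᵥ v ⬝ᵥ v = 0 := by linarith
  rw [dotProduct_comm]; exact h2

namespace PEP
section Stage

variable {s n : ℕ} (A : Matrix (Fin s) (Fin s) ℝ) (f : (Fin n → ℝ) → (Fin n → ℝ))
  (y₀ : Fin n → ℝ)

/-- Strictly-lower-triangular coefficient row. -/
def stA (i j : Fin s) : ℝ := if (j:ℕ) < (i:ℕ) then A i j else 0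

/-- The stages as curves in the step size. -/
noncomputable def stK (i : Fin s) : ℝ → (Fin n → ℝ) := fun h => rkStages A f h y₀ i

noncomputable def stK1 (i : Fin s) : ℝ → (Fin n → ℝ) := deriv (stK A f y₀ i)
noncomputable def stK2 (i : Fin s) : ℝ → (Fin n → ℝ) := deriv (stK1 A f y₀ i)
noncomputable def stK3 (i : Fin s) : ℝ → (Fin n → ℝ) := deriv (stK2 A f y₀ i)

/-- weighted combination of stages and its "derivative versions" -/
noncomputable def stC (w : Fin s → ℝ) : ℝ → (Fin n → ℝ) := fun h => ∑ j, w j • stK A f y₀ j h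
noncomputable def stC1 (w : Fin s → ℝ) : ℝ → (Fin n → ℝ) := fun h => ∑ j, w j • stK1 A f y₀ j h
noncomputable def stC2 (w : Fin s → ℝ) : ℝ → (Fin n → ℝ) := fun h => ∑ j, w j • stK2 A f y₀ j h
noncomputable def stC3 (w : Fin s → ℝ) : ℝ → (Fin n → ℝ) := fun h => ∑ j, w j • stK3 A f y₀ j h

/-- the curve `y₀ + h • (w-combination of stages)` and its derivatives -/
noncomputable def cv (w : Fin s → ℝ) : ℝ → (Fin n → ℝ) := fun h => y₀ + h • stC A f y₀ w h
noncomputable def dcv (w : Fin s → ℝ) : ℝ → (Fin n → ℝ) :=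
  fun h => stC A f y₀ w h + h • stC1 A f y₀ w h
noncomputable def ddcv (w : Fin s → ℝ) : ℝ → (Fin n → ℝ) :=
  fun h => (2:ℝ) • stC1 A f y₀ w h + h • stC2 A f y₀ w h
noncomputable def dddcv (w : Fin s → ℝ) : ℝ → (Fin n → ℝ) :=
  fun h => (3:ℝ) • stC2 A f y₀ w h + h • stC3 A f y₀ w h


lemma stK_eq (i : Fin s) : stK A f y₀ i = fun h => f (cv A f y₀ (stA A i) h) := by
  funext h
  show rkStages A f h y₀ i = _
  rw [rkStages]
  have e : (fun m => y₀ m + h * ∑ j : Fin s,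
      if _ : (j : ℕ) < (i : ℕ) then A i j * rkStages A f h y₀ j m else 0)
      = cv A f y₀ (stA A i) h := by
    funext m
    simp only [cv, stC, Pi.add_apply, Finset.sum_apply, Pi.smul_apply, smul_eq_mul, dite_eq_ite]
    congr 1
    congr 1
    refine Finset.sum_congr rfl fun j _ => ?_
    by_cases hj : (j:ℕ) < (i:ℕ) <;> simp [hj, stA, stK]
  rw [e]

lemma rkStep_eq (b : Fin s → ℝ) (h : ℝ) : rkStep A b f h y₀ = cv A f y₀ b h := by
  funext m
  simp only [rkStep, cv, stC, Pi.add_apply, Pi.smul_apply, Finset.sum_apply, smul_eq_mul, stK]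

lemma hle1 : ((⊤:ℕ∞) : WithTop ℕ∞) ≠ 0 := by simp

variable {f} (hf : ContDiff ℝ (⊤:ℕ∞) f)
include hf

lemma stK_smooth : ∀ i, ContDiff ℝ (⊤:ℕ∞) (stK A f y₀ i) := by
  have main : ∀ N, ∀ i : Fin s, (i:ℕ) < N → ContDiff ℝ (⊤:ℕ∞) (stK A f y₀ i) := by
    intro N
    induction N with
    | zero => exact fun i hi => absurd hi (Nat.not_lt_zero _)
    | succ N ih =>
      intro i hi
      rw [stK_eq]
      refine hf.comp ?_
      refine contDiff_const.add (contDiff_id.smul ?_)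
      refine ContDiff.sum fun j _ => ?_
      by_cases hj : (j:ℕ) < (i:ℕ)
      · exact (ih j (by omega)).const_smul _
      · have : stA A i j = 0 := by simp [stA, hj]
        simp only [this, zero_smul]
        exact contDiff_const
  exact fun i => main s i i.isLt

lemma stC_smooth (w : Fin s → ℝ) : ContDiff ℝ (⊤:ℕ∞) (stC A f y₀ w) :=
  ContDiff.sum fun j _ => ((stK_smooth A y₀ hf) j).const_smul _

lemma stK1_smooth (i : Fin s) : ContDiff ℝ (⊤:ℕ∞) (stK1 A f y₀ i) :=
  (contDiff_infty_iff_deriv.1 (stK_smooth A y₀ hf i)).2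

lemma stK2_smooth (i : Fin s) : ContDiff ℝ (⊤:ℕ∞) (stK2 A f y₀ i) :=
  (contDiff_infty_iff_deriv.1 (stK1_smooth A y₀ hf i)).2

lemma stK3_smooth (i : Fin s) : ContDiff ℝ (⊤:ℕ∞) (stK3 A f y₀ i) :=
  (contDiff_infty_iff_deriv.1 (stK2_smooth A y₀ hf i)).2

lemma stC1_smooth (w : Fin s → ℝ) : ContDiff ℝ (⊤:ℕ∞) (stC1 A f y₀ w) :=
  ContDiff.sum fun j _ => ((stK1_smooth A y₀ hf) j).const_smul _

lemma stC2_smooth (w : Fin s → ℝ) : ContDiff ℝ (⊤:ℕ∞) (stC2 A f y₀ w) :=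
  ContDiff.sum fun j _ => ((stK2_smooth A y₀ hf) j).const_smul _

lemma stC_hasDeriv (w : Fin s → ℝ) (h : ℝ) :
    HasDerivAt (stC A f y₀ w) (stC1 A f y₀ w h) h := by
  refine HasDerivAt.fun_sum fun j _ => ?_
  exact (((stK_smooth A y₀ hf j).differentiable hle1) h).hasDerivAt.const_smul (w j)

lemma stC1_hasDeriv (w : Fin s → ℝ) (h : ℝ) :
    HasDerivAt (stC1 A f y₀ w) (stC2 A f y₀ w h) h := by
  refine HasDerivAt.fun_sum fun j _ => ?_
  exact (((stK1_smooth A y₀ hf j).differentiable hle1) h).hasDerivAt.const_smul (w j)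

lemma stC2_hasDeriv (w : Fin s → ℝ) (h : ℝ) :
    HasDerivAt (stC2 A f y₀ w) (stC3 A f y₀ w h) h := by
  refine HasDerivAt.fun_sum fun j _ => ?_
  exact (((stK2_smooth A y₀ hf j).differentiable hle1) h).hasDerivAt.const_smul (w j)

lemma cv_hasDeriv (w : Fin s → ℝ) (h : ℝ) :
    HasDerivAt (cv A f y₀ w) (dcv A f y₀ w h) h := by
  have h1 := (hasDerivAt_id h).fun_smul (stC_hasDeriv A y₀ hf w h)
  have h2 := h1.const_add y₀
  have e1 : cv A f y₀ w = fun t : ℝ => y₀ + id t • stC A f y₀ w t := rfl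
  rw [e1]
  refine h2.congr_deriv ?_; symm
  show stC A f y₀ w h + h • stC1 A f y₀ w h = _
  simp only [id_eq, one_smul]
  abel

lemma dcv_hasDeriv (w : Fin s → ℝ) (h : ℝ) :
    HasDerivAt (dcv A f y₀ w) (ddcv A f y₀ w h) h := by
  have h1 := (hasDerivAt_id h).fun_smul (stC1_hasDeriv A y₀ hf w h)
  have h2 := (stC_hasDeriv A y₀ hf w h).fun_add h1
  have e1 : dcv A f y₀ w = fun t : ℝ => stC A f y₀ w t + id t • stC1 A f y₀ w t := rfl
  rw [e1]
  refine h2.congr_deriv ?_; symm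
  show (2:ℝ) • stC1 A f y₀ w h + h • stC2 A f y₀ w h = _
  simp only [id_eq, one_smul, two_smul]
  abel

lemma ddcv_hasDeriv (w : Fin s → ℝ) (h : ℝ) :
    HasDerivAt (ddcv A f y₀ w) (dddcv A f y₀ w h) h := by
  have h1 := (hasDerivAt_id h).fun_smul (stC2_hasDeriv A y₀ hf w h)
  have h2 := ((stC1_hasDeriv A y₀ hf w h).fun_const_smul (2:ℝ)).fun_add h1
  have e1 : ddcv A f y₀ w = fun t : ℝ => (2:ℝ) • stC1 A f y₀ w t + id t • stC2 A f y₀ w t := rfl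
  rw [e1]
  refine h2.congr_deriv ?_; symm
  show (3:ℝ) • stC2 A f y₀ w h + h • stC3 A f y₀ w h = _
  simp only [id_eq, one_smul]
  module

lemma cv_smooth (w : Fin s → ℝ) : ContDiff ℝ (⊤:ℕ∞) (cv A f y₀ w) :=
  contDiff_const.add (contDiff_id.smul (stC_smooth A y₀ hf w))

lemma stK_hasDeriv (i : Fin s) (h : ℝ) :
    HasDerivAt (stK A f y₀ i)
      (fderiv ℝ f (cv A f y₀ (stA A i) h) (dcv A f y₀ (stA A i) h)) h := by
  rw [stK_eq]
  exact ((hf.differentiable hle1) _).hasFDerivAt.comp_hasDerivAt h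
    (cv_hasDeriv A y₀ hf (stA A i) h)

lemma stK1_eq (i : Fin s) :
    stK1 A f y₀ i = fun h => fderiv ℝ f (cv A f y₀ (stA A i) h) (dcv A f y₀ (stA A i) h) := by
  funext h
  exact (stK_hasDeriv A y₀ hf i h).deriv

lemma stK1_hasDeriv (i : Fin s) (h : ℝ) :
    HasDerivAt (stK1 A f y₀ i)
      (fderiv ℝ (fderiv ℝ f) (cv A f y₀ (stA A i) h) (dcv A f y₀ (stA A i) h)
          (dcv A f y₀ (stA A i) h)
        + fderiv ℝ f (cv A f y₀ (stA A i) h) (ddcv A f y₀ (stA A i) h)) h := by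
  rw [stK1_eq A y₀ hf]
  have hD : ContDiff ℝ (⊤:ℕ∞) (fderiv ℝ f) := hf.fderiv_right (le_of_eq rfl)
  have hc : HasDerivAt (fun t => fderiv ℝ f (cv A f y₀ (stA A i) t))
      (fderiv ℝ (fderiv ℝ f) (cv A f y₀ (stA A i) h) (dcv A f y₀ (stA A i) h)) h :=
    ((hD.differentiable hle1) _).hasFDerivAt.comp_hasDerivAt h
      (cv_hasDeriv A y₀ hf (stA A i) h)
  exact hc.clm_apply (dcv_hasDeriv A y₀ hf (stA A i) h)

lemma stK2_eq (i : Fin s) :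
    stK2 A f y₀ i = fun h =>
      fderiv ℝ (fderiv ℝ f) (cv A f y₀ (stA A i) h) (dcv A f y₀ (stA A i) h)
          (dcv A f y₀ (stA A i) h)
        + fderiv ℝ f (cv A f y₀ (stA A i) h) (ddcv A f y₀ (stA A i) h) := by
  funext h
  exact (stK1_hasDeriv A y₀ hf i h).deriv

omit hf

lemma cv_zero (w : Fin s → ℝ) : cv A f y₀ w 0 = y₀ := by simp [cv]

lemma stK_zero (i : Fin s) : stK A f y₀ i 0 = f y₀ := by
  rw [stK_eq]; simp [cv_zero]

lemma stC_zero (w : Fin s → ℝ) : stC A f y₀ w 0 = (∑ j, w j) • f y₀ := by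
  simp only [stC, stK_zero, ← Finset.sum_smul]

lemma dcv_zero (w : Fin s → ℝ) : dcv A f y₀ w 0 = (∑ j, w j) • f y₀ := by
  simp [dcv, stC_zero]

include hf

lemma stK1_zero (i : Fin s) :
    stK1 A f y₀ i 0 = (∑ j, stA A i j) • fderiv ℝ f y₀ (f y₀) := by
  rw [stK1_eq A y₀ hf]
  simp only [cv_zero, dcv_zero, ContinuousLinearMap.map_smul]

lemma stC1_zero (w : Fin s → ℝ) :
    stC1 A f y₀ w 0 = (∑ j, w j * (∑ l, stA A j l)) • fderiv ℝ f y₀ (f y₀) := by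
  simp only [stC1, stK1_zero A y₀ hf, smul_smul, ← Finset.sum_smul]

omit hf in
lemma ddcv_zero (w : Fin s → ℝ) :
    ddcv A f y₀ w 0 = (2:ℝ) • stC1 A f y₀ w 0 := by simp [ddcv]

lemma stK2_zero (i : Fin s) :
    stK2 A f y₀ i 0 =
      fderiv ℝ (fderiv ℝ f) y₀ ((∑ j, stA A i j) • f y₀) ((∑ j, stA A i j) • f y₀)
        + (2 * ∑ j, stA A i j * (∑ l, stA A j l)) •
            fderiv ℝ f y₀ (fderiv ℝ f y₀ (f y₀)) := by
  rw [stK2_eq A y₀ hf]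
  simp only [cv_zero, dcv_zero, ddcv_zero, stC1_zero A y₀ hf]
  congr 1
  rw [smul_smul, ContinuousLinearMap.map_smul]

omit hf in
lemma stC2_zero' (w : Fin s → ℝ) :
    stC2 A f y₀ w 0 = ∑ j, w j • stK2 A f y₀ j 0 := rfl

omit hf in
lemma dddcv_zero (w : Fin s → ℝ) :
    dddcv A f y₀ w 0 = (3:ℝ) • stC2 A f y₀ w 0 := by simp [dddcv]



end Stage
section Grad

lemma hle1' : ((⊤:ℕ∞) : WithTop ℕ∞) ≠ 0 := by simp

variable {n : ℕ} {H : (Fin n → ℝ) → ℝ} (hH : ContDiff ℝ (⊤:ℕ∞) H)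
include hH

lemma D1_smooth : ContDiff ℝ (⊤:ℕ∞) (fderiv ℝ H) := hH.fderiv_right (le_of_eq rfl)

lemma D2_smooth : ContDiff ℝ (⊤:ℕ∞) (fderiv ℝ (fderiv ℝ H)) :=
  (D1_smooth hH).fderiv_right (le_of_eq rfl)

lemma grad_smooth : ContDiff ℝ (⊤:ℕ∞) (grad H) := by
  rw [contDiff_pi]
  exact fun i => (D1_smooth hH).clm_apply contDiff_const

lemma DG_smooth : ContDiff ℝ (⊤:ℕ∞) (fderiv ℝ (grad H)) :=
  (grad_smooth hH).fderiv_right (le_of_eq rfl)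

omit hH
lemma D1_dot (y w : Fin n → ℝ) : fderiv ℝ H y w = grad H y ⬝ᵥ w := aux_clm_dot _ w
include hH

lemma DG_apply (y u : Fin n → ℝ) (m : Fin n) :
    fderiv ℝ (grad H) y u m = fderiv ℝ (fderiv ℝ H) y u (Pi.single m 1) := by
  have hG' : HasFDerivAt (grad H) (fderiv ℝ (grad H) y) y :=
    (((grad_smooth hH).differentiable hle1') y).hasFDerivAt
  have h1 : HasFDerivAt (fun x => grad H x m)
      ((ContinuousLinearMap.proj (R := ℝ) (φ := fun _ : Fin n => ℝ) m).comp
        (fderiv ℝ (grad H) y)) y := by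
    have := (ContinuousLinearMap.proj (R := ℝ) (φ := fun _ : Fin n => ℝ) m).hasFDerivAt.comp
      y hG'
    exact this
  have h2 : HasFDerivAt (fun x => grad H x m)
      (((fderiv ℝ H y).comp (0 : (Fin n → ℝ) →L[ℝ] (Fin n → ℝ)))
        + (fderiv ℝ (fderiv ℝ H) y).flip (Pi.single m 1)) y := by
    have hD1 : HasFDerivAt (fderiv ℝ H) (fderiv ℝ (fderiv ℝ H) y) y :=
      (((D1_smooth hH).differentiable hle1') y).hasFDerivAt
    exact hD1.clm_apply (hasFDerivAt_const (Pi.single m 1) y)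
  have := h1.unique h2
  have happ := congrArg (fun L => L u) this
  simpa using happ

lemma D2_dot (y u w : Fin n → ℝ) :
    fderiv ℝ (fderiv ℝ H) y u w = fderiv ℝ (grad H) y u ⬝ᵥ w := by
  rw [aux_clm_dot (fderiv ℝ (fderiv ℝ H) y u) w]
  congr 1
  funext m
  exact (DG_apply hH y u m).symm

lemma D2_symm (y u v : Fin n → ℝ) :
    fderiv ℝ (fderiv ℝ H) y u v = fderiv ℝ (fderiv ℝ H) y v u := by
  refine second_derivative_symmetric (f := H) (f' := fderiv ℝ H)
    (fun x => ((hH.differentiable hle1') x).hasFDerivAt)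
    (((D1_smooth hH).differentiable hle1') y).hasFDerivAt u v

lemma DDG_apply (y u v : Fin n → ℝ) (m : Fin n) :
    fderiv ℝ (fderiv ℝ (grad H)) y u v m
      = fderiv ℝ (fderiv ℝ (fderiv ℝ H)) y u v (Pi.single m 1) := by
  have hDG' : HasFDerivAt (fderiv ℝ (grad H)) (fderiv ℝ (fderiv ℝ (grad H)) y) y :=
    ((DG_smooth hH).differentiable hle1' y).hasFDerivAt
  have h1 : HasFDerivAt (fun x => fderiv ℝ (grad H) x v m)
      (((ContinuousLinearMap.proj (R := ℝ) (φ := fun _ : Fin n => ℝ) m).comp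
          (ContinuousLinearMap.apply ℝ (Fin n → ℝ) v)).comp
        (fderiv ℝ (fderiv ℝ (grad H)) y)) y := by
    have := ((ContinuousLinearMap.proj (R := ℝ) (φ := fun _ : Fin n => ℝ) m).comp
          (ContinuousLinearMap.apply ℝ (Fin n → ℝ) v)).hasFDerivAt.comp y hDG'
    exact this
  have hfun : (fun x => fderiv ℝ (grad H) x v m)
      = fun x => fderiv ℝ (fderiv ℝ H) x v (Pi.single m 1) := by
    funext x
    exact DG_apply hH x v m
  have hD2' : HasFDerivAt (fderiv ℝ (fderiv ℝ H)) (fderiv ℝ (fderiv ℝ (fderiv ℝ H)) y) y :=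
    ((D2_smooth hH).differentiable hle1' y).hasFDerivAt
  have hstep1 : HasFDerivAt (fun x => fderiv ℝ (fderiv ℝ H) x v)
      ((fderiv ℝ (fderiv ℝ H) y).comp (0 : (Fin n → ℝ) →L[ℝ] (Fin n → ℝ))
        + (fderiv ℝ (fderiv ℝ (fderiv ℝ H)) y).flip v) y :=
    hD2'.clm_apply (hasFDerivAt_const v y)
  have hstep2 := hstep1.clm_apply (hasFDerivAt_const (Pi.single m (1:ℝ)) y)
  rw [← hfun] at hstep2
  have := h1.unique hstep2
  have happ := congrArg (fun L => L u) this
  simpa using happ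


end Grad
end PEP

/-- An explicit Runge--Kutta method satisfying the second-order conditions together
with `∑ bᵢcᵢ² = 1/3` has pseudo-energy-preserving order at least 3: the energy error
after one step is `O(h⁴)` for every Hamiltonian system. -/
theorem pep_order_three_sufficient {s : ℕ}
    (A : Matrix (Fin s) (Fin s) ℝ) (b : Fin s → ℝ) (c : Fin s → ℝ)
    (hA : ∀ i j : Fin s, (i : ℕ) ≤ (j : ℕ) → A i j = 0)
    (hc : ∀ i, c i = ∑ j, A i j)
    (hb : ∑ i, b i = 1)
    (hbc : ∑ i, b i * c i = 1 / 2)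
    (hbc2 : ∑ i, b i * c i ^ 2 = 1 / 3) :
    ∀ (n : ℕ) (J : Matrix (Fin n) (Fin n) ℝ), Jᵀ = -J →
      ∀ (H : (Fin n → ℝ) → ℝ), ContDiff ℝ (⊤ : ℕ∞) H →
        ∀ y₀ : Fin n → ℝ,
          (fun h => H (rkStep A b (fun y => J.mulVec (grad H y)) h y₀) - H y₀)
            =O[𝓝 (0 : ℝ)] (fun h => h ^ 4) := by
  intro n J hJ H hH y₀
  set f : (Fin n → ℝ) → (Fin n → ℝ) := fun y => J.mulVec (grad H y) with hfdef
  -- smoothness of f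
  have hf : ContDiff ℝ (⊤:ℕ∞) f := by
    rw [contDiff_pi]
    intro m
    have e : (fun y => f y m) = fun y => ∑ j, J m j * grad H y j := by
      funext y; simp [hfdef, Matrix.mulVec, dotProduct]
    rw [e]
    exact ContDiff.sum fun j _ => contDiff_const.mul (contDiff_pi.1 (PEP.grad_smooth hH) j)
  -- the continuous linear map of multiplication by J
  set JL : (Fin n → ℝ) →L[ℝ] (Fin n → ℝ) :=
    LinearMap.toContinuousLinearMap (Matrix.mulVecLin J) with hJLdef
  have hJL : ∀ v, JL v = J *ᵥ v := by intro v; simp [hJLdef]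
  have hfJL : f = fun y => JL (grad H y) := by
    funext y; rw [hJL]
  -- derivatives of f
  have hG' : ∀ y, HasFDerivAt (grad H) (fderiv ℝ (grad H) y) y := fun y =>
    ((PEP.grad_smooth hH).differentiable PEP.hle1' y).hasFDerivAt
  have hDf : ∀ y, fderiv ℝ f y = JL.comp (fderiv ℝ (grad H) y) := by
    intro y
    rw [hfJL]
    exact (JL.hasFDerivAt.comp y (hG' y)).fderiv
  have hDf' : ∀ y v, fderiv ℝ f y v = J *ᵥ (fderiv ℝ (grad H) y v) := by
    intro y v; rw [hDf]; rw [ContinuousLinearMap.comp_apply, hJL]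
  have hDG' : ∀ y, HasFDerivAt (fderiv ℝ (grad H)) (fderiv ℝ (fderiv ℝ (grad H)) y) y :=
    fun y => ((PEP.DG_smooth hH).differentiable PEP.hle1' y).hasFDerivAt
  have hD2f : ∀ y u v, fderiv ℝ (fderiv ℝ f) y u v
      = J *ᵥ (fderiv ℝ (fderiv ℝ (grad H)) y u v) := by
    intro y u v
    have e1 : fderiv ℝ f = fun y => (ContinuousLinearMap.compL ℝ (Fin n → ℝ) (Fin n → ℝ)
        (Fin n → ℝ) JL) (fderiv ℝ (grad H) y) := by
      funext y; rw [hDf]; rfl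
    rw [e1]
    have h2 : HasFDerivAt (fun y => (ContinuousLinearMap.compL ℝ (Fin n → ℝ) (Fin n → ℝ)
        (Fin n → ℝ) JL) (fderiv ℝ (grad H) y))
        ((ContinuousLinearMap.compL ℝ (Fin n → ℝ) (Fin n → ℝ) (Fin n → ℝ) JL).comp
          (fderiv ℝ (fderiv ℝ (grad H)) y)) y :=
      (ContinuousLinearMap.compL ℝ (Fin n → ℝ) (Fin n → ℝ) (Fin n → ℝ) JL).hasFDerivAt.comp
        y (hDG' y)
    rw [h2.fderiv]
    show JL _ = _
    rw [hJL]
    rfl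
  -- key vectors, as opaque constants
  obtain ⟨F0, hF0def⟩ : ∃ v, v = f y₀ := ⟨_, rfl⟩
  obtain ⟨F1, hF1def⟩ : ∃ v, v = fderiv ℝ f y₀ (f y₀) := ⟨_, rfl⟩
  obtain ⟨Q, hQdef⟩ : ∃ v, v = fderiv ℝ (fderiv ℝ f) y₀ (f y₀) (f y₀) := ⟨_, rfl⟩
  obtain ⟨R, hRdef⟩ : ∃ v, v = fderiv ℝ f y₀ (fderiv ℝ f y₀ (f y₀)) := ⟨_, rfl⟩
  -- row sums
  have hrow : ∀ i, (∑ j, PEP.stA A i j) = c i := by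
    intro i
    rw [hc]
    refine Finset.sum_congr rfl fun j _ => ?_
    by_cases hj : (j:ℕ) < (i:ℕ)
    · simp [PEP.stA, hj]
    · simp [PEP.stA, hj, hA i j (by omega)]
  -- stage values at 0
  have hC1z : ∀ w : Fin s → ℝ, PEP.stC1 A f y₀ w 0 = (∑ j, w j * c j) • F1 := by
    intro w
    rw [PEP.stC1_zero A y₀ hf w, hF1def]
    congr 1
    exact Finset.sum_congr rfl fun j _ => by rw [hrow]
  have hK2z : ∀ i, PEP.stK2 A f y₀ i 0
      = (c i ^ 2) • Q + (2 * ∑ j, PEP.stA A i j * c j) • R := by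
    intro i
    have hbil : ∀ (L : (Fin n → ℝ) →L[ℝ] ((Fin n → ℝ) →L[ℝ] (Fin n → ℝ))) (a : ℝ)
        (u v : Fin n → ℝ), L (a • u) (a • v) = (a * a) • L u v := by
      intro L a u v
      simp only [_root_.map_smul, ContinuousLinearMap.smul_apply, smul_smul]
    rw [PEP.stK2_zero A y₀ hf i, hrow, hbil, ← pow_two, ← hQdef, ← hRdef]
    congr 3
    exact Finset.sum_congr rfl fun j _ => by rw [hrow]
  -- top-level curve values at 0
  have hcv0 : PEP.cv A f y₀ b 0 = y₀ := PEP.cv_zero A y₀ b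
  have hdcv0 : PEP.dcv A f y₀ b 0 = F0 := by
    rw [PEP.dcv_zero A y₀ b, hb, one_smul, hF0def]
  have hddcv0 : PEP.ddcv A f y₀ b 0 = F1 := by
    rw [PEP.ddcv_zero A y₀ b, hC1z b, hbc, smul_smul]
    norm_num
  obtain ⟨d, hddef⟩ : ∃ v : ℝ, v = ∑ i, b i * ∑ j, PEP.stA A i j * c j := ⟨_, rfl⟩
  have hC2z : PEP.stC2 A f y₀ b 0 = (1/3 : ℝ) • Q + (2 * d) • R := by
    rw [PEP.stC2_zero' A y₀ b]
    have e : ∀ i, b i • PEP.stK2 A f y₀ i 0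
        = (b i * c i ^ 2) • Q + (b i * (2 * ∑ j, PEP.stA A i j * c j)) • R := by
      intro i
      rw [hK2z i, smul_add, smul_smul, smul_smul]
    rw [Finset.sum_congr rfl fun i _ => e i, Finset.sum_add_distrib,
      ← Finset.sum_smul, ← Finset.sum_smul, hbc2]
    congr 2
    rw [hddef, Finset.mul_sum]
    exact Finset.sum_congr rfl fun i _ => by ring
  have hdddcv0 : PEP.dddcv A f y₀ b 0 = Q + (6 * d) • R := by
    rw [PEP.dddcv_zero A y₀ b, hC2z, smul_add, smul_smul, smul_smul]
    norm_num
    rw [show (3 * (2 * d)) = 6 * d by ring]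
  -- dot-product identities
  have hD1F0 : fderiv ℝ H y₀ F0 = 0 := by
    rw [PEP.D1_dot, hF0def]
    exact aux_skew hJ (grad H y₀)
  have hD2F0F1 : fderiv ℝ (fderiv ℝ H) y₀ F0 F1 = 0 := by
    rw [PEP.D2_dot hH, hF0def, hF1def, hDf']
    exact aux_skew hJ (fderiv ℝ (grad H) y₀ (f y₀))
  have hD2F1F0 : fderiv ℝ (fderiv ℝ H) y₀ F1 F0 = 0 := by
    rw [PEP.D2_symm hH]
    exact hD2F0F1
  have hD1F1 : fderiv ℝ H y₀ F1 + fderiv ℝ (fderiv ℝ H) y₀ F0 F0 = 0 := by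
    rw [PEP.D1_dot, PEP.D2_dot hH, hF0def, hF1def, hDf', aux_skew' hJ]
    have e : (J *ᵥ grad H y₀) ⬝ᵥ fderiv ℝ (grad H) y₀ (f y₀)
        = fderiv ℝ (grad H) y₀ (f y₀) ⬝ᵥ f y₀ := dotProduct_comm _ _
    rw [e]
    ring
  have hD1Q : fderiv ℝ H y₀ Q = -(fderiv ℝ (fderiv ℝ (fderiv ℝ H)) y₀ F0 F0 F0) := by
    rw [PEP.D1_dot, hQdef, hD2f, aux_skew' hJ, hF0def]
    congr 1
    rw [aux_clm_dot (fderiv ℝ (fderiv ℝ (fderiv ℝ H)) y₀ (f y₀) (f y₀)) (f y₀)]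
    have e : (fun m => fderiv ℝ (fderiv ℝ (fderiv ℝ H)) y₀ (f y₀) (f y₀) (Pi.single m 1))
        = fderiv ℝ (fderiv ℝ (grad H)) y₀ (f y₀) (f y₀) := by
      funext m
      exact (PEP.DDG_apply hH y₀ (f y₀) (f y₀) m).symm
    rw [e, dotProduct_comm]
  have hD1R : fderiv ℝ H y₀ R = 0 := by
    rw [PEP.D1_dot, hRdef, hDf' y₀ (fderiv ℝ f y₀ (f y₀)), aux_skew' hJ]
    have e : (J *ᵥ grad H y₀) ⬝ᵥ fderiv ℝ (grad H) y₀ (fderiv ℝ f y₀ (f y₀))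
        = fderiv ℝ (fderiv ℝ H) y₀ F1 F0 := by
      rw [PEP.D2_dot hH, dotProduct_comm, hF0def, hF1def]
    rw [e, hD2F1F0, neg_zero]
  -- the energy along the step, as a function of h
  have hHd : ∀ x, HasFDerivAt H (fderiv ℝ H x) x := fun x =>
    ((hH.differentiable PEP.hle1') x).hasFDerivAt
  have hD1d : ∀ x, HasFDerivAt (fderiv ℝ H) (fderiv ℝ (fderiv ℝ H) x) x := fun x =>
    (((PEP.D1_smooth hH).differentiable PEP.hle1') x).hasFDerivAt
  have hD2d : ∀ x, HasFDerivAt (fderiv ℝ (fderiv ℝ H)) (fderiv ℝ (fderiv ℝ (fderiv ℝ H)) x) x :=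
    fun x => (((PEP.D2_smooth hH).differentiable PEP.hle1') x).hasFDerivAt
  have hφd : ∀ t, HasDerivAt (fun t => H (PEP.cv A f y₀ b t))
      (fderiv ℝ H (PEP.cv A f y₀ b t) (PEP.dcv A f y₀ b t)) t :=
    fun t => (hHd _).comp_hasDerivAt t (PEP.cv_hasDeriv A y₀ hf b t)
  have hφ1 : deriv (fun t => H (PEP.cv A f y₀ b t))
      = fun t => fderiv ℝ H (PEP.cv A f y₀ b t) (PEP.dcv A f y₀ b t) :=
    funext fun t => (hφd t).deriv
  have hφ1d : ∀ t, HasDerivAt (fun t => fderiv ℝ H (PEP.cv A f y₀ b t) (PEP.dcv A f y₀ b t))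
      (fderiv ℝ (fderiv ℝ H) (PEP.cv A f y₀ b t) (PEP.dcv A f y₀ b t) (PEP.dcv A f y₀ b t)
        + fderiv ℝ H (PEP.cv A f y₀ b t) (PEP.ddcv A f y₀ b t)) t := by
    intro t
    have hcurve : HasDerivAt (fun t => fderiv ℝ H (PEP.cv A f y₀ b t))
        (fderiv ℝ (fderiv ℝ H) (PEP.cv A f y₀ b t) (PEP.dcv A f y₀ b t)) t :=
      (hD1d _).comp_hasDerivAt t (PEP.cv_hasDeriv A y₀ hf b t)
    exact hcurve.clm_apply (PEP.dcv_hasDeriv A y₀ hf b t)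
  have hφ2 : deriv (deriv (fun t => H (PEP.cv A f y₀ b t))) = fun t =>
      fderiv ℝ (fderiv ℝ H) (PEP.cv A f y₀ b t) (PEP.dcv A f y₀ b t) (PEP.dcv A f y₀ b t)
        + fderiv ℝ H (PEP.cv A f y₀ b t) (PEP.ddcv A f y₀ b t) := by
    rw [hφ1]
    exact funext fun t => (hφ1d t).deriv
  -- third derivative at 0
  have hterm1 : HasDerivAt (fun t => fderiv ℝ (fderiv ℝ H) (PEP.cv A f y₀ b t)
      (PEP.dcv A f y₀ b t) (PEP.dcv A f y₀ b t))
      ((fderiv ℝ (fderiv ℝ (fderiv ℝ H)) y₀ F0 F0 + fderiv ℝ (fderiv ℝ H) y₀ F1) F0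
        + fderiv ℝ (fderiv ℝ H) y₀ F0 F1) 0 := by
    have hc2 : HasDerivAt (fun t => fderiv ℝ (fderiv ℝ H) (PEP.cv A f y₀ b t))
        (fderiv ℝ (fderiv ℝ (fderiv ℝ H)) y₀ F0) 0 := by
      have := HasFDerivAt.comp_hasDerivAt (l := fderiv ℝ (fderiv ℝ H)) (0:ℝ) (hD2d (PEP.cv A f y₀ b 0)) (PEP.cv_hasDeriv A y₀ hf b 0)
      rwa [hcv0, hdcv0] at this
    have hdcvd : HasDerivAt (PEP.dcv A f y₀ b) F1 0 := by
      have := PEP.dcv_hasDeriv A y₀ hf b 0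
      rwa [hddcv0] at this
    have hinner : HasDerivAt (fun t => fderiv ℝ (fderiv ℝ H) (PEP.cv A f y₀ b t)
        (PEP.dcv A f y₀ b t))
        (fderiv ℝ (fderiv ℝ (fderiv ℝ H)) y₀ F0 F0 + fderiv ℝ (fderiv ℝ H) y₀ F1) 0 := by
      have := hc2.clm_apply hdcvd
      rwa [hcv0, hdcv0] at this
    have := hinner.clm_apply hdcvd
    rwa [hcv0, hdcv0] at this
  have hterm2 : HasDerivAt (fun t => fderiv ℝ H (PEP.cv A f y₀ b t) (PEP.ddcv A f y₀ b t))
      (fderiv ℝ (fderiv ℝ H) y₀ F0 F1 + fderiv ℝ H y₀ (Q + (6 * d) • R)) 0 := by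
    have hcurve : HasDerivAt (fun t => fderiv ℝ H (PEP.cv A f y₀ b t))
        (fderiv ℝ (fderiv ℝ H) y₀ F0) 0 := by
      have := (hD1d _).comp_hasDerivAt 0 (PEP.cv_hasDeriv A y₀ hf b 0)
      rwa [hcv0, hdcv0] at this
    have hddcvd : HasDerivAt (PEP.ddcv A f y₀ b) (Q + (6 * d) • R) 0 := by
      have := PEP.ddcv_hasDeriv A y₀ hf b 0
      rwa [hdddcv0] at this
    have := hcurve.clm_apply hddcvd
    rwa [hcv0, hddcv0] at this
  have hφ3 : deriv (deriv (deriv (fun t => H (PEP.cv A f y₀ b t)))) 0 = 0 := by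
    rw [hφ2]
    have hsum := hterm1.fun_add hterm2
    rw [hsum.deriv]
    simp only [ContinuousLinearMap.add_apply, map_add]
    rw [hD2F1F0, hD2F0F1, hD1Q, _root_.map_smul]
    simp only [smul_eq_mul, hD1R]
    ring
  -- first and second derivatives at 0
  have hφ1z : deriv (fun t => H (PEP.cv A f y₀ b t)) 0 = 0 := by
    rw [hφ1]
    simp only [hcv0, hdcv0]
    exact hD1F0
  have hφ2z : deriv (deriv (fun t => H (PEP.cv A f y₀ b t))) 0 = 0 := by
    rw [hφ2]
    simp only [hcv0, hdcv0, hddcv0]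
    linarith [hD1F1]
  -- assemble
  have hsmooth : ContDiff ℝ (⊤:ℕ∞) (fun h => H (PEP.cv A f y₀ b h) - H y₀) :=
    (hH.comp (PEP.cv_smooth A y₀ hf b)).sub contDiff_const
  have hders : deriv (fun h => H (PEP.cv A f y₀ b h) - H y₀)
      = deriv (fun t => H (PEP.cv A f y₀ b t)) :=
    funext fun t => deriv_sub_const _
  have hgoal := aux_O4 hsmooth (by simp [hcv0])
    (by rw [hders]; exact hφ1z)
    (by rw [hders]; exact hφ2z)
    (by rw [hders]; exact hφ3)
  have hfun : (fun h => H (rkStep A b f h y₀) - H y₀)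
      = fun h => H (PEP.cv A f y₀ b h) - H y₀ := by
    funext h
    rw [PEP.rkStep_eq]
  exact hfun ▸ hgoal
end

section
/- Let an s-stage explicit Runge–Kutta method with coefficients (A, b, c), c_i = ∑_j a_{ij}, satisfy ∑_i b_i = 1 and ∑_i b_i c_i = 1/2, and suppose that for every dimension n, every constant skew-symmetric J ∈ ℝ^{n×n}, every smooth H : ℝⁿ → ℝ, and every initial value y₀, the one-step approximation satisfies H(y₁(h)) = H(y₀) + O(h⁴) as h → 0. Then ∑_i b_i c_i² = 1/3. -/
open Filter Asymptotics Topology Matrix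

noncomputable def Hfun : (Fin 2 → ℝ) → ℝ := fun y => y 0 + (y 1)^3

def Jmat : Matrix (Fin 2) (Fin 2) ℝ := !![0, 1; -1, 0]

lemma Jskew : Jmatᵀ = -Jmat := by
  ext i j
  fin_cases i <;> fin_cases j <;> simp [Jmat]

lemma hasFDerivH (y : Fin 2 → ℝ) : HasFDerivAt Hfun
    ((ContinuousLinearMap.proj (R := ℝ) (φ := fun _ : Fin 2 => ℝ) 0) +
      ((3 : ℝ) * (y 1)^2) • (ContinuousLinearMap.proj (R := ℝ) (φ := fun _ : Fin 2 => ℝ) 1)) y := by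
  have h0 := (ContinuousLinearMap.proj (R := ℝ) (φ := fun _ : Fin 2 => ℝ) 0).hasFDerivAt (x := y)
  have h1 := (hasDerivAt_pow 3 (y 1)).comp_hasFDerivAt y
    ((ContinuousLinearMap.proj (R := ℝ) (φ := fun _ : Fin 2 => ℝ) 1).hasFDerivAt (x := y))
  have := h0.add h1
  exact this

lemma Hsmooth : ContDiff ℝ (⊤ : ℕ∞) Hfun := by
  exact ((ContinuousLinearMap.proj (R := ℝ) (φ := fun _ : Fin 2 => ℝ) 0).contDiff).add
    (((ContinuousLinearMap.proj (R := ℝ) (φ := fun _ : Fin 2 => ℝ) 1).contDiff).pow 3)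

lemma grad0 (y : Fin 2 → ℝ) : grad Hfun y 0 = 1 := by
  simp [grad, (hasFDerivH y).fderiv]

lemma grad1 (y : Fin 2 → ℝ) : grad Hfun y 1 = 3 * (y 1)^2 := by
  simp [grad, (hasFDerivH y).fderiv]

noncomputable def fJ : (Fin 2 → ℝ) → (Fin 2 → ℝ) := fun y => Jmat.mulVec (grad Hfun y)

lemma fJ0 (y : Fin 2 → ℝ) : fJ y 0 = 3 * (y 1)^2 := by
  simp [fJ, Jmat, Matrix.mulVec, dotProduct, Fin.sum_univ_two, grad0, grad1]

lemma fJ1 (y : Fin 2 → ℝ) : fJ y 1 = -1 := by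
  simp [fJ, Jmat, Matrix.mulVec, dotProduct, Fin.sum_univ_two, grad0, grad1]

lemma stage1 {s : ℕ} (A : Matrix (Fin s) (Fin s) ℝ) (h : ℝ) (y₀ : Fin 2 → ℝ) (i : Fin s) :
    rkStages A fJ h y₀ i 1 = -1 := by
  rw [rkStages]
  exact fJ1 _

lemma stage0 {s : ℕ} (A : Matrix (Fin s) (Fin s) ℝ)
    (hA : ∀ i j : Fin s, (i : ℕ) ≤ (j : ℕ) → A i j = 0) (h : ℝ) (i : Fin s) :
    rkStages A fJ h 0 i 0 = 3 * (h * ∑ j, A i j)^2 := by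
  rw [rkStages, fJ0]
  have hz : (0 : Fin 2 → ℝ) 1 + h * ∑ j : Fin s,
      (if _ : (j : ℕ) < (i : ℕ) then A i j * rkStages A fJ h 0 j 1 else 0)
      = h * ∑ j, A i j * (-1) := by
    rw [Pi.zero_apply, zero_add]
    congr 1
    apply Finset.sum_congr rfl
    intro j _
    by_cases hij : (j : ℕ) < (i : ℕ)
    · rw [dif_pos hij, stage1]
    · rw [dif_neg hij, hA i j (le_of_not_gt hij)]
      ring
  rw [hz]
  have : ∑ j, A i j * (-1) = -∑ j, A i j := by
    rw [← Finset.sum_neg_distrib]; apply Finset.sum_congr rfl; intros; ring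
  rw [this]
  ring

lemma stepKey {s : ℕ} (A : Matrix (Fin s) (Fin s) ℝ) (b : Fin s → ℝ)
    (hA : ∀ i j : Fin s, (i : ℕ) ≤ (j : ℕ) → A i j = 0) (hb : ∑ i, b i = 1) (h : ℝ) :
    Hfun (rkStep A b fJ h 0) - Hfun 0 =
      (3 * (∑ i, b i * (∑ j, A i j) ^ 2) - 1) * h ^ 3 := by
  have e0 : rkStep A b fJ h 0 0 = h * ∑ i, b i * (3 * (h * ∑ j, A i j)^2) := by
    simp only [rkStep, Pi.zero_apply, zero_add]
    congr 1
    apply Finset.sum_congr rfl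
    intro i _
    rw [stage0 A hA]
  have e1 : rkStep A b fJ h 0 1 = -h := by
    simp only [rkStep, Pi.zero_apply, zero_add]
    have : ∑ i, b i * rkStages A fJ h 0 i 1 = -1 := by
      have : ∑ i, b i * rkStages A fJ h 0 i 1 = ∑ i, b i * (-1) := by
        apply Finset.sum_congr rfl; intro i _; rw [stage1]
      simp only [mul_neg, mul_one] at this
      rw [this, Finset.sum_neg_distrib, hb]
    rw [this]; ring
  simp only [Hfun, e0, e1, Pi.zero_apply]
  have : ∑ i, b i * (3 * (h * ∑ j, A i j)^2) = 3 * h^2 * ∑ i, b i * (∑ j, A i j)^2 := by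
    rw [Finset.mul_sum]
    apply Finset.sum_congr rfl; intro i _; ring
  rw [this]
  ring

lemma bigO_cube (c : ℝ)
    (hc : (fun h : ℝ => c * h ^ 3) =O[𝓝 (0:ℝ)] (fun h => h ^ 4)) : c = 0 := by
  obtain ⟨C, hC⟩ := hc.bound
  have h1 : ∀ᶠ x in 𝓝[≠] (0:ℝ), |c| ≤ C * |x| := by
    filter_upwards [nhdsWithin_le_nhds hC, self_mem_nhdsWithin] with x hx hx0
    have hx3 : (0:ℝ) < |x|^3 := pow_pos (abs_pos.mpr hx0) 3
    have hx' : |c| * |x|^3 ≤ (C * |x|) * |x|^3 := by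
      have : |c * x^3| ≤ C * |x^4| := hx
      calc |c| * |x|^3 = |c * x^3| := by rw [abs_mul, abs_pow]
        _ ≤ C * |x^4| := this
        _ = (C * |x|) * |x|^3 := by rw [abs_pow]; ring
    exact le_of_mul_le_mul_right hx' hx3
  have h2 : Tendsto (fun x : ℝ => C * |x|) (𝓝[≠] (0:ℝ)) (𝓝 0) := by
    have ht := ((continuous_const (y := C)).mul continuous_abs).tendsto (0:ℝ)
    have ht2 := ht.mono_left (nhdsWithin_le_nhds (s := {(0:ℝ)}ᶜ))
    simp at ht2
    exact ht2
  have h3 : |c| ≤ 0 := ge_of_tendsto h2 h1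
  exact abs_nonpos_iff.mp h3

/-- A second-order explicit Runge--Kutta method of pseudo-energy-preserving order at
least 3 (energy error `O(h⁴)` for every Hamiltonian system) satisfies `∑ bᵢcᵢ² = 1/3`. -/
theorem pep_order_three_necessary {s : ℕ}
    (A : Matrix (Fin s) (Fin s) ℝ) (b : Fin s → ℝ)
    (hA : ∀ i j : Fin s, (i : ℕ) ≤ (j : ℕ) → A i j = 0)
    (hb : ∑ i, b i = 1)
    (hbc : ∑ i, b i * (∑ j, A i j) = 1 / 2)
    (hPEP : ∀ (n : ℕ) (J : Matrix (Fin n) (Fin n) ℝ), Jᵀ = -J →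
      ∀ (H : (Fin n → ℝ) → ℝ), ContDiff ℝ (⊤ : ℕ∞) H →
        ∀ y₀ : Fin n → ℝ,
          (fun h => H (rkStep A b (fun y => J.mulVec (grad H y)) h y₀) - H y₀)
            =O[𝓝 (0 : ℝ)] (fun h => h ^ 4)) :
    ∑ i, b i * (∑ j, A i j) ^ 2 = 1 / 3 := by
  have hO := hPEP 2 Jmat Jskew Hfun Hsmooth 0
  have hfeq : (fun y : Fin 2 → ℝ => Jmat.mulVec (grad Hfun y)) = fJ := rfl
  rw [hfeq] at hO
  have heq : (fun h => Hfun (rkStep A b fJ h 0) - Hfun 0) =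
      fun h => (3 * (∑ i, b i * (∑ j, A i j) ^ 2) - 1) * h ^ 3 :=
    funext (stepKey A b hA hb)
  rw [heq] at hO
  have := bigO_cube _ hO
  linarith
end

section
/- Consider the two-stage explicit Runge–Kutta method with Butcher tableau a₂₁ = 2/3, c = (0, 2/3), b = (1/4, 3/4). For every Hamiltonian system ẏ = J∇H(y) with J constant skew-symmetric and H smooth, and every initial value y₀, the one-step approximation y₁(h) satisfies H(y₁(h)) = H(y₀) + O(h⁴) as h → 0. Moreover, this method does not satisfy the classical third-order condition ∑_{i,j} b_i a_{ij} c_j = 1/6 (indeed ∑_{i,j} b_i a_{ij} c_j = 0), so its classical order is exactly 2 while its pseudo-energy-preserving order is at least 3. -/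
open Filter Asymptotics Topology Matrix

namespace PEPaux

lemma apply_eq_dot {n : ℕ} (L : (Fin n → ℝ) →L[ℝ] ℝ) (x : Fin n → ℝ) :
    L x = ∑ i, x i * L (Pi.single i 1) := by
  conv_lhs => rw [← Finset.univ_sum_single x, map_sum]
  refine Finset.sum_congr rfl fun i _ => ?_
  have : (Pi.single i (x i) : Fin n → ℝ) = x i • (Pi.single i 1 : Fin n → ℝ) := by
    rw [← Pi.single_smul, smul_eq_mul, mul_one]
  rw [this, L.map_smul, smul_eq_mul]

lemma Jswap {n : ℕ} {J : Matrix (Fin n) (Fin n) ℝ} (hJ : Jᵀ = -J) (x y : Fin n → ℝ) :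
    ∑ i, J.mulVec x i * y i = -∑ i, x i * J.mulVec y i := by
  have hJ' : ∀ i j, J j i = -J i j := fun i j => by
    have := congrFun (congrFun hJ i) j
    simpa [Matrix.transpose_apply] using this
  simp only [Matrix.mulVec, dotProduct, Finset.sum_mul, Finset.mul_sum, ← Finset.sum_neg_distrib]
  rw [Finset.sum_comm]
  refine Finset.sum_congr rfl fun i _ => Finset.sum_congr rfl fun j _ => ?_
  rw [hJ' j i]; ring

lemma Jself {n : ℕ} {J : Matrix (Fin n) (Fin n) ℝ} (hJ : Jᵀ = -J) (x : Fin n → ℝ) :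
    ∑ i, J.mulVec x i * x i = 0 := by
  have h1 := Jswap hJ x x
  have h2 : ∑ i, x i * J.mulVec x i = ∑ i, J.mulVec x i * x i :=
    Finset.sum_congr rfl fun i _ => mul_comm _ _
  rw [h2] at h1
  linarith

lemma stepO {u u' : ℝ → ℝ} (hu : ∀ t, HasDerivAt u (u' t) t) (h0 : u 0 = 0) {k : ℕ}
    (hO : u' =O[𝓝 (0:ℝ)] fun t => t ^ k) : u =O[𝓝 (0:ℝ)] fun t => t ^ (k+1) := by
  obtain ⟨C, hC⟩ := hO.bound
  obtain ⟨ε, εpos, hε⟩ := Metric.eventually_nhds_iff.1 hC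
  rw [isBigO_iff]
  refine ⟨|C|, ?_⟩
  rw [Metric.eventually_nhds_iff]
  refine ⟨ε, εpos, fun {h} hh => ?_⟩
  have habs : ∀ x ∈ Set.uIcc (0:ℝ) h, |x| ≤ |h| := by
    intro x hx
    rcases le_total 0 h with h'|h'
    · rw [Set.uIcc_of_le h'] at hx
      rw [abs_of_nonneg hx.1, abs_of_nonneg h']; exact hx.2
    · rw [Set.uIcc_of_ge h'] at hx
      rw [abs_of_nonpos hx.2, abs_of_nonpos h']; linarith [hx.1]
  have hd : dist h 0 < ε := hh
  rw [Real.dist_eq, sub_zero] at hd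
  have bound : ∀ x ∈ Set.uIcc (0:ℝ) h, ‖u' x‖ ≤ |C| * |h| ^ k := by
    intro x hx
    have hxd : dist x 0 < ε := by
      rw [Real.dist_eq, sub_zero]; exact lt_of_le_of_lt (habs x hx) hd
    calc ‖u' x‖ ≤ C * ‖x ^ k‖ := hε hxd
      _ ≤ |C| * |x| ^ k := by
          rw [Real.norm_eq_abs, abs_pow]
          exact mul_le_mul_of_nonneg_right (le_abs_self C) (by positivity)
      _ ≤ |C| * |h| ^ k := by
          exact mul_le_mul_of_nonneg_left (pow_le_pow_left₀ (abs_nonneg _) (habs x hx) k) (abs_nonneg _)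
  have mvt := Convex.norm_image_sub_le_of_norm_hasDerivWithin_le
    (f := u) (f' := u') (s := Set.uIcc (0:ℝ) h)
    (fun x _ => (hu x).hasDerivWithinAt) bound (convex_uIcc _ _)
    Set.left_mem_uIcc Set.right_mem_uIcc
  rw [h0, sub_zero, sub_zero] at mvt
  calc ‖u h‖ ≤ |C| * |h| ^ k * ‖h‖ := mvt
    _ = |C| * ‖h ^ (k+1)‖ := by
        rw [Real.norm_eq_abs, Real.norm_eq_abs, abs_pow, pow_succ]; ring


variable {n : ℕ}

/-- `Φ J L = J.mulVec (∇L)` as a continuous linear map in `L`. -/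
noncomputable def Phi (J : Matrix (Fin n) (Fin n) ℝ) :
    ((Fin n → ℝ) →L[ℝ] ℝ) →L[ℝ] (Fin n → ℝ) :=
  LinearMap.toContinuousLinearMap
    { toFun := fun L => J.mulVec (fun j => L (Pi.single j 1))
      map_add' := by
        intro L L'
        show J.mulVec (fun j => L (Pi.single j 1) + L' (Pi.single j 1)) = _
        rw [show (fun j => L (Pi.single j 1) + L' (Pi.single j 1))
            = (fun j => L (Pi.single j 1)) + (fun j => L' (Pi.single j 1)) from rfl,
          Matrix.mulVec_add]
      map_smul' := by
        intro c L
        show J.mulVec (fun j => c • L (Pi.single j 1)) = _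
        rw [show (fun j => c • L (Pi.single j 1))
            = c • (fun j => L (Pi.single j 1)) from rfl,
          Matrix.mulVec_smul]
        rfl }

lemma Phi_apply (J : Matrix (Fin n) (Fin n) ℝ) (L : (Fin n → ℝ) →L[ℝ] ℝ) :
    Phi J L = J.mulVec (fun j => L (Pi.single j 1)) := rfl

noncomputable instance i3a : NormedAddCommGroup ((Fin n → ℝ) →L[ℝ] (Fin n → ℝ) →L[ℝ] ℝ) :=
  inferInstance
noncomputable instance i3b : NormedSpace ℝ ((Fin n → ℝ) →L[ℝ] (Fin n → ℝ) →L[ℝ] ℝ) :=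
  inferInstance
noncomputable instance i4a :
    NormedAddCommGroup ((Fin n → ℝ) →L[ℝ] (Fin n → ℝ) →L[ℝ] (Fin n → ℝ) →L[ℝ] ℝ) :=
  inferInstance
noncomputable instance i4b :
    NormedSpace ℝ ((Fin n → ℝ) →L[ℝ] (Fin n → ℝ) →L[ℝ] (Fin n → ℝ) →L[ℝ] ℝ) :=
  inferInstance

section defs

variable (J : Matrix (Fin n) (Fin n) ℝ) (H : (Fin n → ℝ) → ℝ) (u : Fin n → ℝ)

noncomputable def fv : (Fin n → ℝ) → (Fin n → ℝ) := fun y => J.mulVec (grad H y)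

noncomputable def D1 : (Fin n → ℝ) → ((Fin n → ℝ) →L[ℝ] ℝ) := fderiv ℝ H
noncomputable def D2 := fderiv ℝ (D1 H)
noncomputable def D3 := fderiv ℝ (D2 H)
noncomputable def D4 := fderiv ℝ (D3 H)

noncomputable def vv : Fin n → ℝ := fv J H u
noncomputable def lc (h : ℝ) : Fin n → ℝ := u + ((2/3 : ℝ) * h) • vv J H u
noncomputable def Pc (h : ℝ) : Fin n → ℝ := fv J H (lc J H u h)
noncomputable def Pd (h : ℝ) : Fin n → ℝ :=
  (2/3 : ℝ) • Phi J (D2 H (lc J H u h) (vv J H u))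
noncomputable def Pdd (h : ℝ) : Fin n → ℝ :=
  (4/9 : ℝ) • Phi J (D3 H (lc J H u h) (vv J H u) (vv J H u))
noncomputable def Pddd (h : ℝ) : Fin n → ℝ :=
  (8/27 : ℝ) • Phi J (D4 H (lc J H u h) (vv J H u) (vv J H u) (vv J H u))

noncomputable def gam (h : ℝ) : Fin n → ℝ :=
  u + h • ((1/4 : ℝ) • vv J H u + (3/4 : ℝ) • Pc J H u h)
noncomputable def gam1 (h : ℝ) : Fin n → ℝ :=
  ((1/4 : ℝ) • vv J H u + (3/4 : ℝ) • Pc J H u h) + h • ((3/4 : ℝ) • Pd J H u h)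
noncomputable def gam2 (h : ℝ) : Fin n → ℝ :=
  (3/2 : ℝ) • Pd J H u h + h • ((3/4 : ℝ) • Pdd J H u h)
noncomputable def gam3 (h : ℝ) : Fin n → ℝ :=
  (9/4 : ℝ) • Pdd J H u h + h • ((3/4 : ℝ) • Pddd J H u h)

noncomputable def gg (h : ℝ) : ℝ := H (gam J H u h)
noncomputable def gg1 (h : ℝ) : ℝ := D1 H (gam J H u h) (gam1 J H u h)
noncomputable def gg2 (h : ℝ) : ℝ :=
  D2 H (gam J H u h) (gam1 J H u h) (gam1 J H u h) + D1 H (gam J H u h) (gam2 J H u h)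
noncomputable def gg3 (h : ℝ) : ℝ :=
  ((D3 H (gam J H u h) (gam1 J H u h) (gam1 J H u h) + D2 H (gam J H u h) (gam2 J H u h))
      (gam1 J H u h)
    + D2 H (gam J H u h) (gam1 J H u h) (gam2 J H u h))
  + (D2 H (gam J H u h) (gam1 J H u h) (gam2 J H u h) + D1 H (gam J H u h) (gam3 J H u h))

end defs

section curves

variable (J : Matrix (Fin n) (Fin n) ℝ) (H : (Fin n → ℝ) → ℝ) (u : Fin n → ℝ)
variable (hH : ContDiff ℝ (⊤ : ℕ∞) H)
include hH

lemma hD1c : ContDiff ℝ (⊤ : ℕ∞) (D1 H) := (contDiff_infty_iff_fderiv.1 hH).2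
lemma hD2c : ContDiff ℝ (⊤ : ℕ∞) (D2 H) := (contDiff_infty_iff_fderiv.1 (hD1c H hH)).2
lemma hD3c : ContDiff ℝ (⊤ : ℕ∞) (D3 H) := (contDiff_infty_iff_fderiv.1 (hD2c H hH)).2
lemma hD4c : ContDiff ℝ (⊤ : ℕ∞) (D4 H) := (contDiff_infty_iff_fderiv.1 (hD3c H hH)).2

lemma hHd : Differentiable ℝ H := (contDiff_infty_iff_fderiv.1 hH).1
lemma hD1d : Differentiable ℝ (D1 H) := (contDiff_infty_iff_fderiv.1 (hD1c H hH)).1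
lemma hD2d : Differentiable ℝ (D2 H) := (contDiff_infty_iff_fderiv.1 (hD2c H hH)).1
lemma hD3d : Differentiable ℝ (D3 H) := (contDiff_infty_iff_fderiv.1 (hD3c H hH)).1
lemma hD4d : Differentiable ℝ (D4 H) := (contDiff_infty_iff_fderiv.1 (hD4c H hH)).1

lemma hlc (h : ℝ) : HasDerivAt (lc J H u) ((2/3 : ℝ) • vv J H u) h := by
  have h1 : HasDerivAt (fun x : ℝ => (2/3 : ℝ) * x) ((2/3 : ℝ) * 1) h :=
    (hasDerivAt_id h).const_mul _
  have h2 := (h1.smul_const (vv J H u)).const_add u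
  rw [mul_one] at h2
  exact h2

lemma fv_eq_Phi (y : Fin n → ℝ) : fv J H y = Phi J (D1 H y) := rfl

lemma hPc (h : ℝ) : HasDerivAt (Pc J H u) (Pd J H u h) h := by
  have hc : HasDerivAt (fun x => D1 H (lc J H u x)) (D2 H (lc J H u h) ((2/3 : ℝ) • vv J H u)) h :=
    HasFDerivAt.comp_hasDerivAt _ (hD1d H hH (lc J H u h)).hasFDerivAt (hlc J H u hH h)
  have h2 : HasDerivAt (fun x => Phi J (D1 H (lc J H u x)))
      (Phi J (D2 H (lc J H u h) ((2/3 : ℝ) • vv J H u))) h :=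
    HasFDerivAt.comp_hasDerivAt _ (Phi J).hasFDerivAt hc
  have e : Phi J (D2 H (lc J H u h) ((2/3 : ℝ) • vv J H u)) = Pd J H u h := by
    rw [(D2 H (lc J H u h)).map_smul, (Phi J).map_smul]; rfl
  rw [e] at h2
  exact h2

lemma hPd (h : ℝ) : HasDerivAt (Pd J H u) (Pdd J H u h) h := by
  have hc : HasDerivAt (fun x => D2 H (lc J H u x)) (D3 H (lc J H u h) ((2/3 : ℝ) • vv J H u)) h :=
    HasFDerivAt.comp_hasDerivAt _ (hD2d H hH (lc J H u h)).hasFDerivAt (hlc J H u hH h)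
  have hc2 := hc.clm_apply (hasDerivAt_const h (vv J H u))
  have h2 := (HasFDerivAt.comp_hasDerivAt _ (Phi J).hasFDerivAt hc2).const_smul (2/3 : ℝ)
  have e : (2/3 : ℝ) • Phi J (D3 H (lc J H u h) ((2/3 : ℝ) • vv J H u) (vv J H u)
      + D2 H (lc J H u h) 0) = Pdd J H u h := by
    rw [(D2 H (lc J H u h)).map_zero, add_zero, (D3 H (lc J H u h)).map_smul,
      ContinuousLinearMap.smul_apply, (Phi J).map_smul, smul_smul]
    show ((2/3 : ℝ) * (2/3 : ℝ)) • _ = _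
    norm_num [Pdd]
  rw [e] at h2
  exact h2

lemma hPdd (h : ℝ) : HasDerivAt (Pdd J H u) (Pddd J H u h) h := by
  have hc : HasDerivAt (fun x => D3 H (lc J H u x)) (D4 H (lc J H u h) ((2/3 : ℝ) • vv J H u)) h :=
    HasFDerivAt.comp_hasDerivAt _ (hD3d H hH (lc J H u h)).hasFDerivAt (hlc J H u hH h)
  have hc2 := (hc.clm_apply (hasDerivAt_const h (vv J H u))).clm_apply
    (hasDerivAt_const h (vv J H u))
  have h2 := (HasFDerivAt.comp_hasDerivAt _ (Phi J).hasFDerivAt hc2).const_smul (4/9 : ℝ)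
  have e : (4/9 : ℝ) • Phi J ((D4 H (lc J H u h) ((2/3 : ℝ) • vv J H u) (vv J H u)
        + D3 H (lc J H u h) 0) (vv J H u) + D3 H (lc J H u h) (vv J H u) 0) = Pddd J H u h := by
    rw [(D3 H (lc J H u h)).map_zero, add_zero, ((D3 H (lc J H u h)) (vv J H u)).map_zero, add_zero,
      (D4 H (lc J H u h)).map_smul, ContinuousLinearMap.smul_apply,
      ContinuousLinearMap.smul_apply, (Phi J).map_smul, smul_smul]
    show ((4/9 : ℝ) * (2/3 : ℝ)) • _ = _
    norm_num [Pddd]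
  rw [e] at h2
  exact h2

end curves

section gcurves

variable (J : Matrix (Fin n) (Fin n) ℝ) (H : (Fin n → ℝ) → ℝ) (u : Fin n → ℝ)
variable (hH : ContDiff ℝ (⊤ : ℕ∞) H)
include hH

set_option linter.unusedSectionVars false

lemma hgam (h : ℝ) : HasDerivAt (gam J H u) (gam1 J H u h) h := by
  have hB : HasDerivAt (fun x => (1/4 : ℝ) • vv J H u + (3/4 : ℝ) • Pc J H u x)
      ((3/4 : ℝ) • Pd J H u h) h :=
    ((hPc J H u hH h).const_smul (3/4 : ℝ)).const_add _
  have h2 := ((hasDerivAt_id h).smul hB).const_add u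
  have e : h • ((3/4 : ℝ) • Pd J H u h)
      + (1:ℝ) • ((1/4 : ℝ) • vv J H u + (3/4 : ℝ) • Pc J H u h) = gam1 J H u h := by
    unfold gam1; module
  rw [show (id h : ℝ) = h from rfl] at h2
  rw [e] at h2
  exact h2

lemma hgam1 (h : ℝ) : HasDerivAt (gam1 J H u) (gam2 J H u h) h := by
  have hB : HasDerivAt (fun x => (1/4 : ℝ) • vv J H u + (3/4 : ℝ) • Pc J H u x)
      ((3/4 : ℝ) • Pd J H u h) h :=
    ((hPc J H u hH h).const_smul (3/4 : ℝ)).const_add _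
  have hC : HasDerivAt (fun x => (3/4 : ℝ) • Pd J H u x) ((3/4 : ℝ) • Pdd J H u h) h :=
    (hPd J H u hH h).const_smul (3/4 : ℝ)
  have h2 := hB.add ((hasDerivAt_id h).smul hC)
  have e : (3/4 : ℝ) • Pd J H u h
      + (h • ((3/4 : ℝ) • Pdd J H u h) + (1:ℝ) • ((3/4 : ℝ) • Pd J H u h)) = gam2 J H u h := by
    unfold gam2; module
  rw [show (id h : ℝ) = h from rfl] at h2
  rw [e] at h2
  exact h2

lemma hgam2 (h : ℝ) : HasDerivAt (gam2 J H u) (gam3 J H u h) h := by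
  have hB : HasDerivAt (fun x => (3/2 : ℝ) • Pd J H u x) ((3/2 : ℝ) • Pdd J H u h) h :=
    (hPd J H u hH h).const_smul (3/2 : ℝ)
  have hC : HasDerivAt (fun x => (3/4 : ℝ) • Pdd J H u x) ((3/4 : ℝ) • Pddd J H u h) h :=
    (hPdd J H u hH h).const_smul (3/4 : ℝ)
  have h2 := hB.add ((hasDerivAt_id h).smul hC)
  have e : (3/2 : ℝ) • Pdd J H u h
      + (h • ((3/4 : ℝ) • Pddd J H u h) + (1:ℝ) • ((3/4 : ℝ) • Pdd J H u h)) = gam3 J H u h := by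
    unfold gam3; module
  rw [show (id h : ℝ) = h from rfl] at h2
  rw [e] at h2
  exact h2

lemma hgg (h : ℝ) : HasDerivAt (gg J H u) (gg1 J H u h) h :=
  HasFDerivAt.comp_hasDerivAt _ (hHd H hH (gam J H u h)).hasFDerivAt (hgam J H u hH h)

lemma hD1gam (h : ℝ) :
    HasDerivAt (fun x => D1 H (gam J H u x)) (D2 H (gam J H u h) (gam1 J H u h)) h :=
  HasFDerivAt.comp_hasDerivAt _ (hD1d H hH (gam J H u h)).hasFDerivAt (hgam J H u hH h)

lemma hgg1 (h : ℝ) : HasDerivAt (gg1 J H u) (gg2 J H u h) h :=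
  (hD1gam J H u hH h).clm_apply (hgam1 J H u hH h)

lemma hgg2 (h : ℝ) : HasDerivAt (gg2 J H u) (gg3 J H u h) h := by
  have hD2gam : HasDerivAt (fun x => D2 H (gam J H u x))
      (D3 H (gam J H u h) (gam1 J H u h)) h :=
    HasFDerivAt.comp_hasDerivAt _ (hD2d H hH (gam J H u h)).hasFDerivAt (hgam J H u hH h)
  have t1 := (hD2gam.clm_apply (hgam1 J H u hH h)).clm_apply (hgam1 J H u hH h)
  have t2 := (hD1gam J H u hH h).clm_apply (hgam2 J H u hH h)
  exact t1.add t2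

end gcurves

section values

variable (J : Matrix (Fin n) (Fin n) ℝ) (H : (Fin n → ℝ) → ℝ) (u : Fin n → ℝ)

lemma lc0 : lc J H u 0 = u := by simp [lc]

lemma Pc0 : Pc J H u 0 = vv J H u := by rw [Pc, lc0]; rfl

lemma gam0 : gam J H u 0 = u := by simp [gam]

lemma gam1_0 : gam1 J H u 0 = vv J H u := by
  rw [gam1, Pc0]; rw [zero_smul, add_zero]; module

lemma gam2_0 : gam2 J H u 0 = Phi J (D2 H u (vv J H u)) := by
  rw [gam2, zero_smul, add_zero, Pd, lc0, smul_smul]; norm_num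

lemma gam3_0 : gam3 J H u 0 = Phi J (D3 H u (vv J H u) (vv J H u)) := by
  rw [gam3, zero_smul, add_zero, Pdd, lc0, smul_smul]; norm_num

lemma gg0 : gg J H u 0 = H u := by rw [gg, gam0]

lemma gg1_0 : gg1 J H u 0 = D1 H u (vv J H u) := by rw [gg1, gam0, gam1_0]

lemma gg2_0 : gg2 J H u 0 = D2 H u (vv J H u) (vv J H u)
    + D1 H u (Phi J (D2 H u (vv J H u))) := by
  rw [gg2, gam0, gam1_0, gam2_0]

lemma gg3_0 : gg3 J H u 0 =
    (D3 H u (vv J H u) (vv J H u) (vv J H u) + D1 H u (Phi J (D3 H u (vv J H u) (vv J H u))))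
    + (D2 H u (Phi J (D2 H u (vv J H u))) (vv J H u)
      + 2 * D2 H u (vv J H u) (Phi J (D2 H u (vv J H u)))) := by
  rw [gg3, gam0, gam1_0, gam2_0, gam3_0, ContinuousLinearMap.add_apply]
  ring

end values

section identities

variable {J : Matrix (Fin n) (Fin n) ℝ} (H : (Fin n → ℝ) → ℝ) (u : Fin n → ℝ)

lemma id1 (hJ : Jᵀ = -J) : D1 H u (vv J H u) = 0 := by
  rw [apply_eq_dot]
  exact Jself hJ (grad H u)

lemma id2 (hJ : Jᵀ = -J) :
    D2 H u (vv J H u) (vv J H u) + D1 H u (Phi J (D2 H u (vv J H u))) = 0 := by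
  have e1 : D1 H u (Phi J (D2 H u (vv J H u)))
      = -∑ i, (fun j => D2 H u (vv J H u) (Pi.single j 1)) i * J.mulVec (grad H u) i := by
    rw [apply_eq_dot]
    exact Jswap hJ _ (grad H u)
  have e2 : D2 H u (vv J H u) (vv J H u)
      = ∑ i, vv J H u i * D2 H u (vv J H u) (Pi.single i 1) :=
    apply_eq_dot _ _
  rw [e1, e2]
  have e3 : ∑ i, vv J H u i * D2 H u (vv J H u) (Pi.single i 1)
      = ∑ i, (fun j => D2 H u (vv J H u) (Pi.single j 1)) i * J.mulVec (grad H u) i :=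
    Finset.sum_congr rfl fun i _ => mul_comm _ _
  rw [e3]; ring

lemma id3a (hJ : Jᵀ = -J) :
    D3 H u (vv J H u) (vv J H u) (vv J H u)
      + D1 H u (Phi J (D3 H u (vv J H u) (vv J H u))) = 0 := by
  have e1 : D1 H u (Phi J (D3 H u (vv J H u) (vv J H u)))
      = -∑ i, (fun j => D3 H u (vv J H u) (vv J H u) (Pi.single j 1)) i
          * J.mulVec (grad H u) i := by
    rw [apply_eq_dot]
    exact Jswap hJ _ (grad H u)
  have e2 : D3 H u (vv J H u) (vv J H u) (vv J H u)
      = ∑ i, vv J H u i * D3 H u (vv J H u) (vv J H u) (Pi.single i 1) :=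
    apply_eq_dot _ _
  rw [e1, e2]
  have e3 : ∑ i, vv J H u i * D3 H u (vv J H u) (vv J H u) (Pi.single i 1)
      = ∑ i, (fun j => D3 H u (vv J H u) (vv J H u) (Pi.single j 1)) i
          * J.mulVec (grad H u) i :=
    Finset.sum_congr rfl fun i _ => mul_comm _ _
  rw [e3]; ring

lemma id3b (hJ : Jᵀ = -J) : D2 H u (vv J H u) (Phi J (D2 H u (vv J H u))) = 0 := by
  rw [apply_eq_dot]
  exact Jself hJ _

lemma id3c (hJ : Jᵀ = -J) (hH : ContDiff ℝ (⊤ : ℕ∞) H) :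
    D2 H u (Phi J (D2 H u (vv J H u))) (vv J H u) = 0 := by
  have symm := second_derivative_symmetric (f := H) (f' := D1 H)
    (fun y => (hHd H hH y).hasFDerivAt) ((hD1d H hH u).hasFDerivAt)
    (Phi J (D2 H u (vv J H u))) (vv J H u)
  exact symm.trans (id3b H u hJ)

end identities

section final

variable (J : Matrix (Fin n) (Fin n) ℝ) (H : (Fin n → ℝ) → ℝ) (u : Fin n → ℝ)

set_option linter.unusedSectionVars false

lemma gg3_diff (hH : ContDiff ℝ (⊤ : ℕ∞) H) : DifferentiableAt ℝ (gg3 J H u) 0 := by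
  have hγd : DifferentiableAt ℝ (gam J H u) 0 := (hgam J H u hH 0).differentiableAt
  have hγ1d : DifferentiableAt ℝ (gam1 J H u) 0 := (hgam1 J H u hH 0).differentiableAt
  have hγ2d : DifferentiableAt ℝ (gam2 J H u) 0 := (hgam2 J H u hH 0).differentiableAt
  have hPddDiff : DifferentiableAt ℝ (Pdd J H u) 0 := (hPdd J H u hH 0).differentiableAt
  have hPdddDiff : DifferentiableAt ℝ (Pddd J H u) 0 := by
    have hc : DifferentiableAt ℝ (fun x => D4 H (lc J H u x)) 0 :=
      DifferentiableAt.comp 0 (hD4d H hH _) (hlc J H u hH 0).differentiableAt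
    have hc2 : DifferentiableAt ℝ
        (fun x => D4 H (lc J H u x) (vv J H u) (vv J H u) (vv J H u)) 0 :=
      ((hc.clm_apply (differentiableAt_const _)).clm_apply
        (differentiableAt_const _)).clm_apply (differentiableAt_const _)
    have hc3 : DifferentiableAt ℝ
        (fun x => Phi J (D4 H (lc J H u x) (vv J H u) (vv J H u) (vv J H u))) 0 :=
      DifferentiableAt.comp 0 ((Phi J).differentiable.differentiableAt) hc2
    exact hc3.const_smul (8/27 : ℝ)
  have hγ3d : DifferentiableAt ℝ (gam3 J H u) 0 :=
    (hPddDiff.const_smul (9/4 : ℝ)).add (differentiableAt_fun_id.smul (hPdddDiff.const_smul (3/4 : ℝ)))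
  have hD1γ : DifferentiableAt ℝ (fun x => D1 H (gam J H u x)) 0 :=
    DifferentiableAt.comp 0 (hD1d H hH _) hγd
  have hD2γ : DifferentiableAt ℝ (fun x => D2 H (gam J H u x)) 0 :=
    DifferentiableAt.comp 0 (hD2d H hH _) hγd
  have hD3γ : DifferentiableAt ℝ (fun x => D3 H (gam J H u x)) 0 :=
    DifferentiableAt.comp 0 (hD3d H hH _) hγd
  have t1 : DifferentiableAt ℝ
      (fun x => D3 H (gam J H u x) (gam1 J H u x) (gam1 J H u x)) 0 :=
    (hD3γ.clm_apply hγ1d).clm_apply hγ1d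
  have t2 : DifferentiableAt ℝ (fun x => D2 H (gam J H u x) (gam2 J H u x)) 0 :=
    hD2γ.clm_apply hγ2d
  have t3 : DifferentiableAt ℝ
      (fun x => D2 H (gam J H u x) (gam1 J H u x) (gam2 J H u x)) 0 :=
    (hD2γ.clm_apply hγ1d).clm_apply hγ2d
  have t4 : DifferentiableAt ℝ (fun x => D1 H (gam J H u x) (gam3 J H u x)) 0 :=
    hD1γ.clm_apply hγ3d
  unfold gg3
  exact (((t1.add t2).clm_apply hγ1d).add t3).add (t3.add t4)

lemma key (hJ : Jᵀ = -J) (hH : ContDiff ℝ (⊤ : ℕ∞) H) :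
    (fun h : ℝ => gg J H u h - H u) =O[𝓝 (0:ℝ)] fun h => h ^ 4 := by
  have hv1 : gg1 J H u 0 = 0 := by rw [gg1_0]; exact id1 H u hJ
  have hv2 : gg2 J H u 0 = 0 := by rw [gg2_0]; exact id2 H u hJ
  have hv3 : gg3 J H u 0 = 0 := by
    rw [gg3_0]
    rw [id3b H u hJ, id3c H u hJ hH]
    have := id3a H u hJ
    linarith
  have o1 : gg3 J H u =O[𝓝 (0:ℝ)] fun h => h ^ 1 := by
    have h1 := (gg3_diff J H u hH).isBigO_sub
    have e1 : (fun x : ℝ => gg3 J H u x - gg3 J H u 0) = gg3 J H u := by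
      funext x; rw [hv3, sub_zero]
    have e2 : (fun x : ℝ => x - 0) = fun x : ℝ => x ^ 1 := by
      funext x; rw [sub_zero, pow_one]
    rwa [e1, e2] at h1
  have o2 : gg2 J H u =O[𝓝 (0:ℝ)] fun h => h ^ 2 :=
    stepO (hgg2 J H u hH) hv2 o1
  have o3 : gg1 J H u =O[𝓝 (0:ℝ)] fun h => h ^ 3 :=
    stepO (hgg1 J H u hH) hv1 o2
  have o4 : (fun h : ℝ => gg J H u h - H u) =O[𝓝 (0:ℝ)] fun h => h ^ 4 :=
    stepO (fun t => (hgg J H u hH t).sub_const (H u))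
      (by rw [gg0, sub_self]) o3
  exact o4

end final

lemma rk_unfold {n : ℕ} (A : Matrix (Fin 2) (Fin 2) ℝ) (b : Fin 2 → ℝ)
    (hA : A = !![0, 0; 2/3, 0]) (hb : b = ![1/4, 3/4])
    (f : (Fin n → ℝ) → (Fin n → ℝ)) (h : ℝ) (u : Fin n → ℝ) :
    rkStep A b f h u = fun m => u m + h * ((1/4) * f u m
      + (3/4) * f (fun m' => u m' + ((2/3)*h) * f u m') m) := by
  subst hA hb
  set A : Matrix (Fin 2) (Fin 2) ℝ := !![0, 0; 2/3, 0] with hA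
  have e0 : rkStages A f h u 0 = f u := by
    rw [rkStages.eq_def]
    norm_num
  have harg : (fun m => u m + h * ∑ j : Fin 2,
      if _ : (j : ℕ) < ((1 : Fin 2) : ℕ) then A 1 j * rkStages A f h u j m else 0)
      = fun m' => u m' + ((2/3)*h) * f u m' := by
    funext m
    rw [Fin.sum_univ_two, e0]
    norm_num [hA]
    ring
  have e1 : rkStages A f h u 1 = f (fun m' => u m' + ((2/3)*h) * f u m') := by
    rw [rkStages.eq_def]
    show f _ = _
    exact congrArg f harg
  funext m
  rw [rkStep, Fin.sum_univ_two, e0, e1]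
  norm_num

lemma gam_eq {n : ℕ} (J : Matrix (Fin n) (Fin n) ℝ) (H : (Fin n → ℝ) → ℝ) (u : Fin n → ℝ)
    (h : ℝ) : gam J H u h = fun m => u m + h * ((1/4 : ℝ) * fv J H u m
      + (3/4 : ℝ) * fv J H (fun m' => u m' + ((2/3 : ℝ)*h) * fv J H u m') m) := by
  have e : (fun m' => u m' + ((2/3 : ℝ)*h) * fv J H u m') = lc J H u h := by
    funext m'; simp [lc, vv]
  rw [e]
  funext m
  simp [gam, Pc, vv]
  ring

end PEPaux


open PEPaux in
/-- The two-stage explicit Runge--Kutta method with `a₂₁ = 2/3`, `c = (0, 2/3)`,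
`b = (1/4, 3/4)` has pseudo-energy-preserving order at least 3 (energy error `O(h⁴)`
for every Hamiltonian system), while it fails the classical third-order condition
`∑ bᵢaᵢⱼcⱼ = 1/6` (indeed this sum is `0`), so its classical order is exactly 2. -/
theorem pep223_method (A : Matrix (Fin 2) (Fin 2) ℝ) (b c : Fin 2 → ℝ)
    (hA : A = !![0, 0; 2/3, 0]) (hb : b = ![1/4, 3/4]) (hc : c = ![0, 2/3]) :
    (∀ (n : ℕ) (J : Matrix (Fin n) (Fin n) ℝ), Jᵀ = -J →
      ∀ (H : (Fin n → ℝ) → ℝ), ContDiff ℝ (⊤ : ℕ∞) H →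
        ∀ y₀ : Fin n → ℝ,
          (fun h => H (rkStep A b (fun y => J.mulVec (grad H y)) h y₀) - H y₀)
            =O[𝓝 (0 : ℝ)] (fun h => h ^ 4)) ∧
    (∑ i, ∑ j, b i * A i j * c j = 0) ∧
    (∑ i, ∑ j, b i * A i j * c j ≠ 1 / 6) := by
  have hsum : ∑ i, ∑ j, b i * A i j * c j = 0 := by
    subst hA hb hc
    norm_num [Fin.sum_univ_two]
  refine ⟨?_, hsum, by rw [hsum]; norm_num⟩
  intro n J hJ H hH y₀
  have hstep : ∀ h : ℝ, rkStep A b (fun y => J.mulVec (grad H y)) h y₀ = gam J H y₀ h := by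
    intro h
    rw [rk_unfold A b hA hb (fun y => J.mulVec (grad H y)) h y₀]
    rw [gam_eq J H y₀ h]
    rfl
  have e : (fun h => H (rkStep A b (fun y => J.mulVec (grad H y)) h y₀) - H y₀)
      = fun h => gg J H y₀ h - H y₀ := by
    funext h
    rw [hstep h]
    rfl
  rw [e]
  exact key J H y₀ hJ hH
end

section
/- Consider three-stage explicit Runge–Kutta methods with coefficients a₂₁, a₃₁, a₃₂, b₁, b₂, b₃ ∈ ℝ and abscissae c₁ = 0, c₂ = a₂₁, c₃ = a₃₁ + a₃₂. The unique such method satisfying the second-order conditions ∑ b_i = 1, ∑ b_i c_i = 1/2, the condition ∑ b_i c_i² = 1/3, and the three pseudo-energy-preserving order-4 conditions ∑_{i,j,k} b_i a_{ij} a_{jk} c_k = ∑_{i,j} b_i a_{ij} c_j − 1/8, ∑_{i,j} b_i c_i a_{ij} c_j − (1/2)∑_{i,j} b_i a_{ij} c_j² = 1/12, and ∑_i b_i c_i³ = 1/4, is a₂₁ = 1/3, a₃₁ = −5/48, a₃₂ = 15/16, b = (1/10, 1/2, 2/5) (hence c = (0, 1/3, 5/6)). -/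
/-- The unique three-stage explicit Runge--Kutta method satisfying the classical
second-order conditions together with the pseudo-energy-preserving order-3 and
order-4 conditions is `a₂₁ = 1/3`, `a₃₁ = −5/48`, `a₃₂ = 15/16`,
`b = (1/10, 1/2, 2/5)` (hence `c = (0, 1/3, 5/6)`). -/
theorem three_stage_pep_order_four_unique
    (a₂₁ a₃₁ a₃₂ b₁ b₂ b₃ : ℝ)
    (A : Matrix (Fin 3) (Fin 3) ℝ) (hA : A = !![0, 0, 0; a₂₁, 0, 0; a₃₁, a₃₂, 0])
    (b : Fin 3 → ℝ) (hb : b = ![b₁, b₂, b₃])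
    (c : Fin 3 → ℝ) (hc : ∀ i, c i = ∑ j, A i j) :
    ((∑ i, b i = 1) ∧
     (∑ i, b i * c i = 1 / 2) ∧
     (∑ i, b i * c i ^ 2 = 1 / 3) ∧
     (∑ i, ∑ j, ∑ k, b i * A i j * A j k * c k
        = (∑ i, ∑ j, b i * A i j * c j) - 1 / 8) ∧
     ((∑ i, ∑ j, b i * c i * A i j * c j)
        - (1 / 2) * (∑ i, ∑ j, b i * A i j * c j ^ 2) = 1 / 12) ∧
     (∑ i, b i * c i ^ 3 = 1 / 4)) ↔
    (a₂₁ = 1 / 3 ∧ a₃₁ = -5 / 48 ∧ a₃₂ = 15 / 16 ∧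
      b₁ = 1 / 10 ∧ b₂ = 1 / 2 ∧ b₃ = 2 / 5) := by
  have hc0 := hc 0
  have hc1 := hc 1
  have hc2 := hc 2
  simp [hA, Fin.sum_univ_three] at hc0 hc1 hc2
  subst hA hb
  simp only [Fin.sum_univ_three, hc0, hc1, hc2]
  norm_num [Matrix.vecHead, Matrix.vecTail, Matrix.cons_val_two]
  constructor
  · rintro ⟨h1, h2, h3, h4, h5, h6⟩
    have key : 1/4 - (a₂₁ + (a₃₁ + a₃₂))/3 + a₂₁*(a₃₁+a₃₂)/2 = 0 := by
      linear_combination (a₂₁ + (a₃₁ + a₃₂))*h3 - h6 - (a₂₁*(a₃₁+a₃₂))*h2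
    have hrel : 2*(a₃₁+a₃₂) - a₂₁ = 4/3 := by
      linear_combination 16*h5 + (16*(a₃₁+a₃₂) - 8*a₂₁)*h4
    have hsq : (3*a₂₁ - 1)^2 = 0 := by
      linear_combination 36*key + (6 - 9*a₂₁)*hrel
    have ha : a₂₁ = 1/3 := by
      have h0 := sq_eq_zero_iff.mp hsq
      linarith
    subst ha
    have hc3 : a₃₁ + a₃₂ = 5/6 := by linarith
    have hb3 : b₃ = 2/5 := by
      linear_combination (4/5)*(3*h3 - h2) - (4/5)*b₃*(3*(a₃₁+a₃₂)+3/2)*hc3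
    have hb2 : b₂ = 1/2 := by
      linear_combination 3*h2 - 3*b₃*hc3 - (5/2)*hb3
    have ha32 : a₃₂ = 15/16 := by
      linear_combination (-15/2)*h4 - (5/2)*a₃₂*hb3
    refine ⟨rfl, by linarith, ha32, by linarith, hb2, hb3⟩
  · rintro ⟨r1, r2, r3, r4, r5, r6⟩
    subst r1 r2 r3 r4 r5 r6
    norm_num
end

section
/- Consider the three-stage explicit Runge–Kutta method with Butcher tableau a₂₁ = 1/3, a₃₁ = −5/48, a₃₂ = 15/16, c = (0, 1/3, 5/6), b = (1/10, 1/2, 2/5). For every Hamiltonian system ẏ = J∇H(y) with J constant skew-symmetric and H smooth, and every initial value y₀, the one-step approximation y₁(h) satisfies H(y₁(h)) = H(y₀) + O(h⁵) as h → 0; i.e., this method has pseudo-energy-preserving order at least 4. -/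
open Filter Asymptotics Topology Matrix

set_option synthInstance.maxHeartbeats 1000000
set_option maxHeartbeats 2000000


namespace PEP324

theorem chainO {F : Type*} [NormedAddCommGroup F] [NormedSpace ℝ F]
    {g g' : ℝ → F} {m : ℕ} (hg : ∀ t, HasDerivAt g (g' t) t) (h0 : g 0 = 0)
    (hO : g' =O[𝓝 (0:ℝ)] fun h => h ^ m) : g =O[𝓝 (0:ℝ)] fun h => h ^ (m+1) := by
  rcases hO.exists_nonneg with ⟨C, hC, hCb⟩
  rw [IsBigOWith] at hCb
  rcases Metric.eventually_nhds_iff.1 hCb with ⟨δ, hδ, hbound⟩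
  rw [isBigO_iff]
  refine ⟨C, Metric.eventually_nhds_iff.2 ⟨δ, hδ, fun h hh => ?_⟩⟩
  have key : ∀ x ∈ Set.uIcc (0:ℝ) h, ‖g' x‖ ≤ C * |h| ^ m := by
    intro x hx
    have hxh : |x| ≤ |h| := by
      rcases Set.mem_uIcc.1 hx with ⟨h1, h2⟩ | ⟨h1, h2⟩
      · rw [abs_of_nonneg h1]
        exact le_trans h2 (le_abs_self h)
      · rw [abs_of_nonpos h2]
        exact le_trans (neg_le_neg h1) (neg_le_abs h)
    have hxδ : dist x 0 < δ := by
      rw [Real.dist_eq, sub_zero]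
      exact lt_of_le_of_lt hxh (by simpa [Real.dist_eq] using hh)
    calc ‖g' x‖ ≤ C * ‖x ^ m‖ := hbound hxδ
      _ = C * |x| ^ m := by rw [norm_pow, Real.norm_eq_abs]
      _ ≤ C * |h| ^ m := by
          exact mul_le_mul_of_nonneg_left (pow_le_pow_left₀ (abs_nonneg x) hxh m) hC
  have := (convex_uIcc (0:ℝ) h).norm_image_sub_le_of_norm_hasDerivWithin_le
    (f := g) (f' := g')
    (fun x hx => (hg x).hasDerivWithinAt) key
    Set.left_mem_uIcc Set.right_mem_uIcc
  rw [h0, sub_zero, sub_zero] at this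
  calc ‖g h‖ ≤ C * |h| ^ m * ‖h‖ := this
    _ = C * ‖h ^ (m+1)‖ := by
        rw [norm_pow, Real.norm_eq_abs, pow_succ]; ring

theorem baseO {F : Type*} [NormedAddCommGroup F] [NormedSpace ℝ F]
    {g : ℝ → F} (hg : DifferentiableAt ℝ g 0) (h0 : g 0 = 0) :
    g =O[𝓝 (0:ℝ)] fun h => h ^ 1 := by
  have := hg.isBigO_sub
  simpa [h0] using this


theorem top1 : ((⊤:ℕ∞) : WithTop ℕ∞) + 1 ≤ ((⊤:ℕ∞) : WithTop ℕ∞) := by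
  norm_cast

theorem one_le_top : ((⊤:ℕ∞) : WithTop ℕ∞) ≠ 0 := by
  simp

variable {n : ℕ}

noncomputable instance instNACG3 : NormedAddCommGroup ((Fin n → ℝ) →L[ℝ] (Fin n → ℝ) →L[ℝ] (Fin n → ℝ) →L[ℝ] ℝ) :=
  @ContinuousLinearMap.toNormedAddCommGroup ℝ ℝ (Fin n → ℝ) ((Fin n → ℝ) →L[ℝ] (Fin n → ℝ) →L[ℝ] ℝ) _ _ _ _ _ _ (RingHom.id ℝ) _
noncomputable instance instNS3 : NormedSpace ℝ ((Fin n → ℝ) →L[ℝ] (Fin n → ℝ) →L[ℝ] (Fin n → ℝ) →L[ℝ] ℝ) :=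
  @ContinuousLinearMap.toNormedSpace ℝ ℝ (Fin n → ℝ) ((Fin n → ℝ) →L[ℝ] (Fin n → ℝ) →L[ℝ] ℝ) _ _ _ _ _ _ (RingHom.id ℝ) _ ℝ _ _ _

noncomputable instance instNACG4 : NormedAddCommGroup ((Fin n → ℝ) →L[ℝ] (Fin n → ℝ) →L[ℝ] (Fin n → ℝ) →L[ℝ] (Fin n → ℝ) →L[ℝ] ℝ) :=
  @ContinuousLinearMap.toNormedAddCommGroup ℝ ℝ (Fin n → ℝ) ((Fin n → ℝ) →L[ℝ] (Fin n → ℝ) →L[ℝ] (Fin n → ℝ) →L[ℝ] ℝ) _ _ _ _ _ _ (RingHom.id ℝ) _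
noncomputable instance instNS4 : NormedSpace ℝ ((Fin n → ℝ) →L[ℝ] (Fin n → ℝ) →L[ℝ] (Fin n → ℝ) →L[ℝ] (Fin n → ℝ) →L[ℝ] ℝ) :=
  @ContinuousLinearMap.toNormedSpace ℝ ℝ (Fin n → ℝ) ((Fin n → ℝ) →L[ℝ] (Fin n → ℝ) →L[ℝ] (Fin n → ℝ) →L[ℝ] ℝ) _ _ _ _ _ _ (RingHom.id ℝ) _ ℝ _ _ _

noncomputable instance instNACG5 : NormedAddCommGroup ((Fin n → ℝ) →L[ℝ] (Fin n → ℝ) →L[ℝ] (Fin n → ℝ) →L[ℝ] (Fin n → ℝ) →L[ℝ] (Fin n → ℝ) →L[ℝ] ℝ) :=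
  @ContinuousLinearMap.toNormedAddCommGroup ℝ ℝ (Fin n → ℝ) ((Fin n → ℝ) →L[ℝ] (Fin n → ℝ) →L[ℝ] (Fin n → ℝ) →L[ℝ] (Fin n → ℝ) →L[ℝ] ℝ) _ _ _ _ _ _ (RingHom.id ℝ) _
noncomputable instance instNS5 : NormedSpace ℝ ((Fin n → ℝ) →L[ℝ] (Fin n → ℝ) →L[ℝ] (Fin n → ℝ) →L[ℝ] (Fin n → ℝ) →L[ℝ] (Fin n → ℝ) →L[ℝ] ℝ) :=
  @ContinuousLinearMap.toNormedSpace ℝ ℝ (Fin n → ℝ) ((Fin n → ℝ) →L[ℝ] (Fin n → ℝ) →L[ℝ] (Fin n → ℝ) →L[ℝ] (Fin n → ℝ) →L[ℝ] ℝ) _ _ _ _ _ _ (RingHom.id ℝ) _ ℝ _ _ _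

noncomputable def D1 (H : (Fin n → ℝ) → ℝ) : (Fin n → ℝ) → (Fin n → ℝ) →L[ℝ] ℝ :=
  fderiv ℝ H
noncomputable def D2 (H : (Fin n → ℝ) → ℝ) := fderiv ℝ (D1 H)
noncomputable def D3 (H : (Fin n → ℝ) → ℝ) := fderiv ℝ (D2 H)
noncomputable def D4 (H : (Fin n → ℝ) → ℝ) := fderiv ℝ (D3 H)
noncomputable def D5 (H : (Fin n → ℝ) → ℝ) := fderiv ℝ (D4 H)

variable {H : (Fin n → ℝ) → ℝ}

theorem cD1 (hH : ContDiff ℝ (⊤:ℕ∞) H) : ContDiff ℝ (⊤:ℕ∞) (D1 H) :=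
  hH.fderiv_right top1
theorem cD2 (hH : ContDiff ℝ (⊤:ℕ∞) H) : ContDiff ℝ (⊤:ℕ∞) (D2 H) :=
  (cD1 hH).fderiv_right top1
theorem cD3 (hH : ContDiff ℝ (⊤:ℕ∞) H) : ContDiff ℝ (⊤:ℕ∞) (D3 H) :=
  (cD2 hH).fderiv_right top1
theorem cD4 (hH : ContDiff ℝ (⊤:ℕ∞) H) : ContDiff ℝ (⊤:ℕ∞) (D4 H) :=
  (cD3 hH).fderiv_right top1
theorem cD5 (hH : ContDiff ℝ (⊤:ℕ∞) H) : ContDiff ℝ (⊤:ℕ∞) (D5 H) :=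
  (cD4 hH).fderiv_right top1

theorem hD1 (hH : ContDiff ℝ (⊤:ℕ∞) H) (y : Fin n → ℝ) : HasFDerivAt (D1 H) (D2 H y) y :=
  ((cD1 hH).differentiable one_le_top y).hasFDerivAt
theorem hD2 (hH : ContDiff ℝ (⊤:ℕ∞) H) (y : Fin n → ℝ) : HasFDerivAt (D2 H) (D3 H y) y :=
  ((cD2 hH).differentiable one_le_top y).hasFDerivAt
theorem hD3 (hH : ContDiff ℝ (⊤:ℕ∞) H) (y : Fin n → ℝ) : HasFDerivAt (D3 H) (D4 H y) y :=
  ((cD3 hH).differentiable one_le_top y).hasFDerivAt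
theorem hD4 (hH : ContDiff ℝ (⊤:ℕ∞) H) (y : Fin n → ℝ) : HasFDerivAt (D4 H) (D5 H y) y :=
  ((cD4 hH).differentiable one_le_top y).hasFDerivAt


noncomputable def gv1 (H : (Fin n → ℝ) → ℝ) (y : Fin n → ℝ) : Fin n → ℝ :=
  fun i => D1 H y (Pi.single i 1)
noncomputable def gv2 (H : (Fin n → ℝ) → ℝ) (y a : Fin n → ℝ) : Fin n → ℝ :=
  fun i => D2 H y a (Pi.single i 1)
noncomputable def gv3 (H : (Fin n → ℝ) → ℝ) (y a b : Fin n → ℝ) : Fin n → ℝ :=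
  fun i => D3 H y a b (Pi.single i 1)
noncomputable def gv4 (H : (Fin n → ℝ) → ℝ) (y a b c : Fin n → ℝ) : Fin n → ℝ :=
  fun i => D4 H y a b c (Pi.single i 1)
noncomputable def gv5 (H : (Fin n → ℝ) → ℝ) (y a b c d : Fin n → ℝ) : Fin n → ℝ :=
  fun i => D5 H y a b c d (Pi.single i 1)

section comp

variable {γ a b c : ℝ → Fin n → ℝ} {γ' a' b' c' : Fin n → ℝ} {t : ℝ}

theorem hasDerivAt_gv1_comp (hH : ContDiff ℝ (⊤:ℕ∞) H) (hγ : HasDerivAt γ γ' t) :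
    HasDerivAt (fun s => gv1 H (γ s)) (gv2 H (γ t) γ') t := by
  rw [hasDerivAt_pi]
  intro i
  have h1 := ((hD1 hH (γ t)).comp_hasDerivAt t hγ).clm_apply
    (hasDerivAt_const t (Pi.single i (1:ℝ)))
  simpa [gv1, gv2] using h1

theorem hasDerivAt_gv2_comp (hH : ContDiff ℝ (⊤:ℕ∞) H) (hγ : HasDerivAt γ γ' t)
    (ha : HasDerivAt a a' t) :
    HasDerivAt (fun s => gv2 H (γ s) (a s)) (gv3 H (γ t) γ' (a t) + gv2 H (γ t) a') t := by
  rw [hasDerivAt_pi]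
  intro i
  have h0 := ((hD2 hH (γ t)).comp_hasDerivAt t hγ).clm_apply (G := ((Fin n → ℝ) →L[ℝ] ℝ)) ha
  have h1 := h0.clm_apply (G := ℝ)
    (hasDerivAt_const t (Pi.single i (1:ℝ) : Fin n → ℝ))
  simpa [gv2, gv3] using h1

theorem hasDerivAt_gv3_comp (hH : ContDiff ℝ (⊤:ℕ∞) H) (hγ : HasDerivAt γ γ' t)
    (ha : HasDerivAt a a' t) (hb : HasDerivAt b b' t) :
    HasDerivAt (fun s => gv3 H (γ s) (a s) (b s))
      (gv4 H (γ t) γ' (a t) (b t) + gv3 H (γ t) a' (b t) + gv3 H (γ t) (a t) b') t := by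
  rw [hasDerivAt_pi]
  intro i
  have h0 := ((hD3 hH (γ t)).comp_hasDerivAt t hγ).clm_apply (G := ((Fin n → ℝ) →L[ℝ] (Fin n → ℝ) →L[ℝ] ℝ)) ha
  have h0' := h0.clm_apply (G := ((Fin n → ℝ) →L[ℝ] ℝ)) hb
  have h1 := h0'.clm_apply (G := ℝ)
    (hasDerivAt_const t (Pi.single i (1:ℝ) : Fin n → ℝ))
  simpa [gv3, gv4, add_assoc] using h1

theorem hasDerivAt_gv4_comp (hH : ContDiff ℝ (⊤:ℕ∞) H) (hγ : HasDerivAt γ γ' t)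
    (ha : HasDerivAt a a' t) (hb : HasDerivAt b b' t) (hc : HasDerivAt c c' t) :
    HasDerivAt (fun s => gv4 H (γ s) (a s) (b s) (c s))
      (gv5 H (γ t) γ' (a t) (b t) (c t) + gv4 H (γ t) a' (b t) (c t)
        + gv4 H (γ t) (a t) b' (c t) + gv4 H (γ t) (a t) (b t) c') t := by
  rw [hasDerivAt_pi]
  intro i
  have h0 := ((hD4 hH (γ t)).comp_hasDerivAt t hγ).clm_apply (G := ((Fin n → ℝ) →L[ℝ] (Fin n → ℝ) →L[ℝ] (Fin n → ℝ) →L[ℝ] ℝ)) ha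
  have h0' := h0.clm_apply (G := ((Fin n → ℝ) →L[ℝ] (Fin n → ℝ) →L[ℝ] ℝ)) hb
  have h0'' := h0'.clm_apply (G := ((Fin n → ℝ) →L[ℝ] ℝ)) hc
  have h1 := h0''.clm_apply (G := ℝ) (hasDerivAt_const t (Pi.single i (1:ℝ) : Fin n → ℝ))
  simpa [gv4, gv5, add_assoc] using h1

theorem differentiableAt_gv5_comp (hH : ContDiff ℝ (⊤:ℕ∞) H)
    {d : ℝ → Fin n → ℝ}
    (hγ : DifferentiableAt ℝ γ t) (ha : DifferentiableAt ℝ a t)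
    (hb : DifferentiableAt ℝ b t) (hc : DifferentiableAt ℝ c t)
    (hd : DifferentiableAt ℝ d t) :
    DifferentiableAt ℝ (fun s => gv5 H (γ s) (a s) (b s) (c s) (d s)) t := by
  rw [differentiableAt_pi]
  intro i
  have hconst : DifferentiableAt ℝ (fun _ : ℝ => (Pi.single i (1:ℝ) : Fin n → ℝ)) t :=
    differentiableAt_const _
  exact ((((((((cD5 hH).differentiable one_le_top).differentiableAt.comp t
    hγ).clm_apply ha).clm_apply hb).clm_apply hc).clm_apply hd).clm_apply hconst)

end comp

noncomputable def Jc (J : Matrix (Fin n) (Fin n) ℝ) : (Fin n → ℝ) →L[ℝ] (Fin n → ℝ) :=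
  LinearMap.toContinuousLinearMap J.mulVecLin

theorem Jc_apply (J : Matrix (Fin n) (Fin n) ℝ) (v : Fin n → ℝ) :
    Jc J v = J.mulVec v := rfl

theorem clm_eval (T : (Fin n → ℝ) →L[ℝ] ℝ) (v : Fin n → ℝ) :
    T v = v ⬝ᵥ (fun i => T (Pi.single i 1)) := by
  have hv : v = ∑ i, v i • (Pi.single i (1:ℝ) : Fin n → ℝ) := by
    funext j
    rw [Finset.sum_apply]
    simp [Pi.single_apply]
  conv_lhs => rw [hv]
  rw [map_sum]
  simp [dotProduct, smul_eq_mul]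

theorem e1 {y v : Fin n → ℝ} : D1 H y v = v ⬝ᵥ gv1 H y := clm_eval _ v
theorem e2 {y a v : Fin n → ℝ} : D2 H y a v = v ⬝ᵥ gv2 H y a := clm_eval _ v
theorem e3 {y a b v : Fin n → ℝ} : D3 H y a b v = v ⬝ᵥ gv3 H y a b := clm_eval _ v
theorem e4 {y a b c v : Fin n → ℝ} : D4 H y a b c v = v ⬝ᵥ gv4 H y a b c := clm_eval _ v

section skew

variable {J : Matrix (Fin n) (Fin n) ℝ}

theorem skew1 (hJ : Jᵀ = -J) (x w : Fin n → ℝ) : x ⬝ᵥ Jc J w = -(w ⬝ᵥ Jc J x) := by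
  rw [Jc_apply, Jc_apply, Matrix.dotProduct_mulVec, ← Matrix.mulVec_transpose, hJ,
    Matrix.neg_mulVec, neg_dotProduct, dotProduct_comm]

theorem skew0 (hJ : Jᵀ = -J) (x : Fin n → ℝ) : x ⬝ᵥ Jc J x = 0 := by
  have := skew1 hJ x x
  linarith

end skew

section symm

theorem sym2 (hH : ContDiff ℝ (⊤:ℕ∞) H) (y a b : Fin n → ℝ) :
    D2 H y a b = D2 H y b a := by
  have h := (hH.contDiffAt (x := y)).isSymmSndFDerivAt (by simp; exact WithTop.coe_le_coe.2 (le_top (a := (2:ℕ∞))))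
  exact h.eq a b

theorem sym3a (hH : ContDiff ℝ (⊤:ℕ∞) H) (y a b c : Fin n → ℝ) :
    D3 H y a b c = D3 H y b a c := by
  have h := (((cD1 hH).contDiffAt (x := y)).isSymmSndFDerivAt
    (by simp; exact WithTop.coe_le_coe.2 (le_top (a := (2:ℕ∞))))).eq a b
  exact congrFun (congrArg _ h) c

theorem sym3b (hH : ContDiff ℝ (⊤:ℕ∞) H) (y a b c : Fin n → ℝ) :
    D3 H y a b c = D3 H y a c b := by
  -- both sides are the derivative at 0 of t ↦ D2 H (y + t • a) b c (resp. c b)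
  have key : ∀ b c : Fin n → ℝ,
      HasDerivAt (fun t : ℝ => D2 H (y + t • a) b c) (D3 H y a b c) 0 := by
    intro b c
    have hγ : HasDerivAt (fun t : ℝ => y + t • a) a 0 := by
      simpa using ((hasDerivAt_id (0:ℝ)).smul_const a).const_add y
    have h0 := ((hD2 hH (y + (0:ℝ) • a)).comp_hasDerivAt 0 hγ).clm_apply
      (G := ((Fin n → ℝ) →L[ℝ] ℝ)) (hasDerivAt_const (0:ℝ) b)
    have h1 := h0.clm_apply (G := ℝ) (hasDerivAt_const (0:ℝ) c)
    simpa using h1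
  have h1 := key b c
  have h2 : HasDerivAt (fun t : ℝ => D2 H (y + t • a) b c) (D3 H y a c b) 0 := by
    have h3 := key c b
    have : (fun t : ℝ => D2 H (y + t • a) c b) = fun t : ℝ => D2 H (y + t • a) b c := by
      funext t
      exact (sym2 hH _ c b)
    rwa [this] at h3
  exact h1.unique h2

end symm

section lin

theorem gv2_smul (H : (Fin n → ℝ) → ℝ) (y : Fin n → ℝ) (r : ℝ) (a : Fin n → ℝ) :
    gv2 H y (r • a) = r • gv2 H y a := by
  funext i; simp [gv2]
theorem gv2_add (H : (Fin n → ℝ) → ℝ) (y a b : Fin n → ℝ) :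
    gv2 H y (a + b) = gv2 H y a + gv2 H y b := by
  funext i; simp [gv2]
theorem gv3_smul₁ (H : (Fin n → ℝ) → ℝ) (y : Fin n → ℝ) (r : ℝ) (a b : Fin n → ℝ) :
    gv3 H y (r • a) b = r • gv3 H y a b := by
  funext i; simp [gv3]
theorem gv3_smul₂ (H : (Fin n → ℝ) → ℝ) (y : Fin n → ℝ) (r : ℝ) (a b : Fin n → ℝ) :
    gv3 H y a (r • b) = r • gv3 H y a b := by
  funext i; simp [gv3]
theorem gv4_smul₁ (H : (Fin n → ℝ) → ℝ) (y : Fin n → ℝ) (r : ℝ) (a b c : Fin n → ℝ) :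
    gv4 H y (r • a) b c = r • gv4 H y a b c := by
  funext i; simp [gv4]
theorem gv4_smul₂ (H : (Fin n → ℝ) → ℝ) (y : Fin n → ℝ) (r : ℝ) (a b c : Fin n → ℝ) :
    gv4 H y a (r • b) c = r • gv4 H y a b c := by
  funext i; simp [gv4]
theorem gv4_smul₃ (H : (Fin n → ℝ) → ℝ) (y : Fin n → ℝ) (r : ℝ) (a b c : Fin n → ℝ) :
    gv4 H y a b (r • c) = r • gv4 H y a b c := by
  funext i; simp [gv4]

theorem gv2_zero (H : (Fin n → ℝ) → ℝ) (y : Fin n → ℝ) : gv2 H y 0 = 0 := by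
  funext i; simp [gv2]
theorem gv3_zero₁ (H : (Fin n → ℝ) → ℝ) (y b : Fin n → ℝ) : gv3 H y 0 b = 0 := by
  funext i; simp [gv3]
theorem gv3_zero₂ (H : (Fin n → ℝ) → ℝ) (y a : Fin n → ℝ) : gv3 H y a 0 = 0 := by
  funext i; simp [gv3]
theorem gv4_zero₁ (H : (Fin n → ℝ) → ℝ) (y b c : Fin n → ℝ) : gv4 H y 0 b c = 0 := by
  funext i; simp [gv4]
theorem gv4_zero₂ (H : (Fin n → ℝ) → ℝ) (y a c : Fin n → ℝ) : gv4 H y a 0 c = 0 := by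
  funext i; simp [gv4]
theorem gv4_zero₃ (H : (Fin n → ℝ) → ℝ) (y a b : Fin n → ℝ) : gv4 H y a b 0 = 0 := by
  funext i; simp [gv4]

end lin

section curves

variable (J : Matrix (Fin n) (Fin n) ℝ) (H : (Fin n → ℝ) → ℝ) (y₀ : Fin n → ℝ)

noncomputable def Fv : Fin n → ℝ := Jc J (gv1 H y₀)
noncomputable def CF : Fin n → ℝ := (1/3 : ℝ) • Fv J H y₀

noncomputable def ga2 (t : ℝ) : Fin n → ℝ := y₀ + t • CF J H y₀
noncomputable def k2 (t : ℝ) : Fin n → ℝ := Jc J (gv1 H (ga2 J H y₀ t))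
noncomputable def k2d1 (t : ℝ) : Fin n → ℝ := Jc J (gv2 H (ga2 J H y₀ t) (CF J H y₀))
noncomputable def k2d2 (t : ℝ) : Fin n → ℝ :=
  Jc J (gv3 H (ga2 J H y₀ t) (CF J H y₀) (CF J H y₀))
noncomputable def k2d3 (t : ℝ) : Fin n → ℝ :=
  Jc J (gv4 H (ga2 J H y₀ t) (CF J H y₀) (CF J H y₀) (CF J H y₀))
noncomputable def k2d4 (t : ℝ) : Fin n → ℝ :=
  Jc J (gv5 H (ga2 J H y₀ t) (CF J H y₀) (CF J H y₀) (CF J H y₀) (CF J H y₀))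

noncomputable def v3 (t : ℝ) : Fin n → ℝ :=
  (-5/48 : ℝ) • Fv J H y₀ + (15/16 : ℝ) • k2 J H y₀ t
noncomputable def v3d1 (t : ℝ) : Fin n → ℝ := (15/16 : ℝ) • k2d1 J H y₀ t
noncomputable def v3d2 (t : ℝ) : Fin n → ℝ := (15/16 : ℝ) • k2d2 J H y₀ t
noncomputable def v3d3 (t : ℝ) : Fin n → ℝ := (15/16 : ℝ) • k2d3 J H y₀ t
noncomputable def v3d4 (t : ℝ) : Fin n → ℝ := (15/16 : ℝ) • k2d4 J H y₀ t

noncomputable def ga3 (t : ℝ) : Fin n → ℝ := y₀ + t • v3 J H y₀ t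
noncomputable def ga3d1 (t : ℝ) : Fin n → ℝ := v3 J H y₀ t + t • v3d1 J H y₀ t
noncomputable def ga3d2 (t : ℝ) : Fin n → ℝ := (2:ℝ) • v3d1 J H y₀ t + t • v3d2 J H y₀ t
noncomputable def ga3d3 (t : ℝ) : Fin n → ℝ := (3:ℝ) • v3d2 J H y₀ t + t • v3d3 J H y₀ t
noncomputable def ga3d4 (t : ℝ) : Fin n → ℝ := (4:ℝ) • v3d3 J H y₀ t + t • v3d4 J H y₀ t

noncomputable def k3 (t : ℝ) : Fin n → ℝ := Jc J (gv1 H (ga3 J H y₀ t))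
noncomputable def k3d1 (t : ℝ) : Fin n → ℝ :=
  Jc J (gv2 H (ga3 J H y₀ t) (ga3d1 J H y₀ t))
noncomputable def k3d2 (t : ℝ) : Fin n → ℝ :=
  Jc J (gv3 H (ga3 J H y₀ t) (ga3d1 J H y₀ t) (ga3d1 J H y₀ t)
    + gv2 H (ga3 J H y₀ t) (ga3d2 J H y₀ t))
noncomputable def k3d3 (t : ℝ) : Fin n → ℝ :=
  Jc J ((gv4 H (ga3 J H y₀ t) (ga3d1 J H y₀ t) (ga3d1 J H y₀ t) (ga3d1 J H y₀ t)
      + gv3 H (ga3 J H y₀ t) (ga3d2 J H y₀ t) (ga3d1 J H y₀ t)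
      + gv3 H (ga3 J H y₀ t) (ga3d1 J H y₀ t) (ga3d2 J H y₀ t))
    + (gv3 H (ga3 J H y₀ t) (ga3d1 J H y₀ t) (ga3d2 J H y₀ t)
      + gv2 H (ga3 J H y₀ t) (ga3d3 J H y₀ t)))
noncomputable def k3d4 (t : ℝ) : Fin n → ℝ :=
  Jc J (((gv5 H (ga3 J H y₀ t) (ga3d1 J H y₀ t) (ga3d1 J H y₀ t) (ga3d1 J H y₀ t) (ga3d1 J H y₀ t)
      + gv4 H (ga3 J H y₀ t) (ga3d2 J H y₀ t) (ga3d1 J H y₀ t) (ga3d1 J H y₀ t)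
      + gv4 H (ga3 J H y₀ t) (ga3d1 J H y₀ t) (ga3d2 J H y₀ t) (ga3d1 J H y₀ t)
      + gv4 H (ga3 J H y₀ t) (ga3d1 J H y₀ t) (ga3d1 J H y₀ t) (ga3d2 J H y₀ t)
      + (gv4 H (ga3 J H y₀ t) (ga3d1 J H y₀ t) (ga3d2 J H y₀ t) (ga3d1 J H y₀ t)
        + gv3 H (ga3 J H y₀ t) (ga3d3 J H y₀ t) (ga3d1 J H y₀ t)
        + gv3 H (ga3 J H y₀ t) (ga3d2 J H y₀ t) (ga3d2 J H y₀ t))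
      + (gv4 H (ga3 J H y₀ t) (ga3d1 J H y₀ t) (ga3d1 J H y₀ t) (ga3d2 J H y₀ t)
        + gv3 H (ga3 J H y₀ t) (ga3d2 J H y₀ t) (ga3d2 J H y₀ t)
        + gv3 H (ga3 J H y₀ t) (ga3d1 J H y₀ t) (ga3d3 J H y₀ t)))
    + ((gv4 H (ga3 J H y₀ t) (ga3d1 J H y₀ t) (ga3d1 J H y₀ t) (ga3d2 J H y₀ t)
        + gv3 H (ga3 J H y₀ t) (ga3d2 J H y₀ t) (ga3d2 J H y₀ t)
        + gv3 H (ga3 J H y₀ t) (ga3d1 J H y₀ t) (ga3d3 J H y₀ t))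
      + (gv3 H (ga3 J H y₀ t) (ga3d1 J H y₀ t) (ga3d3 J H y₀ t)
        + gv2 H (ga3 J H y₀ t) (ga3d4 J H y₀ t)))))

noncomputable def vu (t : ℝ) : Fin n → ℝ :=
  (1/10 : ℝ) • Fv J H y₀ + (1/2 : ℝ) • k2 J H y₀ t + (2/5 : ℝ) • k3 J H y₀ t
noncomputable def vud1 (t : ℝ) : Fin n → ℝ :=
  (1/2 : ℝ) • k2d1 J H y₀ t + (2/5 : ℝ) • k3d1 J H y₀ t
noncomputable def vud2 (t : ℝ) : Fin n → ℝ :=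
  (1/2 : ℝ) • k2d2 J H y₀ t + (2/5 : ℝ) • k3d2 J H y₀ t
noncomputable def vud3 (t : ℝ) : Fin n → ℝ :=
  (1/2 : ℝ) • k2d3 J H y₀ t + (2/5 : ℝ) • k3d3 J H y₀ t
noncomputable def vud4 (t : ℝ) : Fin n → ℝ :=
  (1/2 : ℝ) • k2d4 J H y₀ t + (2/5 : ℝ) • k3d4 J H y₀ t

noncomputable def uu (t : ℝ) : Fin n → ℝ := y₀ + t • vu J H y₀ t
noncomputable def ud1 (t : ℝ) : Fin n → ℝ := vu J H y₀ t + t • vud1 J H y₀ t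
noncomputable def ud2 (t : ℝ) : Fin n → ℝ := (2:ℝ) • vud1 J H y₀ t + t • vud2 J H y₀ t
noncomputable def ud3 (t : ℝ) : Fin n → ℝ := (3:ℝ) • vud2 J H y₀ t + t • vud3 J H y₀ t
noncomputable def ud4 (t : ℝ) : Fin n → ℝ := (4:ℝ) • vud3 J H y₀ t + t • vud4 J H y₀ t

end curves

section curvederiv

variable {J : Matrix (Fin n) (Fin n) ℝ} {y₀ : Fin n → ℝ}

theorem hga2 (J : Matrix (Fin n) (Fin n) ℝ) (H : (Fin n → ℝ) → ℝ) (y₀ : Fin n → ℝ) (t : ℝ) :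
    HasDerivAt (ga2 J H y₀) (CF J H y₀) t := by
  unfold ga2
  simpa using ((hasDerivAt_id t).smul_const (CF J H y₀)).const_add y₀

theorem hk2 (hH : ContDiff ℝ (⊤:ℕ∞) H) (t : ℝ) :
    HasDerivAt (k2 J H y₀) (k2d1 J H y₀ t) t := by
  unfold k2 k2d1
  exact (Jc J).hasFDerivAt.comp_hasDerivAt t (hasDerivAt_gv1_comp hH (hga2 J H y₀ t))

theorem hk2d1 (hH : ContDiff ℝ (⊤:ℕ∞) H) (t : ℝ) :
    HasDerivAt (k2d1 J H y₀) (k2d2 J H y₀ t) t := by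
  unfold k2d1 k2d2
  have h := (Jc J).hasFDerivAt.comp_hasDerivAt t
    (hasDerivAt_gv2_comp hH (hga2 J H y₀ t) (hasDerivAt_const t (CF J H y₀)))
  simpa [gv2_zero, Function.comp_def] using h

theorem hk2d2 (hH : ContDiff ℝ (⊤:ℕ∞) H) (t : ℝ) :
    HasDerivAt (k2d2 J H y₀) (k2d3 J H y₀ t) t := by
  unfold k2d2 k2d3
  have h := (Jc J).hasFDerivAt.comp_hasDerivAt t
    (hasDerivAt_gv3_comp hH (hga2 J H y₀ t) (hasDerivAt_const t (CF J H y₀))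
      (hasDerivAt_const t (CF J H y₀)))
  simpa [gv3_zero₁, gv3_zero₂, Function.comp_def] using h

theorem hk2d3 (hH : ContDiff ℝ (⊤:ℕ∞) H) (t : ℝ) :
    HasDerivAt (k2d3 J H y₀) (k2d4 J H y₀ t) t := by
  unfold k2d3 k2d4
  have h := (Jc J).hasFDerivAt.comp_hasDerivAt t
    (hasDerivAt_gv4_comp hH (hga2 J H y₀ t) (hasDerivAt_const t (CF J H y₀))
      (hasDerivAt_const t (CF J H y₀)) (hasDerivAt_const t (CF J H y₀)))
  simpa [gv4_zero₁, gv4_zero₂, gv4_zero₃, Function.comp_def] using h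

theorem hv3 (hH : ContDiff ℝ (⊤:ℕ∞) H) (t : ℝ) :
    HasDerivAt (v3 J H y₀) (v3d1 J H y₀ t) t := by
  unfold v3 v3d1
  exact ((hk2 hH t).const_smul (15/16 : ℝ)).const_add _

theorem hv3d1 (hH : ContDiff ℝ (⊤:ℕ∞) H) (t : ℝ) :
    HasDerivAt (v3d1 J H y₀) (v3d2 J H y₀ t) t := by
  unfold v3d1 v3d2
  exact (hk2d1 hH t).const_smul (15/16 : ℝ)

theorem hv3d2 (hH : ContDiff ℝ (⊤:ℕ∞) H) (t : ℝ) :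
    HasDerivAt (v3d2 J H y₀) (v3d3 J H y₀ t) t := by
  unfold v3d2 v3d3
  exact (hk2d2 hH t).const_smul (15/16 : ℝ)

theorem hv3d3 (hH : ContDiff ℝ (⊤:ℕ∞) H) (t : ℝ) :
    HasDerivAt (v3d3 J H y₀) (v3d4 J H y₀ t) t := by
  unfold v3d3 v3d4
  exact (hk2d3 hH t).const_smul (15/16 : ℝ)

theorem hga3 (hH : ContDiff ℝ (⊤:ℕ∞) H) (t : ℝ) :
    HasDerivAt (ga3 J H y₀) (ga3d1 J H y₀ t) t := by
  unfold ga3 ga3d1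
  have h := ((hasDerivAt_id t).smul (hv3 (J := J) (y₀ := y₀) hH t)).const_add y₀
  simp only [id_eq, one_smul] at h
  refine h.congr_deriv ?_
  module

theorem hga3d1 (hH : ContDiff ℝ (⊤:ℕ∞) H) (t : ℝ) :
    HasDerivAt (ga3d1 J H y₀) (ga3d2 J H y₀ t) t := by
  unfold ga3d1 ga3d2
  have h := (hv3 (J := J) (y₀ := y₀) hH t).add ((hasDerivAt_id t).smul (hv3d1 (J := J) (y₀ := y₀) hH t))
  simp only [id_eq, one_smul] at h
  refine h.congr_deriv ?_
  module

theorem hga3d2 (hH : ContDiff ℝ (⊤:ℕ∞) H) (t : ℝ) :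
    HasDerivAt (ga3d2 J H y₀) (ga3d3 J H y₀ t) t := by
  unfold ga3d2 ga3d3
  have h := ((hv3d1 (J := J) (y₀ := y₀) hH t).const_smul (2:ℝ)).add ((hasDerivAt_id t).smul (hv3d2 (J := J) (y₀ := y₀) hH t))
  simp only [id_eq, one_smul] at h
  refine h.congr_deriv ?_
  module

theorem hga3d3 (hH : ContDiff ℝ (⊤:ℕ∞) H) (t : ℝ) :
    HasDerivAt (ga3d3 J H y₀) (ga3d4 J H y₀ t) t := by
  unfold ga3d3 ga3d4
  have h := ((hv3d2 (J := J) (y₀ := y₀) hH t).const_smul (3:ℝ)).add ((hasDerivAt_id t).smul (hv3d3 (J := J) (y₀ := y₀) hH t))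
  simp only [id_eq, one_smul] at h
  refine h.congr_deriv ?_
  module

theorem hk3 (hH : ContDiff ℝ (⊤:ℕ∞) H) (t : ℝ) :
    HasDerivAt (k3 J H y₀) (k3d1 J H y₀ t) t := by
  unfold k3 k3d1
  exact (Jc J).hasFDerivAt.comp_hasDerivAt t (hasDerivAt_gv1_comp hH (hga3 hH t))

theorem hk3d1 (hH : ContDiff ℝ (⊤:ℕ∞) H) (t : ℝ) :
    HasDerivAt (k3d1 J H y₀) (k3d2 J H y₀ t) t := by
  unfold k3d1 k3d2
  exact (Jc J).hasFDerivAt.comp_hasDerivAt t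
    (hasDerivAt_gv2_comp hH (hga3 hH t) (hga3d1 hH t))

theorem hk3d2 (hH : ContDiff ℝ (⊤:ℕ∞) H) (t : ℝ) :
    HasDerivAt (k3d2 J H y₀) (k3d3 J H y₀ t) t := by
  unfold k3d2 k3d3
  exact (Jc J).hasFDerivAt.comp_hasDerivAt t
    ((hasDerivAt_gv3_comp hH (hga3 hH t) (hga3d1 hH t) (hga3d1 hH t)).add
      (hasDerivAt_gv2_comp hH (hga3 hH t) (hga3d2 hH t)))

theorem hk3d3 (hH : ContDiff ℝ (⊤:ℕ∞) H) (t : ℝ) :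
    HasDerivAt (k3d3 J H y₀) (k3d4 J H y₀ t) t := by
  unfold k3d3 k3d4
  exact (Jc J).hasFDerivAt.comp_hasDerivAt t
    ((((hasDerivAt_gv4_comp hH (hga3 hH t) (hga3d1 hH t) (hga3d1 hH t) (hga3d1 hH t)).add
        (hasDerivAt_gv3_comp hH (hga3 hH t) (hga3d2 hH t) (hga3d1 hH t))).add
      (hasDerivAt_gv3_comp hH (hga3 hH t) (hga3d1 hH t) (hga3d2 hH t))).add
      ((hasDerivAt_gv3_comp hH (hga3 hH t) (hga3d1 hH t) (hga3d2 hH t)).add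
        (hasDerivAt_gv2_comp hH (hga3 hH t) (hga3d3 hH t))))

theorem hvu (hH : ContDiff ℝ (⊤:ℕ∞) H) (t : ℝ) :
    HasDerivAt (vu J H y₀) (vud1 J H y₀ t) t := by
  unfold vu vud1
  exact (((hk2 hH t).const_smul (1/2 : ℝ)).const_add _).add ((hk3 hH t).const_smul (2/5 : ℝ))

theorem hvud1 (hH : ContDiff ℝ (⊤:ℕ∞) H) (t : ℝ) :
    HasDerivAt (vud1 J H y₀) (vud2 J H y₀ t) t := by
  unfold vud1 vud2
  exact ((hk2d1 hH t).const_smul (1/2 : ℝ)).add ((hk3d1 hH t).const_smul (2/5 : ℝ))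

theorem hvud2 (hH : ContDiff ℝ (⊤:ℕ∞) H) (t : ℝ) :
    HasDerivAt (vud2 J H y₀) (vud3 J H y₀ t) t := by
  unfold vud2 vud3
  exact ((hk2d2 hH t).const_smul (1/2 : ℝ)).add ((hk3d2 hH t).const_smul (2/5 : ℝ))

theorem hvud3 (hH : ContDiff ℝ (⊤:ℕ∞) H) (t : ℝ) :
    HasDerivAt (vud3 J H y₀) (vud4 J H y₀ t) t := by
  unfold vud3 vud4
  exact ((hk2d3 hH t).const_smul (1/2 : ℝ)).add ((hk3d3 hH t).const_smul (2/5 : ℝ))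

theorem huu (hH : ContDiff ℝ (⊤:ℕ∞) H) (t : ℝ) :
    HasDerivAt (uu J H y₀) (ud1 J H y₀ t) t := by
  unfold uu ud1
  have h := ((hasDerivAt_id t).smul (hvu (J := J) (y₀ := y₀) hH t)).const_add y₀
  simp only [id_eq, one_smul] at h
  refine h.congr_deriv ?_
  module

theorem hud1 (hH : ContDiff ℝ (⊤:ℕ∞) H) (t : ℝ) :
    HasDerivAt (ud1 J H y₀) (ud2 J H y₀ t) t := by
  unfold ud1 ud2
  have h := (hvu (J := J) (y₀ := y₀) hH t).add ((hasDerivAt_id t).smul (hvud1 (J := J) (y₀ := y₀) hH t))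
  simp only [id_eq, one_smul] at h
  refine h.congr_deriv ?_
  module

theorem hud2 (hH : ContDiff ℝ (⊤:ℕ∞) H) (t : ℝ) :
    HasDerivAt (ud2 J H y₀) (ud3 J H y₀ t) t := by
  unfold ud2 ud3
  have h := ((hvud1 (J := J) (y₀ := y₀) hH t).const_smul (2:ℝ)).add ((hasDerivAt_id t).smul (hvud2 (J := J) (y₀ := y₀) hH t))
  simp only [id_eq, one_smul] at h
  refine h.congr_deriv ?_
  module

theorem hud3 (hH : ContDiff ℝ (⊤:ℕ∞) H) (t : ℝ) :
    HasDerivAt (ud3 J H y₀) (ud4 J H y₀ t) t := by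
  unfold ud3 ud4
  have h := ((hvud2 (J := J) (y₀ := y₀) hH t).const_smul (3:ℝ)).add ((hasDerivAt_id t).smul (hvud3 (J := J) (y₀ := y₀) hH t))
  simp only [id_eq, one_smul] at h
  refine h.congr_deriv ?_
  module

end curvederiv

section gg

variable (J : Matrix (Fin n) (Fin n) ℝ) (H : (Fin n → ℝ) → ℝ) (y₀ : Fin n → ℝ)

noncomputable def gg (t : ℝ) : ℝ := H (uu J H y₀ t)
noncomputable def gg1 (t : ℝ) : ℝ := D1 H (uu J H y₀ t) (ud1 J H y₀ t)
noncomputable def gg2 (t : ℝ) : ℝ :=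
  D2 H (uu J H y₀ t) (ud1 J H y₀ t) (ud1 J H y₀ t) + D1 H (uu J H y₀ t) (ud2 J H y₀ t)
noncomputable def gg3 (t : ℝ) : ℝ :=
  D3 H (uu J H y₀ t) (ud1 J H y₀ t) (ud1 J H y₀ t) (ud1 J H y₀ t)
    + D2 H (uu J H y₀ t) (ud2 J H y₀ t) (ud1 J H y₀ t)
    + 2 * D2 H (uu J H y₀ t) (ud1 J H y₀ t) (ud2 J H y₀ t)
    + D1 H (uu J H y₀ t) (ud3 J H y₀ t)
noncomputable def gg4 (t : ℝ) : ℝ :=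
  D4 H (uu J H y₀ t) (ud1 J H y₀ t) (ud1 J H y₀ t) (ud1 J H y₀ t) (ud1 J H y₀ t)
    + D3 H (uu J H y₀ t) (ud2 J H y₀ t) (ud1 J H y₀ t) (ud1 J H y₀ t)
    + 2 * D3 H (uu J H y₀ t) (ud1 J H y₀ t) (ud2 J H y₀ t) (ud1 J H y₀ t)
    + 3 * D3 H (uu J H y₀ t) (ud1 J H y₀ t) (ud1 J H y₀ t) (ud2 J H y₀ t)
    + D2 H (uu J H y₀ t) (ud3 J H y₀ t) (ud1 J H y₀ t)
    + 3 * D2 H (uu J H y₀ t) (ud2 J H y₀ t) (ud2 J H y₀ t)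
    + 3 * D2 H (uu J H y₀ t) (ud1 J H y₀ t) (ud3 J H y₀ t)
    + D1 H (uu J H y₀ t) (ud4 J H y₀ t)

variable {J y₀}

theorem hgg (hH : ContDiff ℝ (⊤:ℕ∞) H) (t : ℝ) :
    HasDerivAt (gg J H y₀) (gg1 J H y₀ t) t := by
  unfold gg gg1
  exact ((hH.differentiable one_le_top (uu J H y₀ t)).hasFDerivAt).comp_hasDerivAt t
    (huu (J := J) (y₀ := y₀) hH t)

theorem hgg1 (hH : ContDiff ℝ (⊤:ℕ∞) H) (t : ℝ) :
    HasDerivAt (gg1 J H y₀) (gg2 J H y₀ t) t := by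
  unfold gg1 gg2
  have h := ((hD1 hH (uu J H y₀ t)).comp_hasDerivAt t
      (huu (J := J) (y₀ := y₀) hH t)).clm_apply (hud1 (J := J) (y₀ := y₀) hH t)
  exact h

theorem hgg2 (hH : ContDiff ℝ (⊤:ℕ∞) H) (t : ℝ) :
    HasDerivAt (gg2 J H y₀) (gg3 J H y₀ t) t := by
  unfold gg2 gg3
  have huu' := huu (J := J) (y₀ := y₀) hH t
  have h1 := (((hD2 hH (uu J H y₀ t)).comp_hasDerivAt t huu').clm_apply (G := ((Fin n → ℝ) →L[ℝ] ℝ))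
      (hud1 (J := J) (y₀ := y₀) hH t)).clm_apply (G := ℝ) (hud1 (J := J) (y₀ := y₀) hH t)
  have h2 := ((hD1 hH (uu J H y₀ t)).comp_hasDerivAt t huu').clm_apply
      (hud2 (J := J) (y₀ := y₀) hH t)
  have h := h1.add h2
  refine h.congr_deriv ?_
  simp only [Function.comp_apply, ContinuousLinearMap.add_apply]
  ring

theorem hgg3 (hH : ContDiff ℝ (⊤:ℕ∞) H) (t : ℝ) :
    HasDerivAt (gg3 J H y₀) (gg4 J H y₀ t) t := by
  unfold gg3 gg4
  have huu' := huu (J := J) (y₀ := y₀) hH t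
  have h1' := hud1 (J := J) (y₀ := y₀) hH t
  have h2' := hud2 (J := J) (y₀ := y₀) hH t
  have h3' := hud3 (J := J) (y₀ := y₀) hH t
  have A := ((((hD3 hH (uu J H y₀ t)).comp_hasDerivAt t huu').clm_apply (G := ((Fin n → ℝ) →L[ℝ] (Fin n → ℝ) →L[ℝ] ℝ)) h1').clm_apply
      (G := ((Fin n → ℝ) →L[ℝ] ℝ)) h1').clm_apply (G := ℝ) h1'
  have B := (((hD2 hH (uu J H y₀ t)).comp_hasDerivAt t huu').clm_apply (G := ((Fin n → ℝ) →L[ℝ] ℝ)) h2').clm_apply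
      (G := ℝ) h1'
  have C := ((((hD2 hH (uu J H y₀ t)).comp_hasDerivAt t huu').clm_apply (G := ((Fin n → ℝ) →L[ℝ] ℝ)) h1').clm_apply
      (G := ℝ) h2').const_mul (2:ℝ)
  have D := ((hD1 hH (uu J H y₀ t)).comp_hasDerivAt t huu').clm_apply h3'
  have h := ((A.add B).add C).add D
  refine h.congr_deriv ?_
  simp only [Function.comp_apply, ContinuousLinearMap.add_apply]
  ring

end gg

section diff

variable {J : Matrix (Fin n) (Fin n) ℝ} {y₀ : Fin n → ℝ}

theorem dgv2_comp (hH : ContDiff ℝ (⊤:ℕ∞) H) {γ a : ℝ → Fin n → ℝ} {t : ℝ}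
    (hγ : DifferentiableAt ℝ γ t) (ha : DifferentiableAt ℝ a t) :
    DifferentiableAt ℝ (fun s => gv2 H (γ s) (a s)) t := by
  rw [differentiableAt_pi]
  intro i
  have hconst : DifferentiableAt ℝ (fun _ : ℝ => (Pi.single i (1:ℝ) : Fin n → ℝ)) t :=
    differentiableAt_const _
  exact (((((cD2 hH).differentiable one_le_top).differentiableAt.comp t
    hγ).clm_apply ha).clm_apply hconst)

theorem dgv3_comp (hH : ContDiff ℝ (⊤:ℕ∞) H) {γ a b : ℝ → Fin n → ℝ} {t : ℝ}
    (hγ : DifferentiableAt ℝ γ t) (ha : DifferentiableAt ℝ a t)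
    (hb : DifferentiableAt ℝ b t) :
    DifferentiableAt ℝ (fun s => gv3 H (γ s) (a s) (b s)) t := by
  rw [differentiableAt_pi]
  intro i
  have hconst : DifferentiableAt ℝ (fun _ : ℝ => (Pi.single i (1:ℝ) : Fin n → ℝ)) t :=
    differentiableAt_const _
  exact ((((((cD3 hH).differentiable one_le_top).differentiableAt.comp t
    hγ).clm_apply ha).clm_apply hb).clm_apply hconst)

theorem dgv4_comp (hH : ContDiff ℝ (⊤:ℕ∞) H) {γ a b c : ℝ → Fin n → ℝ} {t : ℝ}
    (hγ : DifferentiableAt ℝ γ t) (ha : DifferentiableAt ℝ a t)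
    (hb : DifferentiableAt ℝ b t) (hc : DifferentiableAt ℝ c t) :
    DifferentiableAt ℝ (fun s => gv4 H (γ s) (a s) (b s) (c s)) t := by
  rw [differentiableAt_pi]
  intro i
  have hconst : DifferentiableAt ℝ (fun _ : ℝ => (Pi.single i (1:ℝ) : Fin n → ℝ)) t :=
    differentiableAt_const _
  exact (((((((cD4 hH).differentiable one_le_top).differentiableAt.comp t
    hγ).clm_apply ha).clm_apply hb).clm_apply hc).clm_apply hconst)

theorem dk2d4 (hH : ContDiff ℝ (⊤:ℕ∞) H) (t : ℝ) :
    DifferentiableAt ℝ (k2d4 J H y₀) t := by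
  unfold k2d4
  exact ((Jc J).differentiable.differentiableAt).comp t
    (differentiableAt_gv5_comp hH (hga2 J H y₀ t).differentiableAt
      (differentiableAt_const _) (differentiableAt_const _) (differentiableAt_const _)
      (differentiableAt_const _))

theorem dga3d4 (hH : ContDiff ℝ (⊤:ℕ∞) H) (t : ℝ) :
    DifferentiableAt ℝ (ga3d4 J H y₀) t := by
  unfold ga3d4 v3d4
  exact (((hv3d3 (J := J) (y₀ := y₀) hH t).differentiableAt).const_smul (4:ℝ)).add
    (differentiableAt_id.smul ((dk2d4 hH t).const_smul (15/16 : ℝ)))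

theorem dk3d4 (hH : ContDiff ℝ (⊤:ℕ∞) H) (t : ℝ) :
    DifferentiableAt ℝ (k3d4 J H y₀) t := by
  unfold k3d4
  have h0 := (hga3 (J := J) (y₀ := y₀) hH t).differentiableAt
  have h1 := (hga3d1 (J := J) (y₀ := y₀) hH t).differentiableAt
  have h2 := (hga3d2 (J := J) (y₀ := y₀) hH t).differentiableAt
  have h3 := (hga3d3 (J := J) (y₀ := y₀) hH t).differentiableAt
  have h4 := dga3d4 (J := J) (y₀ := y₀) hH t
  have hgv5 : DifferentiableAt ℝ (fun s => gv5 H (ga3 J H y₀ s) (ga3d1 J H y₀ s)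
      (ga3d1 J H y₀ s) (ga3d1 J H y₀ s) (ga3d1 J H y₀ s)) t :=
    differentiableAt_gv5_comp hH h0 h1 h1 h1 h1
  exact ((Jc J).differentiable.differentiableAt).comp t
    ((((hgv5.add (dgv4_comp hH h0 h2 h1 h1)).add (dgv4_comp hH h0 h1 h2 h1)).add
        (dgv4_comp hH h0 h1 h1 h2)).add
      (((dgv4_comp hH h0 h1 h2 h1).add (dgv3_comp hH h0 h3 h1)).add
        (dgv3_comp hH h0 h2 h2)) |>.add
      (((dgv4_comp hH h0 h1 h1 h2).add (dgv3_comp hH h0 h2 h2)).add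
        (dgv3_comp hH h0 h1 h3)) |>.add
      ((((dgv4_comp hH h0 h1 h1 h2).add (dgv3_comp hH h0 h2 h2)).add
        (dgv3_comp hH h0 h1 h3)).add
       ((dgv3_comp hH h0 h1 h3).add (dgv2_comp hH h0 h4))))

theorem dud4 (hH : ContDiff ℝ (⊤:ℕ∞) H) (t : ℝ) :
    DifferentiableAt ℝ (ud4 J H y₀) t := by
  unfold ud4 vud4
  exact (((hvud3 (J := J) (y₀ := y₀) hH t).differentiableAt).const_smul (4:ℝ)).add
    (differentiableAt_id.smul
      (((dk2d4 hH t).const_smul (1/2 : ℝ)).add ((dk3d4 hH t).const_smul (2/5 : ℝ))))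

theorem dgg4 (hH : ContDiff ℝ (⊤:ℕ∞) H) (t : ℝ) :
    DifferentiableAt ℝ (gg4 J H y₀) t := by
  unfold gg4
  have h0 := (huu (J := J) (y₀ := y₀) hH t).differentiableAt
  have h1 := (hud1 (J := J) (y₀ := y₀) hH t).differentiableAt
  have h2 := (hud2 (J := J) (y₀ := y₀) hH t).differentiableAt
  have h3 := (hud3 (J := J) (y₀ := y₀) hH t).differentiableAt
  have h4 := dud4 (J := J) (y₀ := y₀) hH t
  have c1 := ((cD1 hH).differentiable one_le_top).differentiableAt (x := uu J H y₀ t)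
  have c2 := ((cD2 hH).differentiable one_le_top).differentiableAt (x := uu J H y₀ t)
  have c3 := ((cD3 hH).differentiable one_le_top).differentiableAt (x := uu J H y₀ t)
  have c4 := ((cD4 hH).differentiable one_le_top).differentiableAt (x := uu J H y₀ t)
  exact ((((((((((c4.comp t h0).clm_apply h1).clm_apply h1).clm_apply h1).clm_apply h1).add
    ((((c3.comp t h0).clm_apply h2).clm_apply h1).clm_apply h1)).add
    (((((c3.comp t h0).clm_apply h1).clm_apply h2).clm_apply h1).const_mul 2)).add
    (((((c3.comp t h0).clm_apply h1).clm_apply h1).clm_apply h2).const_mul 3)).add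
    (((c2.comp t h0).clm_apply h3).clm_apply h1)).add
    ((((c2.comp t h0).clm_apply h2).clm_apply h2).const_mul 3)).add
    ((((c2.comp t h0).clm_apply h1).clm_apply h3).const_mul 3) |>.add
    ((c1.comp t h0).clm_apply h4)

end diff

section eval

variable (J : Matrix (Fin n) (Fin n) ℝ) (H : (Fin n → ℝ) → ℝ) (y₀ : Fin n → ℝ)

noncomputable def P2 : Fin n → ℝ := gv2 H y₀ (Fv J H y₀)
noncomputable def Qv : Fin n → ℝ := Jc J (P2 J H y₀)
noncomputable def P3 : Fin n → ℝ := gv3 H y₀ (Fv J H y₀) (Fv J H y₀)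
noncomputable def Rv : Fin n → ℝ := Jc J (P3 J H y₀)
noncomputable def S2 : Fin n → ℝ := gv2 H y₀ (Qv J H y₀)
noncomputable def Sv : Fin n → ℝ := Jc J (S2 J H y₀)
noncomputable def P4 : Fin n → ℝ := gv4 H y₀ (Fv J H y₀) (Fv J H y₀) (Fv J H y₀)
noncomputable def Tv : Fin n → ℝ := Jc J (P4 J H y₀)
noncomputable def W1 : Fin n → ℝ := Jc J (gv3 H y₀ (Qv J H y₀) (Fv J H y₀))
noncomputable def W2 : Fin n → ℝ := Jc J (gv3 H y₀ (Fv J H y₀) (Qv J H y₀))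
noncomputable def W3 : Fin n → ℝ := Jc J (gv2 H y₀ (Rv J H y₀))

@[simp] theorem ga2_0 : ga2 J H y₀ 0 = y₀ := by simp [ga2]
@[simp] theorem k2_0 : k2 J H y₀ 0 = Fv J H y₀ := by simp [k2, Fv]
theorem k2d1_0 : k2d1 J H y₀ 0 = (1/3 : ℝ) • Qv J H y₀ := by
  simp only [k2d1, ga2_0, CF, gv2_smul, _root_.map_smul, Qv, P2]
theorem k2d2_0 : k2d2 J H y₀ 0 = (1/9 : ℝ) • Rv J H y₀ := by
  simp only [k2d2, ga2_0, CF, gv3_smul₁, gv3_smul₂, _root_.map_smul, Rv, P3, smul_smul]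
  norm_num
theorem k2d3_0 : k2d3 J H y₀ 0 = (1/27 : ℝ) • Tv J H y₀ := by
  simp only [k2d3, ga2_0, CF, gv4_smul₁, gv4_smul₂, gv4_smul₃, _root_.map_smul, Tv, P4, smul_smul]
  norm_num
theorem v3_0 : v3 J H y₀ 0 = (5/6 : ℝ) • Fv J H y₀ := by
  simp only [v3, k2_0]; module
theorem v3d1_0 : v3d1 J H y₀ 0 = (5/16 : ℝ) • Qv J H y₀ := by
  simp only [v3d1, k2d1_0, smul_smul]; norm_num
theorem v3d2_0 : v3d2 J H y₀ 0 = (5/48 : ℝ) • Rv J H y₀ := by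
  simp only [v3d2, k2d2_0, smul_smul]; norm_num
@[simp] theorem ga3_0 : ga3 J H y₀ 0 = y₀ := by simp [ga3]
theorem ga3d1_0 : ga3d1 J H y₀ 0 = (5/6 : ℝ) • Fv J H y₀ := by
  simp only [ga3d1, v3_0, zero_smul, add_zero]
theorem ga3d2_0 : ga3d2 J H y₀ 0 = (5/8 : ℝ) • Qv J H y₀ := by
  simp only [ga3d2, v3d1_0, zero_smul, add_zero, smul_smul]; norm_num
theorem ga3d3_0 : ga3d3 J H y₀ 0 = (5/16 : ℝ) • Rv J H y₀ := by
  simp only [ga3d3, v3d2_0, zero_smul, add_zero, smul_smul]; norm_num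
@[simp] theorem k3_0 : k3 J H y₀ 0 = Fv J H y₀ := by simp [k3, Fv]
theorem k3d1_0 : k3d1 J H y₀ 0 = (5/6 : ℝ) • Qv J H y₀ := by
  simp only [k3d1, ga3_0, ga3d1_0, gv2_smul, _root_.map_smul, Qv, P2]
theorem k3d2_0 : k3d2 J H y₀ 0 = (25/36 : ℝ) • Rv J H y₀ + (5/8 : ℝ) • Sv J H y₀ := by
  simp only [k3d2, ga3_0, ga3d1_0, ga3d2_0, gv3_smul₁, gv3_smul₂, gv2_smul, _root_.map_add,
    _root_.map_smul, smul_smul, Rv, P3, Sv, S2]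
  module
theorem k3d3_0 : k3d3 J H y₀ 0 = (125/216 : ℝ) • Tv J H y₀ + (25/48 : ℝ) • W1 J H y₀
    + (25/24 : ℝ) • W2 J H y₀ + (5/16 : ℝ) • W3 J H y₀ := by
  simp only [k3d3, ga3_0, ga3d1_0, ga3d2_0, ga3d3_0, gv4_smul₁, gv4_smul₂, gv4_smul₃,
    gv3_smul₁, gv3_smul₂, gv2_smul, _root_.map_add, _root_.map_smul, smul_smul,
    Tv, P4, W1, W2, W3]
  module
theorem vu_0 : vu J H y₀ 0 = Fv J H y₀ := by
  simp only [vu, k2_0, k3_0]; module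
theorem vud1_0 : vud1 J H y₀ 0 = (1/2 : ℝ) • Qv J H y₀ := by
  simp only [vud1, k2d1_0, k3d1_0, smul_smul]; module
theorem vud2_0 : vud2 J H y₀ 0 = (1/3 : ℝ) • Rv J H y₀ + (1/4 : ℝ) • Sv J H y₀ := by
  simp only [vud2, k2d2_0, k3d2_0, smul_add, smul_smul]; module
theorem vud3_0 : vud3 J H y₀ 0 = (1/4 : ℝ) • Tv J H y₀ + (5/24 : ℝ) • W1 J H y₀
    + (5/12 : ℝ) • W2 J H y₀ + (1/8 : ℝ) • W3 J H y₀ := by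
  simp only [vud3, k2d3_0, k3d3_0, smul_add, smul_smul]; module
@[simp] theorem uu_0 : uu J H y₀ 0 = y₀ := by simp [uu]
theorem ud1_0 : ud1 J H y₀ 0 = Fv J H y₀ := by
  simp only [ud1, vu_0, zero_smul, add_zero]
theorem ud2_0 : ud2 J H y₀ 0 = Qv J H y₀ := by
  simp only [ud2, vud1_0, zero_smul, add_zero, smul_smul]; module
theorem ud3_0 : ud3 J H y₀ 0 = Rv J H y₀ + (3/4 : ℝ) • Sv J H y₀ := by
  simp only [ud3, vud2_0, zero_smul, add_zero, smul_add, smul_smul]; module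
theorem ud4_0 : ud4 J H y₀ 0 = Tv J H y₀ + (5/6 : ℝ) • W1 J H y₀
    + (5/3 : ℝ) • W2 J H y₀ + (1/2 : ℝ) • W3 J H y₀ := by
  simp only [ud4, vud3_0, zero_smul, add_zero, smul_add, smul_smul]; module

end eval

section zeros

variable {J : Matrix (Fin n) (Fin n) ℝ} {y₀ : Fin n → ℝ}

theorem hJG (hJ : Jᵀ = -J) (H : (Fin n → ℝ) → ℝ) (y₀ : Fin n → ℝ) (w : Fin n → ℝ) :
    Jc J w ⬝ᵥ gv1 H y₀ = -(w ⬝ᵥ Fv J H y₀) := by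
  rw [dotProduct_comm, skew1 hJ, Fv]

theorem gg1_0 (hJ : Jᵀ = -J) (H : (Fin n → ℝ) → ℝ) (y₀ : Fin n → ℝ) :
    gg1 J H y₀ 0 = 0 := by
  rw [gg1, uu_0, ud1_0, e1, Fv, dotProduct_comm]
  exact skew0 hJ _

theorem gg2_0 (hJ : Jᵀ = -J) (hH : ContDiff ℝ (⊤:ℕ∞) H) (y₀ : Fin n → ℝ) :
    gg2 J H y₀ 0 = 0 := by
  rw [gg2, uu_0, ud1_0, ud2_0, e2, e1, Qv, hJG hJ, P2, dotProduct_comm]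
  ring

theorem D2FQ_0 (hJ : Jᵀ = -J) (H : (Fin n → ℝ) → ℝ) (y₀ : Fin n → ℝ) :
    D2 H y₀ (Fv J H y₀) (Qv J H y₀) = 0 := by
  rw [e2, Qv, dotProduct_comm, P2]
  exact skew0 hJ _

theorem D2QF_0 (hJ : Jᵀ = -J) (hH : ContDiff ℝ (⊤:ℕ∞) H) (y₀ : Fin n → ℝ) :
    D2 H y₀ (Qv J H y₀) (Fv J H y₀) = 0 := by
  rw [sym2 hH]
  exact D2FQ_0 hJ H y₀

theorem D1R (hJ : Jᵀ = -J) (H : (Fin n → ℝ) → ℝ) (y₀ : Fin n → ℝ) :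
    D1 H y₀ (Rv J H y₀) = -(D3 H y₀ (Fv J H y₀) (Fv J H y₀) (Fv J H y₀)) := by
  rw [e1, e3, Rv, hJG hJ, P3, dotProduct_comm]

theorem D1S (hJ : Jᵀ = -J) (hH : ContDiff ℝ (⊤:ℕ∞) H) (y₀ : Fin n → ℝ) :
    D1 H y₀ (Sv J H y₀) = 0 := by
  have h := D2QF_0 hJ hH y₀
  rw [e2] at h
  rw [e1, Sv, hJG hJ, S2, dotProduct_comm, ← e2]
  · rw [sym2 hH, D2FQ_0 hJ H y₀]
    ring

theorem gg3_0 (hJ : Jᵀ = -J) (hH : ContDiff ℝ (⊤:ℕ∞) H) (y₀ : Fin n → ℝ) :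
    gg3 J H y₀ 0 = 0 := by
  rw [gg3, uu_0, ud1_0, ud2_0, ud3_0, _root_.map_add, _root_.map_smul,
    D2QF_0 hJ hH y₀, D2FQ_0 hJ H y₀, D1R hJ H y₀, smul_eq_mul, D1S hJ hH y₀]
  ring

theorem D3FFQ (hJ : Jᵀ = -J) (hH : ContDiff ℝ (⊤:ℕ∞) H) (y₀ : Fin n → ℝ) :
    D3 H y₀ (Fv J H y₀) (Fv J H y₀) (Qv J H y₀) = -(D2 H y₀ (Fv J H y₀) (Rv J H y₀)) := by
  rw [e3, e2, Qv, dotProduct_comm, skew1 hJ, dotProduct_comm, Rv, P3, P2]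

theorem D2FS (hJ : Jᵀ = -J) (hH : ContDiff ℝ (⊤:ℕ∞) H) (y₀ : Fin n → ℝ) :
    D2 H y₀ (Fv J H y₀) (Sv J H y₀) = -(D2 H y₀ (Qv J H y₀) (Qv J H y₀)) := by
  rw [e2, e2, Sv, dotProduct_comm, skew1 hJ, dotProduct_comm, S2, Qv, P2]

theorem D1Tv (hJ : Jᵀ = -J) (hH : ContDiff ℝ (⊤:ℕ∞) H) (y₀ : Fin n → ℝ) :
    D1 H y₀ (Tv J H y₀) = -(D4 H y₀ (Fv J H y₀) (Fv J H y₀) (Fv J H y₀) (Fv J H y₀)) := by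
  rw [e1, e4, Tv, hJG hJ, P4, dotProduct_comm]

theorem D1W1 (hJ : Jᵀ = -J) (hH : ContDiff ℝ (⊤:ℕ∞) H) (y₀ : Fin n → ℝ) :
    D1 H y₀ (W1 J H y₀) = -(D3 H y₀ (Qv J H y₀) (Fv J H y₀) (Fv J H y₀)) := by
  rw [e1, e3, W1, hJG hJ, dotProduct_comm]

theorem D1W2 (hJ : Jᵀ = -J) (hH : ContDiff ℝ (⊤:ℕ∞) H) (y₀ : Fin n → ℝ) :
    D1 H y₀ (W2 J H y₀) = -(D3 H y₀ (Fv J H y₀) (Qv J H y₀) (Fv J H y₀)) := by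
  rw [e1, e3, W2, hJG hJ, dotProduct_comm]

theorem D1W3 (hJ : Jᵀ = -J) (hH : ContDiff ℝ (⊤:ℕ∞) H) (y₀ : Fin n → ℝ) :
    D1 H y₀ (W3 J H y₀) = -(D2 H y₀ (Rv J H y₀) (Fv J H y₀)) := by
  rw [e1, e2, W3, hJG hJ, dotProduct_comm]

theorem gg4_0 (hJ : Jᵀ = -J) (hH : ContDiff ℝ (⊤:ℕ∞) H) (y₀ : Fin n → ℝ) :
    gg4 J H y₀ 0 = 0 := by
  rw [gg4, uu_0, ud1_0, ud2_0, ud3_0, ud4_0]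
  simp only [_root_.map_add, _root_.map_smul, ContinuousLinearMap.add_apply,
    ContinuousLinearMap.coe_smul', Pi.smul_apply, smul_eq_mul]
  rw [D1Tv hJ hH y₀, D1W1 hJ hH y₀, D1W2 hJ hH y₀, D1W3 hJ hH y₀]
  rw [sym3a hH y₀ (Qv J H y₀) (Fv J H y₀) (Fv J H y₀),
    sym3b hH y₀ (Fv J H y₀) (Qv J H y₀) (Fv J H y₀)]
  rw [sym2 hH y₀ (Rv J H y₀) (Fv J H y₀)]
  rw [D3FFQ hJ hH y₀, D2FS hJ hH y₀]
  rw [sym2 hH y₀ (Sv J H y₀) (Fv J H y₀), D2FS hJ hH y₀]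
  ring

end zeros

theorem key {J : Matrix (Fin n) (Fin n) ℝ} (hJ : Jᵀ = -J)
    (hH : ContDiff ℝ (⊤:ℕ∞) H) (y₀ : Fin n → ℝ) :
    (fun h : ℝ => H (uu J H y₀ h) - H y₀) =O[𝓝 (0:ℝ)] fun h => h ^ 5 := by
  have o1 : gg4 J H y₀ =O[𝓝 (0:ℝ)] fun h => h ^ 1 :=
    baseO (dgg4 hH 0) (gg4_0 hJ hH y₀)
  have o2 : gg3 J H y₀ =O[𝓝 (0:ℝ)] fun h => h ^ 2 :=
    chainO (fun t => hgg3 (J := J) (y₀ := y₀) H hH t) (gg3_0 hJ hH y₀) o1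
  have o3 : gg2 J H y₀ =O[𝓝 (0:ℝ)] fun h => h ^ 3 :=
    chainO (fun t => hgg2 (J := J) (y₀ := y₀) H hH t) (gg2_0 hJ hH y₀) o2
  have o4 : gg1 J H y₀ =O[𝓝 (0:ℝ)] fun h => h ^ 4 :=
    chainO (fun t => hgg1 (J := J) (y₀ := y₀) H hH t) (gg1_0 hJ H y₀) o3
  have o5 : (fun t => gg J H y₀ t - H y₀) =O[𝓝 (0:ℝ)] fun h => h ^ 5 :=
    chainO (fun t => (hgg (J := J) (y₀ := y₀) H hH t).sub_const (H y₀))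
      (by simp [gg]) o4
  exact o5

end PEP324

/-- The three-stage explicit Runge--Kutta method with `a₂₁ = 1/3`, `a₃₁ = −5/48`,
`a₃₂ = 15/16`, `c = (0, 1/3, 5/6)`, `b = (1/10, 1/2, 2/5)` has
pseudo-energy-preserving order at least 4: the energy error after one step is
`O(h⁵)` for every Hamiltonian system. -/
theorem pep324_method (A : Matrix (Fin 3) (Fin 3) ℝ) (b c : Fin 3 → ℝ)
    (hA : A = !![0, 0, 0; 1/3, 0, 0; -5/48, 15/16, 0])
    (hb : b = ![1/10, 1/2, 2/5]) (hc : c = ![0, 1/3, 5/6]) :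
    ∀ (n : ℕ) (J : Matrix (Fin n) (Fin n) ℝ), Jᵀ = -J →
      ∀ (H : (Fin n → ℝ) → ℝ), ContDiff ℝ (⊤ : ℕ∞) H →
        ∀ y₀ : Fin n → ℝ,
          (fun h => H (rkStep A b (fun y => J.mulVec (grad H y)) h y₀) - H y₀)
            =O[𝓝 (0 : ℝ)] (fun h => h ^ 5) := by
  subst hA hb
  intro n J hJ H hH y₀
  set f : (Fin n → ℝ) → (Fin n → ℝ) := fun y => J.mulVec (grad H y) with hf
  have hfv : ∀ y, f y = PEP324.Jc J (PEP324.gv1 H y) := fun y => rfl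
  set A : Matrix (Fin 3) (Fin 3) ℝ := !![0, 0, 0; 1/3, 0, 0; -5/48, 15/16, 0] with hA
  set bv : Fin 3 → ℝ := ![1/10, 1/2, 2/5] with hbv
  have hA10 : A 1 0 = 1/3 := by simp [hA]
  have hA20 : A 2 0 = -5/48 := by simp [hA]
  have hA21 : A 2 1 = 15/16 := by simp [hA]
  have st0 : ∀ h : ℝ, rkStages A f h y₀ 0 = PEP324.Fv J H y₀ := by
    intro h
    rw [rkStages, hfv]
    have harg : (fun m => y₀ m + h * ∑ j : Fin 3,
        if _ : (j : ℕ) < ((0 : Fin 3) : ℕ) then A 0 j * rkStages A f h y₀ j m else 0)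
        = y₀ := by
      funext m
      simp
    rw [harg]
    rfl
  have st1 : ∀ h : ℝ, rkStages A f h y₀ 1 = PEP324.k2 J H y₀ h := by
    intro h
    rw [rkStages, hfv]
    have harg : (fun m => y₀ m + h * ∑ j : Fin 3,
        if _ : (j : ℕ) < ((1 : Fin 3) : ℕ) then A 1 j * rkStages A f h y₀ j m else 0)
        = PEP324.ga2 J H y₀ h := by
      funext m
      rw [Fin.sum_univ_three]
      rw [dif_pos (by norm_num), dif_neg (by norm_num), dif_neg (by norm_num)]
      rw [st0 h, hA10]
      simp only [PEP324.ga2, PEP324.CF, Pi.add_apply, Pi.smul_apply, smul_eq_mul]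
      ring
    rw [harg]
    rfl
  have st2 : ∀ h : ℝ, rkStages A f h y₀ 2 = PEP324.k3 J H y₀ h := by
    intro h
    rw [rkStages, hfv]
    have harg : (fun m => y₀ m + h * ∑ j : Fin 3,
        if _ : (j : ℕ) < ((2 : Fin 3) : ℕ) then A 2 j * rkStages A f h y₀ j m else 0)
        = PEP324.ga3 J H y₀ h := by
      funext m
      rw [Fin.sum_univ_three]
      rw [dif_pos (by norm_num), dif_pos (by norm_num), dif_neg (by norm_num)]
      rw [st0 h, st1 h, hA20, hA21]
      simp only [PEP324.ga3, PEP324.v3, Pi.add_apply, Pi.smul_apply, smul_eq_mul]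
      ring
    rw [harg]
    rfl
  have hstep : ∀ h : ℝ, rkStep A bv f h y₀ = PEP324.uu J H y₀ h := by
    intro h
    funext m
    rw [rkStep, Fin.sum_univ_three, st0 h, st1 h, st2 h]
    simp only [hbv, PEP324.uu, PEP324.vu, Pi.add_apply, Pi.smul_apply, smul_eq_mul,
      Matrix.cons_val_zero, Matrix.cons_val_one, Matrix.head_cons,
      Matrix.cons_val_two, Matrix.tail_cons]
  have hgoal : (fun h : ℝ => H (rkStep A bv f h y₀) - H y₀)
      = fun h : ℝ => H (PEP324.uu J H y₀ h) - H y₀ := by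
    funext h
    rw [hstep h]
  rw [hgoal]
  exact PEP324.key hJ hH y₀
end

section
/- Let D₁, D₂ ∈ ℝ^{N×N} satisfy D₁ᵀ = −D₁, D₂ᵀ = D₂, D₁D₂ = D₂D₁, and let I − D₂ be invertible. Then the matrix B = (I − D₂)^{-1} D₁ is skew-symmetric, and consequently, for every solution u : I → ℝᴺ of the semidiscrete BBM system u'(t) = −(I − D₂)^{-1} D₁ ( (1/2) u(t)∘u(t) + u(t) ), where ∘ denotes the componentwise (Hadamard) product, the discrete Hamiltonian H(u) = ∑_{i=1}^{N} ( (1/2) u_i² + (1/6) u_i³ ) is constant in time. -/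
open Matrix

private lemma skew_dot {N : ℕ} (B : Matrix (Fin N) (Fin N) ℝ) (hB : Bᵀ = -B)
    (x : Fin N → ℝ) : x ⬝ᵥ B *ᵥ x = 0 := by
  have h : x ⬝ᵥ B *ᵥ x = -(x ⬝ᵥ B *ᵥ x) := by
    calc x ⬝ᵥ B *ᵥ x = x ᵥ* B ⬝ᵥ x := by rw [dotProduct_mulVec]
    _ = (Bᵀ *ᵥ x) ⬝ᵥ x := by rw [← vecMul_transpose, transpose_transpose]
    _ = ((-B) *ᵥ x) ⬝ᵥ x := by rw [hB]
    _ = -((B *ᵥ x) ⬝ᵥ x) := by rw [neg_mulVec, neg_dotProduct]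
    _ = -(x ⬝ᵥ B *ᵥ x) := by rw [dotProduct_comm]
  linarith

/-- For the conservative semidiscretization of the BBM equation: if `D₁` is
skew-symmetric, `D₂` is symmetric, they commute, and `I − D₂` is invertible, then
`B = (I − D₂)⁻¹ D₁` is skew-symmetric, and hence the discrete Hamiltonian
`H(u) = ∑ᵢ (u_i²/2 + u_i³/6)` is constant along every solution of
`u' = −B((1/2) u∘u + u)` on an interval. -/
theorem bbm_semidiscretization_conserves_energy {N : ℕ}
    (D₁ D₂ : Matrix (Fin N) (Fin N) ℝ)
    (h₁ : D₁ᵀ = -D₁) (h₂ : D₂ᵀ = D₂) (hcomm : D₁ * D₂ = D₂ * D₁)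
    (hinv : IsUnit (1 - D₂)) :
    ((1 - D₂)⁻¹ * D₁)ᵀ = -((1 - D₂)⁻¹ * D₁) ∧
    ∀ (I : Set ℝ), I.OrdConnected →
      ∀ u : ℝ → (Fin N → ℝ),
        (∀ t ∈ I, HasDerivAt u
          (-(((1 - D₂)⁻¹ * D₁).mulVec ((1 / 2 : ℝ) • (u t * u t) + u t))) t) →
        ∀ t ∈ I, ∀ s ∈ I,
          (∑ i, ((1 / 2) * (u t i) ^ 2 + (1 / 6) * (u t i) ^ 3))
            = ∑ i, ((1 / 2) * (u s i) ^ 2 + (1 / 6) * (u s i) ^ 3) := by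
  have hdet : IsUnit (1 - D₂).det := (isUnit_iff_isUnit_det _).mp hinv
  -- D₁ commutes with (1 - D₂)
  have hcomm' : D₁ * (1 - D₂) = (1 - D₂) * D₁ := by
    simp [mul_sub, sub_mul, hcomm]
  -- D₁ commutes with the inverse
  have hcomminv : D₁ * (1 - D₂)⁻¹ = (1 - D₂)⁻¹ * D₁ := by
    calc D₁ * (1 - D₂)⁻¹
        = (1 - D₂)⁻¹ * ((1 - D₂) * (D₁ * (1 - D₂)⁻¹)) := by
          rw [← Matrix.mul_assoc, Matrix.nonsing_inv_mul _ hdet, Matrix.one_mul]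
      _ = (1 - D₂)⁻¹ * ((1 - D₂) * D₁ * (1 - D₂)⁻¹) := by rw [Matrix.mul_assoc (1 - D₂)]
      _ = (1 - D₂)⁻¹ * (D₁ * (1 - D₂) * (1 - D₂)⁻¹) := by rw [hcomm']
      _ = (1 - D₂)⁻¹ * D₁ := by
          rw [Matrix.mul_assoc, Matrix.mul_nonsing_inv _ hdet, Matrix.mul_one]
  have hskew : ((1 - D₂)⁻¹ * D₁)ᵀ = -((1 - D₂)⁻¹ * D₁) := by
    rw [Matrix.transpose_mul, h₁, Matrix.transpose_nonsing_inv]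
    have ht : (1 - D₂)ᵀ = 1 - D₂ := by rw [Matrix.transpose_sub, Matrix.transpose_one, h₂]
    rw [ht, Matrix.neg_mul, hcomminv]
  refine ⟨hskew, ?_⟩
  intro I hI u hu
  set B := (1 - D₂)⁻¹ * D₁ with hBdef
  -- the Hamiltonian has derivative 0 on I
  set H : ℝ → ℝ := fun t => ∑ i, ((1 / 2) * (u t i) ^ 2 + (1 / 6) * (u t i) ^ 3) with hH
  have hderiv : ∀ t ∈ I, HasDerivAt H 0 t := by
    intro t ht
    have hu' := hu t ht
    set v : Fin N → ℝ := (1 / 2 : ℝ) • (u t * u t) + u t with hv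
    have hui : ∀ i, HasDerivAt (fun τ => u τ i) (-(B *ᵥ v) i) t := by
      intro i
      simpa using (hasDerivAt_pi.mp hu' i)
    have hterm : ∀ i, HasDerivAt
        (fun τ => (1 / 2) * (u τ i) ^ 2 + (1 / 6) * (u τ i) ^ 3)
        (v i * (-(B *ᵥ v) i)) t := by
      intro i
      have h1 := ((hui i).pow 2).const_mul (1 / 2 : ℝ)
      have h2 := ((hui i).pow 3).const_mul (1 / 6 : ℝ)
      have := h1.add h2
      refine this.congr_deriv ?_
      have : v i = (1 / 2) * (u t i * u t i) + u t i := by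
        simp [hv, Pi.smul_apply, Pi.mul_apply]
      rw [this]; ring
    have hsum : HasDerivAt H (∑ i, v i * (-(B *ᵥ v) i)) t :=
      HasDerivAt.fun_sum fun i _ => hterm i
    have hzero : (∑ i, v i * (-(B *ᵥ v) i)) = 0 := by
      have : (∑ i, v i * (-(B *ᵥ v) i)) = -(v ⬝ᵥ B *ᵥ v) := by
        simp [dotProduct, Finset.sum_neg_distrib]
      rw [this, skew_dot B hskew v, neg_zero]
    rwa [hzero] at hsum
  -- constancy on ord-connected sets
  have key : ∀ a ∈ I, ∀ b ∈ I, a ≤ b → H b = H a := by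
    intro a ha b hb hab
    have hsub : Set.Icc a b ⊆ I := hI.out ha hb
    have := constant_of_has_deriv_right_zero
      (f := H) (a := a) (b := b)
      (fun x hx => (hderiv x (hsub hx)).continuousAt.continuousWithinAt)
      (fun x hx => ((hderiv x (hsub ⟨hx.1, hx.2.le⟩)).hasDerivWithinAt))
    exact this b ⟨hab, le_rfl⟩
  intro t ht s hs
  rcases le_total t s with h | h
  · exact (key t ht s hs h).symm
  · exact key s hs t ht h
end

section
/- Let D₁, D₂ ∈ ℝ^{N×N} satisfy D₁ᵀ = −D₁, D₂ᵀ = D₂, D₁D₂ = D₂D₁, let I − D₂ be invertible, and assume D₁𝟙 = 0 and D₂𝟙 = 0 where 𝟙 = (1,…,1)ᵀ. Then for every solution u : I → ℝᴺ of the semidiscrete BBM system u'(t) = −(I − D₂)^{-1} D₁ ( (1/2) u(t)∘u(t) + u(t) ), the discrete mass ∑_{i=1}^{N} u_i(t) is constant in time. -/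
open Matrix

/-- For the conservative semidiscretization of the BBM equation: if `D₁` is
skew-symmetric, `D₂` is symmetric, they commute, `I − D₂` is invertible, and both
annihilate the constant vector `𝟙`, then the discrete mass `∑ᵢ uᵢ` is constant along
every solution of `u' = −(I − D₂)⁻¹D₁((1/2) u∘u + u)` on an interval. -/
theorem bbm_semidiscretization_conserves_mass {N : ℕ}
    (D₁ D₂ : Matrix (Fin N) (Fin N) ℝ)
    (h₁ : D₁ᵀ = -D₁) (h₂ : D₂ᵀ = D₂) (hcomm : D₁ * D₂ = D₂ * D₁)
    (hinv : IsUnit (1 - D₂))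
    (hD₁one : D₁.mulVec (fun _ => 1) = 0)
    (hD₂one : D₂.mulVec (fun _ => 1) = 0) :
    ∀ (I : Set ℝ), I.OrdConnected →
      ∀ u : ℝ → (Fin N → ℝ),
        (∀ t ∈ I, HasDerivAt u
          (-(((1 - D₂)⁻¹ * D₁).mulVec ((1 / 2 : ℝ) • (u t * u t) + u t))) t) →
        ∀ t ∈ I, ∀ s ∈ I, (∑ i, u t i) = ∑ i, u s i := by
  intro I hI u hu t ht s hs
  -- key algebraic fact: 𝟙ᵀ (1 - D₂)⁻¹ D₁ = 0
  have hone : (fun _ => (1:ℝ)) ᵥ* (1 - D₂) = (fun _ => (1:ℝ)) := by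
    have : (fun _ => (1:ℝ)) ᵥ* D₂ = 0 := by
      rw [← Matrix.mulVec_transpose, h₂, hD₂one]
    rw [Matrix.vecMul_sub, this, Matrix.vecMul_one, sub_zero]
  have hinv' : (fun _ => (1:ℝ)) ᵥ* (1 - D₂)⁻¹ = (fun _ => (1:ℝ)) := by
    have h1 : (1 - D₂) * (1 - D₂)⁻¹ = 1 := Matrix.mul_nonsing_inv _ ((Matrix.isUnit_iff_isUnit_det _).mp hinv)
    calc (fun _ => (1:ℝ)) ᵥ* (1 - D₂)⁻¹
        = ((fun _ => (1:ℝ)) ᵥ* (1 - D₂)) ᵥ* (1 - D₂)⁻¹ := by rw [hone]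
      _ = (fun _ => (1:ℝ)) ᵥ* ((1 - D₂) * (1 - D₂)⁻¹) := by rw [Matrix.vecMul_vecMul]
      _ = (fun _ => (1:ℝ)) := by rw [h1, Matrix.vecMul_one]
  have hkey : (fun _ => (1:ℝ)) ᵥ* ((1 - D₂)⁻¹ * D₁) = 0 := by
    rw [← Matrix.vecMul_vecMul, hinv', ← Matrix.mulVec_transpose, h₁]
    rw [Matrix.neg_mulVec, hD₁one, neg_zero]
  -- hence the sum of components of the derivative vanishes
  have hsum : ∀ v : Fin N → ℝ,
      (∑ i, (-(((1 - D₂)⁻¹ * D₁).mulVec v)) i) = 0 := by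
    intro v
    have : (∑ i, (((1 - D₂)⁻¹ * D₁).mulVec v) i)
        = (fun _ => (1:ℝ)) ⬝ᵥ (((1 - D₂)⁻¹ * D₁).mulVec v) := by
      simp [dotProduct]
    simp only [Pi.neg_apply, Finset.sum_neg_distrib, this,
      Matrix.dotProduct_mulVec, hkey, zero_dotProduct, neg_zero]
  -- derivative of the mass is zero on I
  have hmass : ∀ x ∈ I, HasDerivWithinAt (fun τ => ∑ i, u τ i) 0 I x := by
    intro x hx
    have := hu x hx
    have hcomp : ∀ i, HasDerivAt (fun τ => u τ i)
        ((-(((1 - D₂)⁻¹ * D₁).mulVec ((1 / 2 : ℝ) • (u x * u x) + u x))) i) x :=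
      hasDerivAt_pi.mp this
    have hsumd : HasDerivAt (fun τ => ∑ i, u τ i)
        (∑ i, (-(((1 - D₂)⁻¹ * D₁).mulVec ((1 / 2 : ℝ) • (u x * u x) + u x))) i) x :=
      HasDerivAt.fun_sum (fun i _ => hcomp i)
    rw [hsum] at hsumd
    exact hsumd.hasDerivWithinAt
  have := Convex.norm_image_sub_le_of_norm_hasDerivWithin_le (C := 0)
    (f' := fun _ => (0:ℝ)) hmass (fun x _ => by simp) hI.convex hs ht
  have h0 : ∑ i, u t i - ∑ i, u s i = 0 := norm_le_zero_iff.mp (by simpa using this)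
  linarith
end
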